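/- arXiv:1304.8102 — 6 statements merged into one kernel-verified Lean document; each statement's English description precedes it below -/
import Mathlib

section
/- Let n ≥ 1, let 0 < σ₁ ≤ σ₂, and let μ be a Borel probability measure on ℝ supported in [σ₁, σ₂]. Let f be the SIRP noise density f(x) = ∫ (2πσ²)^{−n/2} exp(−‖x‖²/(2σ²)) dμ(σ). Suppose Metric.closedBall 0 d_min ⊆ Ω_i ⊆ Metric.closedBall 0 d_max for every i, with 0 < d_min ≤ d_max (distances of the normalized constellation, corresponding to unit signal power). Then the symbol error rate as a function of the signal power p_s, namely P_e(p_s) = 1 − Σ_{i=1}^{M} q_i ∫_{√p_s • Ω_i} f(x) dx, is convex on {p_s : p_s > 0 and p_s ≥ (n−2)σ₂²/d_min²} and concave on (0, (n−2)σ₁²/d_max²]. -/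
open MeasureTheory Real Set Pointwise
open scoped ENNReal NNReal

namespace SER6

/-- Monotonicity of `p ↦ p^α e^{-ap}` (decreasing branch). -/
lemma phi_anti {α a p q : ℝ} (ha : 0 < a) (hp : 0 < p) (hpq : p ≤ q) (hα : α ≤ a * p) :
    q ^ α * Real.exp (-(a * q)) ≤ p ^ α * Real.exp (-(a * p)) := by
  have hq : 0 < q := hp.trans_le hpq
  rw [Real.rpow_def_of_pos hp, Real.rpow_def_of_pos hq, ← Real.exp_add, ← Real.exp_add,
    Real.exp_le_exp]
  have hlog : Real.log q - Real.log p ≤ (q - p) / p := by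
    have h1 : Real.log (q / p) ≤ q / p - 1 := Real.log_le_sub_one_of_pos (div_pos hq hp)
    rw [Real.log_div hq.ne' hp.ne'] at h1
    have : q / p - 1 = (q - p) / p := by field_simp
    linarith [this ▸ h1]
  rcases le_or_gt α 0 with hα0 | hα0
  · have hlogle : Real.log p ≤ Real.log q := Real.log_le_log hp hpq
    nlinarith
  · have h2 : α * (Real.log q - Real.log p) ≤ α * ((q - p) / p) :=
      mul_le_mul_of_nonneg_left hlog hα0.le
    have h3 : α * ((q - p) / p) ≤ (a * p) * ((q - p) / p) :=
      mul_le_mul_of_nonneg_right hα (div_nonneg (by linarith) hp.le)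
    have h4 : (a * p) * ((q - p) / p) = a * (q - p) := by field_simp
    nlinarith
/-- Monotonicity of `p ↦ p^α e^{-ap}` (increasing branch). -/
lemma phi_mono {α a p q : ℝ} (ha : 0 < a) (hp : 0 < p) (hpq : p ≤ q) (hα : a * q ≤ α) :
    p ^ α * Real.exp (-(a * p)) ≤ q ^ α * Real.exp (-(a * q)) := by
  have hq : 0 < q := hp.trans_le hpq
  rw [Real.rpow_def_of_pos hp, Real.rpow_def_of_pos hq, ← Real.exp_add, ← Real.exp_add,
    Real.exp_le_exp]
  have hα0 : 0 ≤ α := le_trans (by positivity) hα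
  have hlog : (q - p) / q ≤ Real.log q - Real.log p := by
    have h1 : Real.log (p / q) ≤ p / q - 1 := Real.log_le_sub_one_of_pos (div_pos hp hq)
    rw [Real.log_div hp.ne' hq.ne'] at h1
    have : p / q - 1 = -((q - p) / q) := by field_simp; ring
    linarith [this ▸ h1]
  have h2 : α * ((q - p) / q) ≤ α * (Real.log q - Real.log p) :=
    mul_le_mul_of_nonneg_left hlog hα0
  have h3 : (a * q) * ((q - p) / q) ≤ α * ((q - p) / q) :=
    mul_le_mul_of_nonneg_right hα (div_nonneg (by linarith) hq.le)
  have h4 : (a * q) * ((q - p) / q) = a * (q - p) := by field_simp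
  nlinarith


noncomputable def gmix (n : ℕ) (μ : Measure ℝ) (r : ℝ) : ℝ :=
  ∫ σ, (2 * π * σ ^ 2) ^ (-(n : ℝ) / 2) * Real.exp (-r ^ 2 / (2 * σ ^ 2)) ∂μ

noncomputable def Gprim (n : ℕ) (μ : Measure ℝ) (u : ℝ) : ℝ :=
  ∫ r in (0:ℝ)..u, r ^ (n - 1) * gmix n μ r

variable {n : ℕ} {σ₁ σ₂ : ℝ} {μ : Measure ℝ} [IsProbabilityMeasure μ]

lemma ae_Icc (hsupp : μ (Icc σ₁ σ₂)ᶜ = 0) : ∀ᵐ σ ∂μ, σ ∈ Icc σ₁ σ₂ := by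
  rw [ae_iff]
  exact hsupp

lemma c_le (hσ₁ : 0 < σ₁) {σ : ℝ} (hσ : σ ∈ Icc σ₁ σ₂) :
    (2 * π * σ ^ 2) ^ (-(n : ℝ) / 2) ≤ (2 * π * σ₁ ^ 2) ^ (-(n : ℝ) / 2) := by
  have h1 : (0:ℝ) < 2 * π * σ₁ ^ 2 := by positivity
  have hs : σ₁ ^ 2 ≤ σ ^ 2 := by nlinarith [hσ.1, hσ₁]
  have h2 : 2 * π * σ₁ ^ 2 ≤ 2 * π * σ ^ 2 := by nlinarith [pi_pos, hs]
  rw [show (-(n:ℝ)/2) = -((n:ℝ)/2) by ring, Real.rpow_neg (by positivity),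
    Real.rpow_neg h1.le]
  exact inv_anti₀ (Real.rpow_pos_of_pos h1 _) (Real.rpow_le_rpow h1.le h2 (by positivity))

lemma c_nonneg (σ : ℝ) : 0 ≤ (2 * π * σ ^ 2) ^ (-(n : ℝ) / 2) :=
  Real.rpow_nonneg (by positivity) _

lemma gmix_cont (hσ₁ : 0 < σ₁) (hsupp : μ (Icc σ₁ σ₂)ᶜ = 0) : Continuous (gmix n μ) := by
  apply continuous_of_dominated (bound := fun _ => (2 * π * σ₁ ^ 2) ^ (-(n : ℝ) / 2))
  · intro r
    exact (by fun_prop : Measurable fun σ : ℝ =>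
      (2 * π * σ ^ 2) ^ (-(n : ℝ) / 2) * Real.exp (-r ^ 2 / (2 * σ ^ 2))).aestronglyMeasurable
  · intro r
    filter_upwards [ae_Icc hsupp] with σ hσ
    have hσ0 : 0 < σ := hσ₁.trans_le hσ.1
    have he : Real.exp (-r ^ 2 / (2 * σ ^ 2)) ≤ 1 := by
      rw [Real.exp_le_one_iff]
      apply div_nonpos_of_nonpos_of_nonneg (neg_nonpos.mpr (by positivity)) (by positivity)
    have hc := c_le (n := n) hσ₁ hσ
    rw [norm_mul, norm_of_nonneg (c_nonneg σ), norm_of_nonneg (Real.exp_pos _).le]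
    calc (2 * π * σ ^ 2) ^ (-(n : ℝ) / 2) * Real.exp (-r ^ 2 / (2 * σ ^ 2))
        ≤ (2 * π * σ₁ ^ 2) ^ (-(n : ℝ) / 2) * 1 :=
          mul_le_mul hc he (Real.exp_pos _).le (c_nonneg σ₁)
      _ = _ := mul_one _
  · exact integrable_const _
  · exact Filter.Eventually.of_forall fun σ => by fun_prop

lemma gmix_nonneg (r : ℝ) : 0 ≤ gmix n μ r :=
  integral_nonneg fun σ => mul_nonneg (c_nonneg σ) (Real.exp_pos _).le

lemma Gprim_cont (hσ₁ : 0 < σ₁) (hsupp : μ (Icc σ₁ σ₂)ᶜ = 0) : Continuous (Gprim n μ) := by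
  have h_int : ∀ a b : ℝ, IntervalIntegrable (fun r => r ^ (n - 1) * gmix n μ r) volume a b :=
    fun a b => ((continuous_pow _).mul (gmix_cont hσ₁ hsupp)).intervalIntegrable a b
  exact intervalIntegral.continuous_primitive h_int 0

lemma Gprim_nonneg {u : ℝ} (hu : 0 ≤ u) : 0 ≤ Gprim n μ u :=
  intervalIntegral.integral_nonneg hu fun r hr =>
    mul_nonneg (pow_nonneg hr.1 _) (gmix_nonneg r)

lemma Gprim_mono (hσ₁ : 0 < σ₁) (hsupp : μ (Icc σ₁ σ₂)ᶜ = 0) {u v : ℝ} (hu : 0 ≤ u)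
    (huv : u ≤ v) : Gprim n μ u ≤ Gprim n μ v := by
  have hcont : Continuous fun r : ℝ => r ^ (n - 1) * gmix n μ r :=
    (continuous_pow _).mul (gmix_cont hσ₁ hsupp)
  have h_int : ∀ a b : ℝ, IntervalIntegrable (fun r => r ^ (n - 1) * gmix n μ r) volume a b :=
    fun a b => hcont.intervalIntegrable a b
  have h := intervalIntegral.integral_add_adjacent_intervals (h_int 0 u) (h_int u v)
  have h2 : 0 ≤ ∫ r in u..v, r ^ (n - 1) * gmix n μ r :=
    intervalIntegral.integral_nonneg huv fun r hr =>
      mul_nonneg (pow_nonneg (hu.trans hr.1) _) (gmix_nonneg r)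
  unfold Gprim
  rw [← h]
  linarith

lemma hasDerivAt_kernel (hn : 1 ≤ n) (hσ₁ : 0 < σ₁) (hsupp : μ (Icc σ₁ σ₂)ᶜ = 0)
    {ρ p : ℝ} (hρ : 0 < ρ) (hp : 0 < p) :
    HasDerivAt (fun p => Gprim n μ (Real.sqrt p * ρ))
      (ρ ^ n / 2 * (p ^ ((n : ℝ) / 2 - 1) * gmix n μ (Real.sqrt p * ρ))) p := by
  have hcont : Continuous fun r : ℝ => r ^ (n - 1) * gmix n μ r :=
    (continuous_pow _).mul (gmix_cont hσ₁ hsupp)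
  have inner : HasDerivAt (fun p : ℝ => Real.sqrt p * ρ) (1 / (2 * Real.sqrt p) * ρ) p :=
    (Real.hasDerivAt_sqrt hp.ne').mul_const ρ
  have h_int : ∀ a b : ℝ, IntervalIntegrable (fun r => r ^ (n - 1) * gmix n μ r) volume a b :=
    fun a b => hcont.intervalIntegrable a b
  have outer : HasDerivAt (Gprim n μ)
      ((Real.sqrt p * ρ) ^ (n - 1) * gmix n μ (Real.sqrt p * ρ)) (Real.sqrt p * ρ) :=
    intervalIntegral.integral_hasDerivAt_right (h_int _ _)
      (hcont.stronglyMeasurableAtFilter _ _) hcont.continuousAt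
  have := outer.comp p inner
  refine this.congr_deriv (Eq.symm ?_)
  have hsp : (0:ℝ) < Real.sqrt p := Real.sqrt_pos.mpr hp
  have h1 : (Real.sqrt p) ^ (n - 1) = p ^ (((n : ℝ) - 1) / 2) := by
    rw [← Real.rpow_natCast (Real.sqrt p) (n - 1), Real.sqrt_eq_rpow,
      ← Real.rpow_mul hp.le, Nat.cast_sub hn, Nat.cast_one]
    congr 1; ring
  have h2 : p ^ (((n : ℝ) - 1) / 2) / Real.sqrt p = p ^ ((n : ℝ) / 2 - 1) := by
    rw [Real.sqrt_eq_rpow, ← Real.rpow_sub hp]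
    congr 1; ring
  have h3 : ρ ^ (n - 1) * ρ = ρ ^ n := by
    rw [← pow_succ, Nat.sub_add_cancel hn]
  show ρ ^ n / 2 * (p ^ ((n : ℝ) / 2 - 1) * gmix n μ (Real.sqrt p * ρ))
      = (Real.sqrt p * ρ) ^ (n - 1) * gmix n μ (Real.sqrt p * ρ) * (1 / (2 * Real.sqrt p) * ρ)
  calc ρ ^ n / 2 * (p ^ ((n : ℝ) / 2 - 1) * gmix n μ (Real.sqrt p * ρ))
      = ρ ^ n * (p ^ (((n : ℝ) - 1) / 2) / Real.sqrt p) / 2 * gmix n μ (Real.sqrt p * ρ) := by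
        rw [h2]; ring
    _ = (ρ ^ (n-1) * ρ) * ((Real.sqrt p) ^ (n - 1) / Real.sqrt p) / 2
          * gmix n μ (Real.sqrt p * ρ) := by rw [h3, h1]
    _ = _ := by rw [mul_pow]; field_simp

lemma gmix_sqrt {p ρ : ℝ} (hp : 0 ≤ p) :
    gmix n μ (Real.sqrt p * ρ) =
      ∫ σ, (2 * π * σ ^ 2) ^ (-(n : ℝ) / 2) * Real.exp (-(ρ ^ 2 / (2 * σ ^ 2) * p)) ∂μ := by
  unfold gmix
  congr 1; funext σ; congr 2
  rw [mul_pow, Real.sq_sqrt hp]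
  ring

lemma integrable_w (hσ₁ : 0 < σ₁) (hsupp : μ (Icc σ₁ σ₂)ᶜ = 0) {ρ p : ℝ} (hp : 0 ≤ p) :
    Integrable (fun σ => p ^ ((n : ℝ) / 2 - 1) *
      ((2 * π * σ ^ 2) ^ (-(n : ℝ) / 2) * Real.exp (-(ρ ^ 2 / (2 * σ ^ 2) * p)))) μ := by
  apply Integrable.mono'
    (g := fun _ => p ^ ((n : ℝ) / 2 - 1) * (2 * π * σ₁ ^ 2) ^ (-(n : ℝ) / 2))
    (integrable_const _)
  · exact (by fun_prop : Measurable fun σ : ℝ => p ^ ((n : ℝ) / 2 - 1) *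
      ((2 * π * σ ^ 2) ^ (-(n : ℝ) / 2) * Real.exp (-(ρ ^ 2 / (2 * σ ^ 2) * p)))).aestronglyMeasurable
  · filter_upwards [ae_Icc hsupp] with σ hσ
    have hσ0 : 0 < σ := hσ₁.trans_le hσ.1
    have hnn : 0 ≤ p ^ ((n : ℝ) / 2 - 1) := Real.rpow_nonneg hp _
    rw [norm_of_nonneg (mul_nonneg hnn (mul_nonneg (c_nonneg σ) (Real.exp_pos _).le))]
    apply mul_le_mul_of_nonneg_left _ hnn
    calc (2 * π * σ ^ 2) ^ (-(n : ℝ) / 2) * Real.exp (-(ρ ^ 2 / (2 * σ ^ 2) * p))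
        ≤ (2 * π * σ₁ ^ 2) ^ (-(n : ℝ) / 2) * 1 := by
          apply mul_le_mul (c_le hσ₁ hσ) _ (Real.exp_pos _).le (c_nonneg σ₁)
          rw [Real.exp_le_one_iff]
          apply neg_nonpos.mpr
          positivity
      _ = _ := mul_one _

lemma key_anti (hσ₁ : 0 < σ₁) (hσ₁₂ : σ₁ ≤ σ₂) (hsupp : μ (Icc σ₁ σ₂)ᶜ = 0)
    {dmin ρ p q : ℝ} (hdmin : 0 < dmin) (hρ₁ : dmin ≤ ρ)
    (hp : 0 < p) (hc : ((n : ℝ) - 2) * σ₂ ^ 2 / dmin ^ 2 ≤ p) (hpq : p ≤ q) :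
    q ^ ((n : ℝ) / 2 - 1) * gmix n μ (Real.sqrt q * ρ) ≤
      p ^ ((n : ℝ) / 2 - 1) * gmix n μ (Real.sqrt p * ρ) := by
  have hq : 0 < q := hp.trans_le hpq
  have hρ : 0 < ρ := hdmin.trans_le hρ₁
  have hσ₂ : 0 < σ₂ := hσ₁.trans_le hσ₁₂
  rw [gmix_sqrt hp.le, gmix_sqrt hq.le, ← integral_const_mul, ← integral_const_mul]
  apply integral_mono_ae (integrable_w hσ₁ hsupp hq.le) (integrable_w hσ₁ hsupp hp.le)
  filter_upwards [ae_Icc hsupp] with σ hσ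
  have hσ0 : 0 < σ := hσ₁.trans_le hσ.1
  have ha : 0 < ρ ^ 2 / (2 * σ ^ 2) := by positivity
  have hαle : (n : ℝ) / 2 - 1 ≤ ρ ^ 2 / (2 * σ ^ 2) * p := by
    rcases le_or_gt ((n : ℝ) / 2 - 1) 0 with h | h
    · exact h.trans (by positivity)
    · have hn2 : (0 : ℝ) < (n : ℝ) - 2 := by linarith
      have e1 : dmin ^ 2 / (2 * σ₂ ^ 2) * (((n : ℝ) - 2) * σ₂ ^ 2 / dmin ^ 2)
          = ((n : ℝ) - 2) / 2 := by field_simp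
      have hσle : σ ^ 2 ≤ σ₂ ^ 2 := by nlinarith [hσ.2, hσ0]
      have hρle : dmin ^ 2 ≤ ρ ^ 2 := by nlinarith
      have e2 : dmin ^ 2 / (2 * σ₂ ^ 2) * (((n : ℝ) - 2) * σ₂ ^ 2 / dmin ^ 2)
          ≤ ρ ^ 2 / (2 * σ ^ 2) * p := by
        apply mul_le_mul (div_le_div₀ (by positivity) hρle (by positivity) (by nlinarith)) hc
          (div_nonneg (by nlinarith) (by positivity)) (by positivity)
      linarith [e1 ▸ e2]
  have key := phi_anti ha hp hpq hαle
  calc q ^ ((n : ℝ) / 2 - 1) * ((2 * π * σ ^ 2) ^ (-(n : ℝ) / 2)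
        * Real.exp (-(ρ ^ 2 / (2 * σ ^ 2) * q)))
      = (2 * π * σ ^ 2) ^ (-(n : ℝ) / 2)
        * (q ^ ((n : ℝ) / 2 - 1) * Real.exp (-(ρ ^ 2 / (2 * σ ^ 2) * q))) := by ring
    _ ≤ (2 * π * σ ^ 2) ^ (-(n : ℝ) / 2)
        * (p ^ ((n : ℝ) / 2 - 1) * Real.exp (-(ρ ^ 2 / (2 * σ ^ 2) * p))) :=
          mul_le_mul_of_nonneg_left key (c_nonneg σ)
    _ = _ := by ring

lemma key_mono (hσ₁ : 0 < σ₁) (hσ₁₂ : σ₁ ≤ σ₂) (hsupp : μ (Icc σ₁ σ₂)ᶜ = 0)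
    {dmax ρ p q : ℝ} (hρ : 0 < ρ) (hρ₂ : ρ ≤ dmax)
    (hp : 0 < p) (hpq : p ≤ q) (hc : q ≤ ((n : ℝ) - 2) * σ₁ ^ 2 / dmax ^ 2) :
    p ^ ((n : ℝ) / 2 - 1) * gmix n μ (Real.sqrt p * ρ) ≤
      q ^ ((n : ℝ) / 2 - 1) * gmix n μ (Real.sqrt q * ρ) := by
  have hq : 0 < q := hp.trans_le hpq
  have hdmax : 0 < dmax := hρ.trans_le hρ₂
  rw [gmix_sqrt hp.le, gmix_sqrt hq.le, ← integral_const_mul, ← integral_const_mul]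
  apply integral_mono_ae (integrable_w hσ₁ hsupp hp.le) (integrable_w hσ₁ hsupp hq.le)
  filter_upwards [ae_Icc hsupp] with σ hσ
  have hσ0 : 0 < σ := hσ₁.trans_le hσ.1
  have ha : 0 < ρ ^ 2 / (2 * σ ^ 2) := by positivity
  have hαge : ρ ^ 2 / (2 * σ ^ 2) * q ≤ (n : ℝ) / 2 - 1 := by
    have hA : ρ ^ 2 / (2 * σ ^ 2) ≤ dmax ^ 2 / (2 * σ₁ ^ 2) := by
      apply div_le_div₀ (by positivity) (by nlinarith) (by positivity) (by nlinarith [hσ.1])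
    have e1 : dmax ^ 2 / (2 * σ₁ ^ 2) * (((n : ℝ) - 2) * σ₁ ^ 2 / dmax ^ 2)
        = ((n : ℝ) - 2) / 2 := by field_simp
    have hn2 : (0 : ℝ) ≤ (n : ℝ) - 2 := by
      by_contra hcon
      push_neg at hcon
      have : ((n : ℝ) - 2) * σ₁ ^ 2 / dmax ^ 2 < 0 := by
        apply div_neg_of_neg_of_pos (by nlinarith) (by positivity)
      linarith
    have e2 : ρ ^ 2 / (2 * σ ^ 2) * q ≤ dmax ^ 2 / (2 * σ₁ ^ 2) * (((n : ℝ) - 2) * σ₁ ^ 2 / dmax ^ 2) :=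
      mul_le_mul hA hc hq.le (by positivity)
    linarith [e1 ▸ e2]
  have key := phi_mono ha hp hpq hαge
  calc p ^ ((n : ℝ) / 2 - 1) * ((2 * π * σ ^ 2) ^ (-(n : ℝ) / 2)
        * Real.exp (-(ρ ^ 2 / (2 * σ ^ 2) * p)))
      = (2 * π * σ ^ 2) ^ (-(n : ℝ) / 2)
        * (p ^ ((n : ℝ) / 2 - 1) * Real.exp (-(ρ ^ 2 / (2 * σ ^ 2) * p))) := by ring
    _ ≤ (2 * π * σ ^ 2) ^ (-(n : ℝ) / 2)
        * (q ^ ((n : ℝ) / 2 - 1) * Real.exp (-(ρ ^ 2 / (2 * σ ^ 2) * q))) :=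
          mul_le_mul_of_nonneg_left key (c_nonneg σ)
    _ = _ := by ring

lemma kernel_concaveOn (hn : 1 ≤ n) (hσ₁ : 0 < σ₁) (hσ₁₂ : σ₁ ≤ σ₂)
    (hsupp : μ (Icc σ₁ σ₂)ᶜ = 0) {dmin ρ : ℝ} (hdmin : 0 < dmin) (hρ₁ : dmin ≤ ρ) :
    ConcaveOn ℝ {p : ℝ | 0 < p ∧ ((n : ℝ) - 2) * σ₂ ^ 2 / dmin ^ 2 ≤ p}
      (fun p => Gprim n μ (Real.sqrt p * ρ)) := by
  have hρ : 0 < ρ := hdmin.trans_le hρ₁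
  have hset : {p : ℝ | 0 < p ∧ ((n : ℝ) - 2) * σ₂ ^ 2 / dmin ^ 2 ≤ p}
      = Ioi (0:ℝ) ∩ Ici (((n : ℝ) - 2) * σ₂ ^ 2 / dmin ^ 2) := rfl
  rw [hset]
  have hintr : interior (Ioi (0:ℝ) ∩ Ici (((n : ℝ) - 2) * σ₂ ^ 2 / dmin ^ 2))
      = Ioi (0:ℝ) ∩ Ioi (((n : ℝ) - 2) * σ₂ ^ 2 / dmin ^ 2) := by
    rw [interior_inter, interior_Ioi, interior_Ici]
  apply AntitoneOn.concaveOn_of_deriv ((convex_Ioi _).inter (convex_Ici _))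
  · exact ((Gprim_cont hσ₁ hsupp).comp (Real.continuous_sqrt.mul continuous_const)).continuousOn
  · rw [hintr]
    intro p hp
    exact (hasDerivAt_kernel hn hσ₁ hsupp hρ hp.1).differentiableAt.differentiableWithinAt
  · rw [hintr]
    intro p hp q hq hpq
    rw [(hasDerivAt_kernel hn hσ₁ hsupp hρ hp.1).deriv,
      (hasDerivAt_kernel hn hσ₁ hsupp hρ hq.1).deriv]
    apply mul_le_mul_of_nonneg_left _ (by positivity)
    exact key_anti hσ₁ hσ₁₂ hsupp hdmin hρ₁ hp.1 (le_of_lt hp.2) hpq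

lemma kernel_convexOn (hn : 1 ≤ n) (hσ₁ : 0 < σ₁) (hσ₁₂ : σ₁ ≤ σ₂)
    (hsupp : μ (Icc σ₁ σ₂)ᶜ = 0) {dmax ρ : ℝ} (hρ : 0 < ρ) (hρ₂ : ρ ≤ dmax) :
    ConvexOn ℝ (Ioc (0:ℝ) (((n : ℝ) - 2) * σ₁ ^ 2 / dmax ^ 2))
      (fun p => Gprim n μ (Real.sqrt p * ρ)) := by
  rcases le_or_gt (((n : ℝ) - 2) * σ₁ ^ 2 / dmax ^ 2) 0 with hc | hc
  · rw [Ioc_eq_empty (by intro h; exact absurd (h.trans_le hc) (lt_irrefl 0))]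
    exact ⟨convex_empty, fun x hx => (Set.notMem_empty x hx).elim⟩
  · apply MonotoneOn.convexOn_of_deriv (convex_Ioc _ _)
    · exact ((Gprim_cont hσ₁ hsupp).comp
        (Real.continuous_sqrt.mul continuous_const)).continuousOn
    · rw [interior_Ioc]
      intro p hp
      exact (hasDerivAt_kernel hn hσ₁ hsupp hρ hp.1).differentiableAt.differentiableWithinAt
    · rw [interior_Ioc]
      intro p hp q hq hpq
      rw [(hasDerivAt_kernel hn hσ₁ hsupp hρ hp.1).deriv,
        (hasDerivAt_kernel hn hσ₁ hsupp hρ hq.1).deriv]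
      apply mul_le_mul_of_nonneg_left _ (by positivity)
      exact key_mono hσ₁ hσ₁₂ hsupp hρ hρ₂ hp.1 hpq (le_of_lt hq.2)

lemma polar_repr {n : ℕ} (hn : 1 ≤ n) {g : ℝ → ℝ} (hgc : Continuous g) (hg0 : ∀ r, 0 ≤ g r)
    {Ω : Set (EuclideanSpace ℝ (Fin n))} (hmeas : MeasurableSet Ω)
    (hstar : StarConvex ℝ 0 Ω) {dmin dmax : ℝ} (hdmin : 0 < dmin)
    (h1 : Metric.closedBall 0 dmin ⊆ Ω) (h2 : Ω ⊆ Metric.closedBall 0 dmax) :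
    ∃ R : Metric.sphere (0 : EuclideanSpace ℝ (Fin n)) 1 → ℝ,
      Measurable R ∧ (∀ θ, R θ ∈ Icc dmin dmax) ∧
      ∀ t : ℝ, 0 < t →
        ∫ x in t • Ω, g ‖x‖ =
          ∫ θ, (∫ r in (0:ℝ)..(t * R θ), r ^ (n - 1) * g r)
            ∂((volume : Measure (EuclideanSpace ℝ (Fin n))).toSphere) := by
  haveI : Nonempty (Fin n) := ⟨⟨0, hn⟩⟩
  set B : Metric.sphere (0 : (EuclideanSpace ℝ (Fin n))) 1 → Set ℝ :=
    fun θ => {r : ℝ | 0 < r ∧ r • (θ : (EuclideanSpace ℝ (Fin n))) ∈ Ω} with hB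
  have hθnorm : ∀ θ : Metric.sphere (0 : (EuclideanSpace ℝ (Fin n))) 1, ‖(θ : (EuclideanSpace ℝ (Fin n)))‖ = 1 :=
    fun θ => mem_sphere_zero_iff_norm.mp θ.2
  have hnorm_smul : ∀ (θ : Metric.sphere (0 : (EuclideanSpace ℝ (Fin n))) 1) (r : ℝ), 0 ≤ r → ‖r • (θ : (EuclideanSpace ℝ (Fin n)))‖ = r := by
    intro θ r hr
    rw [norm_smul, hθnorm θ, mul_one, Real.norm_eq_abs, abs_of_nonneg hr]
  have hBlow : ∀ θ, Ioc 0 dmin ⊆ B θ := by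
    intro θ r hr
    exact ⟨hr.1, h1 (by
      rw [Metric.mem_closedBall, dist_zero_right, hnorm_smul θ r hr.1.le]; exact hr.2)⟩
  have hBhigh : ∀ θ, B θ ⊆ Ioc 0 dmax := by
    intro θ r hr
    refine ⟨hr.1, ?_⟩
    have := h2 hr.2
    rw [Metric.mem_closedBall, dist_zero_right, hnorm_smul θ r hr.1.le] at this
    exact this
  have hBdc : ∀ θ, ∀ r ∈ B θ, ∀ s : ℝ, 0 < s → s ≤ r → s ∈ B θ := by
    intro θ r hr s hs hsr
    refine ⟨hs, ?_⟩
    have hr0 : 0 < r := hr.1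
    have : (s / r) • (r • (θ : (EuclideanSpace ℝ (Fin n)))) ∈ Ω :=
      hstar.smul_mem hr.2 (by positivity) ((div_le_one hr0).mpr hsr)
    rwa [smul_smul, div_mul_cancel₀ s hr0.ne'] at this
  have hne : ∀ θ, (B θ).Nonempty := fun θ => ⟨dmin, hBlow θ ⟨hdmin, le_rfl⟩⟩
  have hbdd : ∀ θ, BddAbove (B θ) := fun θ => ⟨dmax, fun r hr => (hBhigh θ hr).2⟩
  set S : Metric.sphere (0 : (EuclideanSpace ℝ (Fin n))) 1 → ℝ := fun θ => sSup (B θ) with hS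
  have hSmem : ∀ θ, S θ ∈ Icc dmin dmax := fun θ =>
    ⟨le_csSup (hbdd θ) (hBlow θ ⟨hdmin, le_rfl⟩),
      csSup_le (hne θ) fun r hr => (hBhigh θ hr).2⟩
  have hIoo : ∀ θ, Ioo 0 (S θ) ⊆ B θ := by
    intro θ r hr
    obtain ⟨b, hbB, hrb⟩ := exists_lt_of_lt_csSup (hne θ) hr.2
    exact hBdc θ b hbB r hr.1 hrb.le
  have hsubIoc : ∀ θ, B θ ⊆ Ioc 0 (S θ) := fun θ r hr => ⟨hr.1, le_csSup (hbdd θ) hr⟩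
  have hvol : ∀ θ, volume (B θ) = ENNReal.ofReal (S θ) := by
    intro θ
    apply le_antisymm
    · calc volume (B θ) ≤ volume (Ioc 0 (S θ)) := measure_mono (hsubIoc θ)
        _ = ENNReal.ofReal (S θ) := by rw [Real.volume_Ioc, sub_zero]
    · calc ENNReal.ofReal (S θ) = volume (Ioo 0 (S θ)) := by rw [Real.volume_Ioo, sub_zero]
        _ ≤ volume (B θ) := measure_mono (hIoo θ)
  have hW : MeasurableSet {q : Metric.sphere (0 : (EuclideanSpace ℝ (Fin n))) 1 × ℝ | 0 < q.2 ∧ q.2 • (q.1 : (EuclideanSpace ℝ (Fin n))) ∈ Ω} := by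
    have e : {q : Metric.sphere (0 : (EuclideanSpace ℝ (Fin n))) 1 × ℝ | 0 < q.2 ∧ q.2 • (q.1 : (EuclideanSpace ℝ (Fin n))) ∈ Ω}
        = (Prod.snd ⁻¹' Ioi (0:ℝ)) ∩ ((fun q : Metric.sphere (0 : (EuclideanSpace ℝ (Fin n))) 1 × ℝ
            => q.2 • (q.1 : (EuclideanSpace ℝ (Fin n)))) ⁻¹' Ω) := rfl
    rw [e]
    exact (measurable_snd measurableSet_Ioi).inter
      ((continuous_snd.smul (continuous_subtype_val.comp continuous_fst)).measurable hmeas)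
  have hSmeas : Measurable S := by
    have heq : S = fun θ => (volume (B θ)).toReal := by
      funext θ
      rw [hvol θ, ENNReal.toReal_ofReal (hdmin.le.trans (hSmem θ).1)]
    rw [heq]
    exact (measurable_measure_prodMk_left hW).ennreal_toReal
  refine ⟨S, hSmeas, hSmem, ?_⟩
  intro t ht
  have htΩ : MeasurableSet (t • Ω) := hmeas.const_smul₀ t
  have hdim : Module.finrank ℝ (EuclideanSpace ℝ (Fin n)) = n := finrank_euclideanSpace_fin
  set F : (EuclideanSpace ℝ (Fin n)) → ℝ≥0∞ := (t • Ω).indicator fun x => ENNReal.ofReal (g ‖x‖) with hF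
  have hFmeas : Measurable F :=
    ((hgc.comp continuous_norm).measurable.ennreal_ofReal).indicator htΩ
  -- step 1
  have step1 : ∫ x in t • Ω, g ‖x‖ = (∫⁻ x, F x).toReal := by
    rw [integral_eq_lintegral_of_nonneg_ae (Filter.Eventually.of_forall fun x => hg0 _)
      (hgc.comp continuous_norm).aestronglyMeasurable, hF, lintegral_indicator htΩ]
  -- step 2
  have step2 : ∫⁻ x, F x = ∫⁻ x : ({(0:(EuclideanSpace ℝ (Fin n)))}ᶜ : Set (EuclideanSpace ℝ (Fin n))), F x
      ∂((volume : Measure (EuclideanSpace ℝ (Fin n))).comap Subtype.val) := by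
    rw [lintegral_subtype_comap (measurableSet_singleton (0:(EuclideanSpace ℝ (Fin n)))).compl,
      restrict_compl_singleton]
  -- step 3
  have hMP := (volume : Measure (EuclideanSpace ℝ (Fin n))).measurePreserving_homeomorphUnitSphereProd
  rw [hdim] at hMP
  have hmeasy : Measurable fun y : Metric.sphere (0 : (EuclideanSpace ℝ (Fin n))) 1 × Ioi (0:ℝ) =>
      F ((y.2 : ℝ) • (y.1 : (EuclideanSpace ℝ (Fin n)))) :=
    hFmeas.comp ((continuous_subtype_val.comp continuous_snd).smul
      (continuous_subtype_val.comp continuous_fst)).measurable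
  have step3 : ∫⁻ x : ({(0:(EuclideanSpace ℝ (Fin n)))}ᶜ : Set (EuclideanSpace ℝ (Fin n))), F x ∂((volume : Measure (EuclideanSpace ℝ (Fin n))).comap Subtype.val)
      = ∫⁻ y : Metric.sphere (0 : (EuclideanSpace ℝ (Fin n))) 1 × Ioi (0:ℝ), F ((y.2 : ℝ) • (y.1 : (EuclideanSpace ℝ (Fin n))))
          ∂((volume : Measure (EuclideanSpace ℝ (Fin n))).toSphere.prod (Measure.volumeIoiPow (n - 1))) := by
    rw [← hMP.lintegral_comp hmeasy]
    apply lintegral_congr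
    intro x
    have hx0 : (x : (EuclideanSpace ℝ (Fin n))) ≠ 0 := x.2
    simp only [homeomorphUnitSphereProd_apply_snd_coe, homeomorphUnitSphereProd_apply_fst_coe]
    rw [smul_inv_smul₀ (norm_ne_zero_iff.mpr hx0)]
  -- step 4 (Fubini)
  have step4 : ∫⁻ y : Metric.sphere (0 : (EuclideanSpace ℝ (Fin n))) 1 × Ioi (0:ℝ), F ((y.2 : ℝ) • (y.1 : (EuclideanSpace ℝ (Fin n))))
      ∂((volume : Measure (EuclideanSpace ℝ (Fin n))).toSphere.prod (Measure.volumeIoiPow (n - 1)))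
      = ∫⁻ θ, ∫⁻ r : Ioi (0:ℝ), F ((r : ℝ) • (θ : (EuclideanSpace ℝ (Fin n)))) ∂(Measure.volumeIoiPow (n - 1))
          ∂((volume : Measure (EuclideanSpace ℝ (Fin n))).toSphere) :=
    lintegral_prod _ hmeasy.aemeasurable
  -- step 5: inner integral
  have inner : ∀ θ : Metric.sphere (0 : (EuclideanSpace ℝ (Fin n))) 1,
      ∫⁻ r : Ioi (0:ℝ), F ((r : ℝ) • (θ : (EuclideanSpace ℝ (Fin n)))) ∂(Measure.volumeIoiPow (n - 1))
        = ENNReal.ofReal (∫ r in (0:ℝ)..(t * S θ), r ^ (n - 1) * g r) := by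
    intro θ
    have hSpos : 0 < S θ := hdmin.trans_le (hSmem θ).1
    set A : Set ℝ := {r : ℝ | 0 < r ∧ r • (θ : (EuclideanSpace ℝ (Fin n))) ∈ t • Ω} with hA
    have hAmeas : MeasurableSet A := by
      have e : A = Ioi (0:ℝ) ∩ ((fun r : ℝ => r • (θ : (EuclideanSpace ℝ (Fin n)))) ⁻¹' (t • Ω)) := rfl
      rw [e]
      exact measurableSet_Ioi.inter ((continuous_id.smul continuous_const).measurable htΩ)
    have hAIoo : Ioo 0 (t * S θ) ⊆ A := by
      intro r hr
      have hrt : r / t ∈ Ioo 0 (S θ) := by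
        constructor
        · exact div_pos hr.1 ht
        · rw [div_lt_iff₀ ht]
          calc r < t * S θ := hr.2
            _ = S θ * t := mul_comm _ _
      have hmem : (r / t) • (θ : (EuclideanSpace ℝ (Fin n))) ∈ Ω := (hIoo θ hrt).2
      have : t • ((r / t) • (θ : (EuclideanSpace ℝ (Fin n)))) ∈ t • Ω := smul_mem_smul_set hmem
      rw [smul_smul] at this
      have ht2 : t * (r / t) = r := by field_simp
      rw [ht2] at this
      exact ⟨hr.1, this⟩
    have hAsub : A ⊆ Ioc 0 (t * S θ) := by
      intro r hr
      have := (mem_smul_set_iff_inv_smul_mem₀ ht.ne' _ _).mp hr.2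
      rw [smul_smul] at this
      have hrB : t⁻¹ * r ∈ B θ := ⟨mul_pos (inv_pos.mpr ht) hr.1, this⟩
      have hle : t⁻¹ * r ≤ S θ := (hsubIoc θ hrB).2
      refine ⟨hr.1, ?_⟩
      calc r = t * (t⁻¹ * r) := by field_simp
        _ ≤ t * S θ := mul_le_mul_of_nonneg_left hle ht.le
    have hAae : A =ᵐ[volume] Ioc 0 (t * S θ) := by
      rw [MeasureTheory.ae_eq_set]
      constructor
      · rw [diff_eq_empty.mpr hAsub]; exact measure_empty
      · refine measure_mono_null ?_ (measure_singleton (t * S θ))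
        intro r hr
        have hnIoo : r ∉ Ioo 0 (t * S θ) := fun h => hr.2 (hAIoo h)
        have h01 : 0 < r := hr.1.1
        rw [mem_singleton_iff]
        rcases lt_or_eq_of_le hr.1.2 with h | h
        · exact absurd ⟨h01, h⟩ hnIoo
        · exact h
    have hg1 : Measurable fun r : Ioi (0:ℝ) => F ((r : ℝ) • (θ : (EuclideanSpace ℝ (Fin n)))) :=
      hFmeas.comp (by fun_prop)
    calc ∫⁻ r : Ioi (0:ℝ), F ((r : ℝ) • (θ : (EuclideanSpace ℝ (Fin n)))) ∂(Measure.volumeIoiPow (n - 1))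
        = ∫⁻ r in Ioi (0:ℝ), ENNReal.ofReal (r ^ (n-1)) * F (r • (θ : (EuclideanSpace ℝ (Fin n)))) ∂volume := by
          rw [Measure.volumeIoiPow, lintegral_withDensity_eq_lintegral_mul _
            (by fun_prop) hg1]
          exact lintegral_subtype_comap measurableSet_Ioi
            (fun s : ℝ => ENNReal.ofReal (s ^ (n-1)) * F (s • (θ : (EuclideanSpace ℝ (Fin n)))))
      _ = ∫⁻ r in Ioi (0:ℝ), A.indicator (fun r => ENNReal.ofReal (r ^ (n-1) * g r)) r
            ∂volume := by
          apply setLIntegral_congr_fun measurableSet_Ioi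
          intro r hr
          dsimp only
          by_cases hmem : r • (θ : (EuclideanSpace ℝ (Fin n))) ∈ t • Ω
          · rw [Set.indicator_of_mem (show r ∈ A from ⟨hr, hmem⟩), hF,
              Set.indicator_of_mem hmem, hnorm_smul θ r (le_of_lt hr),
              ENNReal.ofReal_mul (pow_nonneg (le_of_lt hr) _)]
          · rw [Set.indicator_of_notMem (show r ∉ A from fun h => hmem h.2), hF,
              Set.indicator_of_notMem hmem, mul_zero]
      _ = ∫⁻ r in A, ENNReal.ofReal (r ^ (n-1) * g r) ∂volume := by
          rw [lintegral_indicator hAmeas, Measure.restrict_restrict hAmeas,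
            inter_eq_self_of_subset_left (fun r hr => hr.1)]
      _ = ∫⁻ r in Ioc 0 (t * S θ), ENNReal.ofReal (r ^ (n-1) * g r) ∂volume :=
          setLIntegral_congr hAae
      _ = ENNReal.ofReal (∫ r in Ioc 0 (t * S θ), r ^ (n-1) * g r ∂volume) := by
          rw [← ofReal_integral_eq_lintegral_ofReal]
          · exact (((continuous_pow _).mul hgc).intervalIntegrable 0 (t * S θ)).1
          · filter_upwards [ae_restrict_mem measurableSet_Ioc] with r hr
            exact mul_nonneg (pow_nonneg hr.1.le _) (hg0 r)
      _ = ENNReal.ofReal (∫ r in (0:ℝ)..(t * S θ), r ^ (n - 1) * g r) := by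
          rw [intervalIntegral.integral_of_le (by positivity)]
  -- assemble
  have hGe_nonneg : ∀ θ : Metric.sphere (0 : (EuclideanSpace ℝ (Fin n))) 1,
      0 ≤ ∫ r in (0:ℝ)..(t * S θ), r ^ (n - 1) * g r := fun θ =>
    intervalIntegral.integral_nonneg (mul_nonneg ht.le (hdmin.le.trans (hSmem θ).1))
      fun r hr => mul_nonneg (pow_nonneg hr.1 _) (hg0 r)
  have hGe_meas : Measurable fun θ : Metric.sphere (0 : (EuclideanSpace ℝ (Fin n))) 1 =>
      ∫ r in (0:ℝ)..(t * S θ), r ^ (n - 1) * g r := by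
    have h_int : ∀ a b : ℝ, IntervalIntegrable (fun r => r ^ (n - 1) * g r) volume a b :=
      fun a b => ((continuous_pow _).mul hgc).intervalIntegrable a b
    exact (intervalIntegral.continuous_primitive h_int 0).measurable.comp
      (hSmeas.const_mul t)
  rw [step1, step2, step3, step4, lintegral_congr inner,
    integral_eq_lintegral_of_nonneg_ae (Filter.Eventually.of_forall hGe_nonneg)
      hGe_meas.aestronglyMeasurable]

lemma concaveOn_integral {Θ : Type*} [MeasurableSpace Θ] {m : Measure Θ} [IsFiniteMeasure m]
    {s : Set ℝ} (hs : Convex ℝ s) {F : Θ → ℝ → ℝ}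
    (hint : ∀ p ∈ s, Integrable (fun θ => F θ p) m)
    (hconc : ∀ θ, ConcaveOn ℝ s (F θ)) :
    ConcaveOn ℝ s fun p => ∫ θ, F θ p ∂m := by
  refine ⟨hs, fun x hx y hy a b ha hb hab => ?_⟩
  have hxy : a • x + b • y ∈ s := hs hx hy ha hb hab
  calc a • ∫ θ, F θ x ∂m + b • ∫ θ, F θ y ∂m
      = ∫ θ, (a • F θ x + b • F θ y) ∂m := by
        rw [← integral_smul, ← integral_smul]
        exact (integral_add ((hint x hx).smul a) ((hint y hy).smul b)).symm
    _ ≤ ∫ θ, F θ (a • x + b • y) ∂m :=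
        integral_mono (((hint x hx).smul a).add ((hint y hy).smul b)) (hint _ hxy)
          fun θ => (hconc θ).2 hx hy ha hb hab

lemma convexOn_integral {Θ : Type*} [MeasurableSpace Θ] {m : Measure Θ} [IsFiniteMeasure m]
    {s : Set ℝ} (hs : Convex ℝ s) {F : Θ → ℝ → ℝ}
    (hint : ∀ p ∈ s, Integrable (fun θ => F θ p) m)
    (hconv : ∀ θ, ConvexOn ℝ s (F θ)) :
    ConvexOn ℝ s fun p => ∫ θ, F θ p ∂m := by
  refine ⟨hs, fun x hx y hy a b ha hb hab => ?_⟩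
  have hxy : a • x + b • y ∈ s := hs hx hy ha hb hab
  calc ∫ θ, F θ (a • x + b • y) ∂m
      ≤ ∫ θ, (a • F θ x + b • F θ y) ∂m :=
        integral_mono (hint _ hxy) (((hint x hx).smul a).add ((hint y hy).smul b))
          fun θ => (hconv θ).2 hx hy ha hb hab
    _ = a • ∫ θ, F θ x ∂m + b • ∫ θ, F θ y ∂m := by
        rw [← integral_smul, ← integral_smul]
        exact integral_add ((hint x hx).smul a) ((hint y hy).smul b)

lemma concaveOn_finsum {ι : Type*} {s : Set ℝ} (hs : Convex ℝ s) {F : ι → ℝ → ℝ} (t : Finset ι)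
    (h : ∀ i ∈ t, ConcaveOn ℝ s (F i)) : ConcaveOn ℝ s fun p => ∑ i ∈ t, F i p := by
  classical
  induction t using Finset.induction_on with
  | empty => simpa using concaveOn_const (0:ℝ) hs
  | @insert a t hat ih =>
      have := (h a (Finset.mem_insert_self a t)).add
        (ih fun i hi => h i (Finset.mem_insert_of_mem hi))
      refine ⟨hs, fun x hx y hy c b hc hb hcb => ?_⟩
      simp only [Finset.sum_insert hat]
      exact this.2 hx hy hc hb hcb

lemma convexOn_finsum {ι : Type*} {s : Set ℝ} (hs : Convex ℝ s) {F : ι → ℝ → ℝ} (t : Finset ι)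
    (h : ∀ i ∈ t, ConvexOn ℝ s (F i)) : ConvexOn ℝ s fun p => ∑ i ∈ t, F i p := by
  classical
  induction t using Finset.induction_on with
  | empty => simpa using convexOn_const (0:ℝ) hs
  | @insert a t hat ih =>
      have := (h a (Finset.mem_insert_self a t)).add
        (ih fun i hi => h i (Finset.mem_insert_of_mem hi))
      refine ⟨hs, fun x hx y hy c b hc hb hcb => ?_⟩
      simp only [Finset.sum_insert hat]
      exact this.2 hx hy hc hb hcb

lemma convexOn_congr {s : Set ℝ} {f g : ℝ → ℝ} (h : ConvexOn ℝ s f)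
    (he : ∀ x ∈ s, f x = g x) : ConvexOn ℝ s g := by
  refine ⟨h.1, fun x hx y hy a b ha hb hab => ?_⟩
  rw [← he _ hx, ← he _ hy, ← he _ (h.1 hx hy ha hb hab)]
  exact h.2 hx hy ha hb hab

lemma concaveOn_congr {s : Set ℝ} {f g : ℝ → ℝ} (h : ConcaveOn ℝ s f)
    (he : ∀ x ∈ s, f x = g x) : ConcaveOn ℝ s g := by
  refine ⟨h.1, fun x hx y hy a b ha hb hab => ?_⟩
  rw [← he _ hx, ← he _ hy, ← he _ (h.1 hx hy ha hb hab)]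
  exact h.2 hx hy ha hb hab

end SER6

open SER6

/-- Under SIRP noise whose mixing distribution is supported in
`[σ₁, σ₂]`, the SER of a decoder with center-convex decision regions is convex
in the signal power on `{p_s | 0 < p_s ∧ (n-2)σ₂²/d_min² ≤ p_s}` and concave on
`(0, (n-2)σ₁²/d_max²]`. -/
theorem ser_convexity_sirp_noise
    (n M : ℕ) (hn : 1 ≤ n)
    (σ₁ σ₂ : ℝ) (hσ₁ : 0 < σ₁) (hσ₁₂ : σ₁ ≤ σ₂)
    (μ : Measure ℝ) [IsProbabilityMeasure μ]
    (hsupp : μ (Icc σ₁ σ₂)ᶜ = 0)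
    (f : EuclideanSpace ℝ (Fin n) → ℝ)
    (hf : ∀ x, f x = ∫ σ,
      (2 * π * σ ^ 2) ^ (-(n : ℝ) / 2) * Real.exp (-‖x‖ ^ 2 / (2 * σ ^ 2)) ∂μ)
    (q : Fin M → ℝ) (hq : ∀ i, 0 ≤ q i) (hqsum : ∑ i, q i = 1)
    (Ω : Fin M → Set (EuclideanSpace ℝ (Fin n)))
    (hΩmeas : ∀ i, MeasurableSet (Ω i))
    (hΩstar : ∀ i, StarConvex ℝ (0 : EuclideanSpace ℝ (Fin n)) (Ω i))
    (dmin dmax : ℝ) (hdmin : 0 < dmin) (hdd : dmin ≤ dmax)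
    (hball : ∀ i, Metric.closedBall (0 : EuclideanSpace ℝ (Fin n)) dmin ⊆ Ω i ∧
      Ω i ⊆ Metric.closedBall (0 : EuclideanSpace ℝ (Fin n)) dmax)
    (Pe : ℝ → ℝ)
    (hPe : ∀ ps, Pe ps = 1 - ∑ i, q i * ∫ x in Real.sqrt ps • Ω i, f x) :
    ConvexOn ℝ {ps : ℝ | 0 < ps ∧ ((n : ℝ) - 2) * σ₂ ^ 2 / dmin ^ 2 ≤ ps} Pe ∧
      ConcaveOn ℝ (Ioc (0 : ℝ) (((n : ℝ) - 2) * σ₁ ^ 2 / dmax ^ 2)) Pe := by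
  classical
  haveI : Nonempty (Fin n) := ⟨⟨0, hn⟩⟩
  have hgc : Continuous (gmix n μ) := gmix_cont hσ₁ hsupp
  have hg0 : ∀ r, 0 ≤ gmix n μ r := fun r => gmix_nonneg r
  have hfg : ∀ x, f x = gmix n μ ‖x‖ := fun x => hf x
  choose Rf hRmeas hRmem hRint using fun i =>
    polar_repr hn hgc hg0 (hΩmeas i) (hΩstar i) hdmin (hball i).1 (hball i).2
  -- key identity
  have hsq : ∀ p : ℝ, 0 < p → ∀ i : Fin M, (∫ x in Real.sqrt p • Ω i, f x)
      = ∫ θ, Gprim n μ (Real.sqrt p * Rf i θ)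
          ∂((volume : Measure (EuclideanSpace ℝ (Fin n))).toSphere) := by
    intro p hp i
    have h2 : (∫ x in Real.sqrt p • Ω i, f x)
        = ∫ x in Real.sqrt p • Ω i, gmix n μ ‖x‖ := by
      have : f = fun x => gmix n μ ‖x‖ := funext hfg
      rw [this]
    rw [h2, hRint i (Real.sqrt p) (Real.sqrt_pos.mpr hp)]
    rfl
  -- integrability of the spherical integrand
  have hint : ∀ (i : Fin M) (p : ℝ), 0 < p →
      Integrable (fun θ => Gprim n μ (Real.sqrt p * Rf i θ))
        ((volume : Measure (EuclideanSpace ℝ (Fin n))).toSphere) := by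
    intro i p hp
    apply Integrable.mono' (g := fun _ => Gprim n μ (Real.sqrt p * dmax)) (integrable_const _)
    · exact ((Gprim_cont hσ₁ hsupp).measurable.comp
        ((hRmeas i).const_mul (Real.sqrt p))).aestronglyMeasurable
    · apply ae_of_all
      intro θ
      have hR0 : 0 ≤ Rf i θ := hdmin.le.trans (hRmem i θ).1
      have h0 : 0 ≤ Real.sqrt p * Rf i θ := mul_nonneg (Real.sqrt_nonneg p) hR0
      rw [norm_of_nonneg (Gprim_nonneg h0)]
      exact Gprim_mono hσ₁ hsupp h0
        (mul_le_mul_of_nonneg_left (hRmem i θ).2 (Real.sqrt_nonneg p))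
  constructor
  · -- convexity branch
    set D2 : Set ℝ := {ps : ℝ | 0 < ps ∧ ((n : ℝ) - 2) * σ₂ ^ 2 / dmin ^ 2 ≤ ps} with hD2
    have hD2conv : Convex ℝ D2 := (convex_Ioi 0).inter (convex_Ici _)
    have hFconc : ∀ i : Fin M, ConcaveOn ℝ D2 (fun p => q i • ∫ θ,
        Gprim n μ (Real.sqrt p * Rf i θ)
          ∂((volume : Measure (EuclideanSpace ℝ (Fin n))).toSphere)) := by
      intro i
      apply ConcaveOn.smul (hq i)
      apply concaveOn_integral hD2conv (fun p hp => hint i p hp.1)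
      intro θ
      exact kernel_concaveOn hn hσ₁ hσ₁₂ hsupp hdmin (hRmem i θ).1
    have hsum := concaveOn_finsum hD2conv Finset.univ (fun i _ => hFconc i)
    have hfinal := (hsum.neg).add_const 1
    apply convexOn_congr hfinal
    intro p hp
    simp only [Pi.add_apply, Pi.neg_apply]
    rw [hPe p]
    have hs2 : ∑ i : Fin M, q i * (∫ x in Real.sqrt p • Ω i, f x)
        = ∑ i : Fin M, q i • ∫ θ, Gprim n μ (Real.sqrt p * Rf i θ)
            ∂((volume : Measure (EuclideanSpace ℝ (Fin n))).toSphere) :=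
      Finset.sum_congr rfl fun i _ => by rw [hsq p hp.1 i, smul_eq_mul]
    rw [hs2]
    ring
  · -- concavity branch
    have hIconv : Convex ℝ (Ioc (0:ℝ) (((n : ℝ) - 2) * σ₁ ^ 2 / dmax ^ 2)) := convex_Ioc _ _
    have hFconv : ∀ i : Fin M, ConvexOn ℝ (Ioc (0:ℝ) (((n : ℝ) - 2) * σ₁ ^ 2 / dmax ^ 2))
        (fun p => q i • ∫ θ, Gprim n μ (Real.sqrt p * Rf i θ)
          ∂((volume : Measure (EuclideanSpace ℝ (Fin n))).toSphere)) := by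
      intro i
      apply ConvexOn.smul (hq i)
      apply convexOn_integral hIconv (fun p hp => hint i p hp.1)
      intro θ
      exact kernel_convexOn hn hσ₁ hσ₁₂ hsupp (hdmin.trans_le (hRmem i θ).1) (hRmem i θ).2
    have hsum := convexOn_finsum hIconv Finset.univ (fun i _ => hFconv i)
    have hfinal := (hsum.neg).add_const 1
    apply concaveOn_congr hfinal
    intro p hp
    simp only [Pi.add_apply, Pi.neg_apply]
    rw [hPe p]
    have hs2 : ∑ i : Fin M, q i * (∫ x in Real.sqrt p • Ω i, f x)
        = ∑ i : Fin M, q i • ∫ θ, Gprim n μ (Real.sqrt p * Rf i θ)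
            ∂((volume : Measure (EuclideanSpace ℝ (Fin n))).toSphere) :=
      Finset.sum_congr rfl fun i _ => by rw [hsq p hp.1 i, smul_eq_mul]
    rw [hs2]
    ring
end

section
/- Let n ≥ 1 and suppose Metric.closedBall 0 d_min ⊆ Ω_i ⊆ Metric.closedBall 0 d_max for every i, with 0 < d_min ≤ d_max. Then the symbol error rate as a function of the signal amplitude A in the AWGN channel, namely P_e(A) = 1 − Σ_{i=1}^{M} q_i ∫_{A • Ω_i} (2π)^{−n/2} exp(−‖x‖²/2) dx, is convex on {A : A > 0 and A ≥ √(n−1)/d_min} and concave on (0, √(n−1)/d_max]. -/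
open MeasureTheory Real Set Pointwise

noncomputable def SER9phi (m : ℕ) (r : ℝ) : ℝ := r ^ m * Real.exp (-r ^ 2 / 2)
noncomputable def SER9G (m : ℕ) (u : ℝ) : ℝ := ∫ t in (0:ℝ)..u, SER9phi m t

lemma SER9gauss_integrable (n : ℕ) :
    Integrable (fun x : EuclideanSpace ℝ (Fin n) =>
      (2 * π) ^ (-(n : ℝ) / 2) * Real.exp (-‖x‖ ^ 2 / 2)) := by
  have h := (GaussianFourier.integrable_cexp_neg_mul_sq_norm_add (V := EuclideanSpace ℝ (Fin n))
    (b := (1/2 : ℂ)) (by norm_num) 0 0).norm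
  have h2 : Integrable (fun x : EuclideanSpace ℝ (Fin n) => Real.exp (-‖x‖ ^ 2 / 2)) := by
    convert h using 2 with x
    rw [Complex.norm_exp]
    norm_num
    rw [← Complex.ofReal_pow, Complex.ofReal_re]
    ring
  exact h2.const_mul _

lemma SER9polar (n : ℕ) (hn : 1 ≤ n) (Ω : Set (EuclideanSpace ℝ (Fin n)))
    (hmeas : MeasurableSet Ω) (hstar : StarConvex ℝ 0 Ω) {dmin dmax : ℝ} (hdmin : 0 < dmin)
    (h1 : Metric.closedBall 0 dmin ⊆ Ω) (h2 : Ω ⊆ Metric.closedBall 0 dmax) :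
    ∃ ρ : Metric.sphere (0 : EuclideanSpace ℝ (Fin n)) 1 → ℝ,
      (∀ θ, dmin ≤ ρ θ ∧ ρ θ ≤ dmax) ∧
      ∀ A : ℝ, 0 < A →
        ((∫ x in A • Ω, (2 * π) ^ (-(n : ℝ) / 2) * Real.exp (-‖x‖ ^ 2 / 2)) =
          ∫ θ, (2 * π) ^ (-(n : ℝ) / 2) * SER9G (n-1) (A * ρ θ)
            ∂((volume : Measure (EuclideanSpace ℝ (Fin n))).toSphere)) ∧
        Integrable (fun θ => (2 * π) ^ (-(n : ℝ) / 2) * SER9G (n-1) (A * ρ θ))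
          ((volume : Measure (EuclideanSpace ℝ (Fin n))).toSphere) := by
  haveI : Nontrivial (EuclideanSpace ℝ (Fin n)) :=
    Module.nontrivial_of_finrank_pos (R := ℝ) (M := EuclideanSpace ℝ (Fin n))
      (by rw [finrank_euclideanSpace_fin]; omega)
  set c : ℝ := (2 * π) ^ (-(n : ℝ) / 2) with hc
  set g : EuclideanSpace ℝ (Fin n) → ℝ := fun x => c * Real.exp (-‖x‖ ^ 2 / 2) with hg
  have hθnorm : ∀ θ : Metric.sphere (0 : EuclideanSpace ℝ (Fin n)) 1, ‖(θ : EuclideanSpace ℝ (Fin n))‖ = 1 :=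
    fun θ => mem_sphere_zero_iff_norm.1 θ.2
  set T : Metric.sphere (0 : EuclideanSpace ℝ (Fin n)) 1 → Set ℝ := fun θ => {t : ℝ | 0 ≤ t ∧ t • (θ : EuclideanSpace ℝ (Fin n)) ∈ Ω} with hT
  have hTub : ∀ θ, ∀ t ∈ T θ, t ≤ dmax := by
    intro θ t ht
    have := h2 ht.2
    rw [mem_closedBall_zero_iff, norm_smul, hθnorm, mul_one, Real.norm_eq_abs] at this
    exact (le_abs_self t).trans this
  have hTmem : ∀ θ, dmin ∈ T θ := by
    intro θ
    refine ⟨hdmin.le, h1 ?_⟩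
    rw [mem_closedBall_zero_iff, norm_smul, hθnorm, mul_one, Real.norm_eq_abs,
      abs_of_pos hdmin]
  set ρ : Metric.sphere (0 : EuclideanSpace ℝ (Fin n)) 1 → ℝ := fun θ => sSup (T θ) with hρdef
  have hρ1 : ∀ θ, dmin ≤ ρ θ := fun θ => le_csSup ⟨dmax, fun t ht => hTub θ t ht⟩ (hTmem θ)
  have hρ2 : ∀ θ, ρ θ ≤ dmax := fun θ => csSup_le ⟨dmin, hTmem θ⟩ (hTub θ)
  have hρ0 : ∀ θ, 0 < ρ θ := fun θ => hdmin.trans_le (hρ1 θ)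
  have claim_lt : ∀ θ : Metric.sphere (0 : EuclideanSpace ℝ (Fin n)) 1, ∀ t : ℝ, 0 ≤ t → t < ρ θ → t • (θ : EuclideanSpace ℝ (Fin n)) ∈ Ω := by
    intro θ t ht htρ
    obtain ⟨s, hs, hts⟩ := exists_lt_of_lt_csSup ⟨dmin, hTmem θ⟩ htρ
    have hs0 : 0 < s := lt_of_le_of_lt ht hts
    have := hstar.smul_mem hs.2 (div_nonneg ht hs0.le) ((div_le_one hs0).2 hts.le)
    rwa [smul_smul, div_mul_cancel₀ _ hs0.ne'] at this
  have claim_le : ∀ θ : Metric.sphere (0 : EuclideanSpace ℝ (Fin n)) 1, ∀ t : ℝ, 0 ≤ t → t • (θ : EuclideanSpace ℝ (Fin n)) ∈ Ω → t ≤ ρ θ :=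
    fun θ t ht hmem => le_csSup ⟨dmax, fun s hs => hTub θ s hs⟩ ⟨ht, hmem⟩
  refine ⟨ρ, fun θ => ⟨hρ1 θ, hρ2 θ⟩, ?_⟩
  intro A hA
  set m := n - 1 with hm
  have hc0 : (0:ℝ) ≤ c := Real.rpow_nonneg (by positivity) _
  have hgcont : Continuous g := by rw [hg]; fun_prop
  have hsm : MeasurableSet (A • Ω) := hmeas.const_smul₀ A
  set f := (A • Ω).indicator g with hf
  have hphi := (volume : Measure (EuclideanSpace ℝ (Fin n))).measurePreserving_homeomorphUnitSphereProd
  rw [finrank_euclideanSpace_fin] at hphi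
  set ν := Measure.volumeIoiPow m with hν
  set σ := (volume : Measure (EuclideanSpace ℝ (Fin n))).toSphere with hσ
  set h : Metric.sphere (0 : EuclideanSpace ℝ (Fin n)) 1 × Ioi (0:ℝ) → ℝ :=
    fun y => f ((y.2 : ℝ) • (y.1 : EuclideanSpace ℝ (Fin n))) with hh
  -- continuity of the scaling map
  have hsc : Continuous fun y : Metric.sphere (0 : EuclideanSpace ℝ (Fin n)) 1 × Ioi (0:ℝ) =>
      (y.2 : ℝ) • (y.1 : EuclideanSpace ℝ (Fin n)) :=
    (continuous_subtype_val.comp continuous_snd).smul (continuous_subtype_val.comp continuous_fst)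
  -- integrability of h
  have hHint : Integrable (fun y : Metric.sphere (0 : EuclideanSpace ℝ (Fin n)) 1 × Ioi (0:ℝ) =>
      c * Real.exp (-((y.2 : ℝ)) ^ 2 / 2)) (σ.prod ν) := by
    rw [← hphi.integrable_comp_emb (Homeomorph.measurableEmbedding _)]
    have heq : ((fun y : Metric.sphere (0 : EuclideanSpace ℝ (Fin n)) 1 × Ioi (0:ℝ) =>
        c * Real.exp (-((y.2 : ℝ)) ^ 2 / 2)) ∘ (homeomorphUnitSphereProd (EuclideanSpace ℝ (Fin n))))
        = fun x : ({0}ᶜ : Set (EuclideanSpace ℝ (Fin n))) => g x.1 := by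
      funext x
      simp [hg, Function.comp]
    rw [heq]
    have h3 : (((volume : Measure (EuclideanSpace ℝ (Fin n))).comap Subtype.val).map
        (Subtype.val : ({0}ᶜ : Set (EuclideanSpace ℝ (Fin n))) → _)) = volume := by
      rw [map_comap_subtype_coe (measurableSet_singleton (0 : EuclideanSpace ℝ (Fin n))).compl,
        MeasureTheory.restrict_compl_singleton]
    rw [show (fun x : ({0}ᶜ : Set (EuclideanSpace ℝ (Fin n))) => g x.1)
        = g ∘ Subtype.val from rfl,
      ← (MeasurableEmbedding.subtype_coe
        (measurableSet_singleton (0 : EuclideanSpace ℝ (Fin n))).compl).integrable_map_iff, h3]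
    exact SER9gauss_integrable n
  have hhmeas : AEStronglyMeasurable h (σ.prod ν) :=
    ((hgcont.measurable.indicator hsm).comp hsc.measurable).aestronglyMeasurable
  have hhint : Integrable h (σ.prod ν) := by
    refine hHint.mono' hhmeas (Filter.Eventually.of_forall fun y => ?_)
    have hb1 : ‖h y‖ ≤ ‖g ((y.2 : ℝ) • (y.1 : EuclideanSpace ℝ (Fin n)))‖ :=
      norm_indicator_le_norm_self g _
    refine hb1.trans ?_
    rw [hg]
    simp only [Real.norm_eq_abs]
    rw [abs_of_nonneg (by positivity), norm_smul, hθnorm, mul_one, Real.norm_eq_abs,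
      abs_of_pos y.2.2]
  -- inner integral computation
  have inner : ∀ θ : Metric.sphere (0 : EuclideanSpace ℝ (Fin n)) 1,
      (∫ r : Ioi (0:ℝ), h (θ, r) ∂ν) = c * SER9G m (A * ρ θ) := by
    intro θ
    have hv : 0 < A * ρ θ := mul_pos hA (hρ0 θ)
    set X : Set ℝ := {r : ℝ | r • (θ : EuclideanSpace ℝ (Fin n)) ∈ A • Ω} with hX
    have hXmeas : MeasurableSet X :=
      hsm.preimage (by fun_prop : Continuous fun r : ℝ =>
        r • (θ : EuclideanSpace ℝ (Fin n))).measurable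
    have hmemX : ∀ r : ℝ, r ∈ X ↔ (A⁻¹ * r) • (θ : EuclideanSpace ℝ (Fin n)) ∈ Ω := by
      intro r
      rw [hX, mem_setOf_eq, mem_smul_set_iff_inv_smul_mem₀ hA.ne', smul_smul]
    have hsub1 : Ioo 0 (A * ρ θ) ⊆ Ioi 0 ∩ X := by
      rintro r ⟨hr0, hrv⟩
      have hr0' : (0:ℝ) < r := hr0
      refine ⟨hr0, (hmemX r).2 ?_⟩
      have ht0 : (0:ℝ) ≤ A⁻¹ * r := by positivity
      have htlt : A⁻¹ * r < ρ θ := by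
        have := mul_lt_mul_of_pos_left hrv (inv_pos.2 hA)
        rwa [← mul_assoc, inv_mul_cancel₀ hA.ne', one_mul] at this
      exact claim_lt θ _ ht0 htlt
    have hsub2 : Ioi 0 ∩ X ⊆ Ioc 0 (A * ρ θ) := by
      rintro r ⟨hr0, hrX⟩
      have hr0' : (0:ℝ) < r := hr0
      refine ⟨hr0, ?_⟩
      have hle : A⁻¹ * r ≤ ρ θ :=
        claim_le θ _ (by positivity) ((hmemX r).1 hrX)
      have := mul_le_mul_of_nonneg_left hle hA.le
      rwa [← mul_assoc, mul_inv_cancel₀ hA.ne', one_mul] at this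
    have e1 : (∫ r : Ioi (0:ℝ), h (θ, r) ∂ν)
        = ∫ r in Ioi (0:ℝ), r ^ m * f (r • (θ : EuclideanSpace ℝ (Fin n))) := by
      rw [hν]
      simp only [Measure.volumeIoiPow, ENNReal.ofReal]
      rw [integral_withDensity_eq_integral_smul
        ((measurable_subtype_coe.pow_const _).real_toNNReal) _]
      simp only [hh]
      rw [integral_subtype_comap measurableSet_Ioi
        (fun r : ℝ => (r ^ m).toNNReal • f (r • (θ : EuclideanSpace ℝ (Fin n))))]
      refine setIntegral_congr_fun measurableSet_Ioi fun x hx => ?_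
      rw [NNReal.smul_def, Real.coe_toNNReal _ (pow_nonneg (le_of_lt hx) _), smul_eq_mul]
    have e2 : ∫ r in Ioi (0:ℝ), r ^ m * f (r • (θ : EuclideanSpace ℝ (Fin n)))
        = ∫ r in Ioi (0:ℝ), X.indicator
            (fun r => r ^ m * g (r • (θ : EuclideanSpace ℝ (Fin n)))) r := by
      refine setIntegral_congr_fun measurableSet_Ioi fun r _ => ?_
      by_cases hr : r ∈ X
      · rw [Set.indicator_of_mem hr, hf, Set.indicator_of_mem (by exact hr)]
      · rw [Set.indicator_of_notMem hr, hf, Set.indicator_of_notMem (by exact hr), mul_zero]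
    have e3 : ∫ r in Ioi (0:ℝ), X.indicator
          (fun r => r ^ m * g (r • (θ : EuclideanSpace ℝ (Fin n)))) r
        = ∫ r in Ioi (0:ℝ) ∩ X, r ^ m * g (r • (θ : EuclideanSpace ℝ (Fin n))) :=
      setIntegral_indicator hXmeas
    have e4 : (Ioi (0:ℝ) ∩ X : Set ℝ) =ᵐ[volume] Ioo (0:ℝ) (A * ρ θ) := by
      rw [MeasureTheory.ae_eq_set]
      constructor
      · refine measure_mono_null (fun r hr => ?_) (measure_singleton (A * ρ θ))
        obtain ⟨hrS, hrO⟩ := hr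
        have h5 := hsub2 hrS
        have : r = A * ρ θ := by
          by_contra hne
          exact hrO ⟨h5.1, lt_of_le_of_ne h5.2 hne⟩
        simp [this]
      · refine measure_mono_null (fun r hr => ?_) (measure_empty (μ := volume) (α := ℝ))
        exact absurd (hsub1 hr.1) hr.2
    have e5 : ∫ r in Ioi (0:ℝ) ∩ X, r ^ m * g (r • (θ : EuclideanSpace ℝ (Fin n)))
        = ∫ r in Ioo (0:ℝ) (A * ρ θ), r ^ m * g (r • (θ : EuclideanSpace ℝ (Fin n))) :=
      setIntegral_congr_set e4
    have e6 : ∫ r in Ioo (0:ℝ) (A * ρ θ), r ^ m * g (r • (θ : EuclideanSpace ℝ (Fin n)))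
        = ∫ r in Ioo (0:ℝ) (A * ρ θ), c * SER9phi m r := by
      refine setIntegral_congr_fun measurableSet_Ioo fun r hr => ?_
      rw [hg]
      simp only
      rw [norm_smul, hθnorm, mul_one, Real.norm_eq_abs, abs_of_pos hr.1, SER9phi]
      ring
    have e7 : ∫ r in Ioo (0:ℝ) (A * ρ θ), c * SER9phi m r
        = c * ∫ r in Ioo (0:ℝ) (A * ρ θ), SER9phi m r := integral_const_mul _ _
    have e8 : ∫ r in Ioo (0:ℝ) (A * ρ θ), SER9phi m r = SER9G m (A * ρ θ) := by
      rw [SER9G, intervalIntegral.integral_of_le hv.le, integral_Ioc_eq_integral_Ioo]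
    rw [e1, e2, e3, e5, e6, e7, e8]
  -- main computation
  have hcomp : ∀ x : ({0}ᶜ : Set (EuclideanSpace ℝ (Fin n))),
      h (homeomorphUnitSphereProd (EuclideanSpace ℝ (Fin n)) x) = f x.1 := by
    intro x
    rw [hh]
    simp only [homeomorphUnitSphereProd_apply_fst_coe, homeomorphUnitSphereProd_apply_snd_coe]
    rw [smul_inv_smul₀ (norm_ne_zero_iff.2 (Set.mem_compl_singleton_iff.1 x.2))]
  have main : (∫ x in A • Ω, g x) = ∫ θ, (∫ r : Ioi (0:ℝ), h (θ, r) ∂ν) ∂σ := by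
    rw [← integral_indicator hsm, ← hf]
    have s1 : (∫ x, f x) = ∫ x : ({0}ᶜ : Set (EuclideanSpace ℝ (Fin n))), f x.1
        ∂((volume : Measure (EuclideanSpace ℝ (Fin n))).comap Subtype.val) := by
      rw [integral_subtype_comap (measurableSet_singleton (0 : EuclideanSpace ℝ (Fin n))).compl,
        MeasureTheory.restrict_compl_singleton]
    have s2 : (∫ x : ({0}ᶜ : Set (EuclideanSpace ℝ (Fin n))), f x.1
        ∂((volume : Measure (EuclideanSpace ℝ (Fin n))).comap Subtype.val))
        = ∫ y, h y ∂(σ.prod ν) := by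
      rw [← hphi.integral_comp (Homeomorph.measurableEmbedding _) h]
      exact integral_congr_ae (Filter.Eventually.of_forall fun x => (hcomp x).symm)
    rw [s1, s2, integral_prod _ hhint]
  constructor
  · rw [show (∫ x in A • Ω, (2 * π) ^ (-(n : ℝ) / 2) * Real.exp (-‖x‖ ^ 2 / 2)) = ∫ x in A • Ω, g x from rfl,
      main]
    exact integral_congr_ae (Filter.Eventually.of_forall fun θ => inner θ)
  · have := hhint.integral_prod_left
    have heq : (fun θ => ∫ r : Ioi (0:ℝ), h (θ, r) ∂ν)
        = fun θ => c * SER9G m (A * ρ θ) := funext inner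
    rwa [heq] at this

lemma SER9sum_concave {ι : Type*} (s : Finset ι) {S : Set ℝ} (hS : Convex ℝ S)
    (f : ι → ℝ → ℝ) (h : ∀ i ∈ s, ConcaveOn ℝ S (f i)) :
    ConcaveOn ℝ S (fun A => ∑ i ∈ s, f i A) := by
  classical
  induction s using Finset.induction with
  | empty => simpa using concaveOn_const (0:ℝ) hS
  | insert a t hx ih =>
    simp only [Finset.sum_insert hx]
    exact (h a (Finset.mem_insert_self a t)).add
      (ih fun i hi => h i (Finset.mem_insert_of_mem hi))

lemma SER9sum_convex {ι : Type*} (s : Finset ι) {S : Set ℝ} (hS : Convex ℝ S)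
    (f : ι → ℝ → ℝ) (h : ∀ i ∈ s, ConvexOn ℝ S (f i)) :
    ConvexOn ℝ S (fun A => ∑ i ∈ s, f i A) := by
  classical
  induction s using Finset.induction with
  | empty => simpa using convexOn_const (0:ℝ) hS
  | insert a t hx ih =>
    simp only [Finset.sum_insert hx]
    exact (h a (Finset.mem_insert_self a t)).add
      (ih fun i hi => h i (Finset.mem_insert_of_mem hi))

lemma SER9phi_cont (m : ℕ) : Continuous (SER9phi m) := by
  unfold SER9phi; fun_prop

lemma SER9G_hasDerivAt (m : ℕ) (u : ℝ) : HasDerivAt (SER9G m) (SER9phi m u) u :=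
  ((SER9phi_cont m).integral_hasStrictDerivAt 0 u).hasDerivAt

noncomputable def SER9psi (m : ℕ) (u : ℝ) : ℝ := m * Real.log u - u ^ 2 / 2

lemma SER9phi_eq (m : ℕ) {u : ℝ} (hu : 0 < u) : SER9phi m u = Real.exp (SER9psi m u) := by
  rw [SER9psi, SER9phi, sub_eq_add_neg, Real.exp_add, Real.exp_nat_mul, Real.exp_log hu,
    neg_div]

lemma SER9psi_hasDerivAt (m : ℕ) {u : ℝ} (hu : 0 < u) :
    HasDerivAt (SER9psi m) ((m : ℝ) * u⁻¹ - 2 * u ^ 1 / 2) u := by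
  exact ((Real.hasDerivAt_log hu.ne').const_mul (m : ℝ)).sub ((hasDerivAt_pow 2 u).div_const 2)

lemma SER9phi_mono (m : ℕ) : MonotoneOn (SER9phi m) (Ioc 0 (Real.sqrt m)) := by
  have h1 : MonotoneOn (SER9psi m) (Ioc 0 (Real.sqrt m)) := by
    apply monotoneOn_of_deriv_nonneg (convex_Ioc _ _)
    · intro u hu
      exact (SER9psi_hasDerivAt m hu.1).continuousAt.continuousWithinAt
    · intro u hu
      rw [interior_Ioc] at hu
      exact (SER9psi_hasDerivAt m hu.1).differentiableAt.differentiableWithinAt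
    · intro u hu
      rw [interior_Ioc] at hu
      rw [(SER9psi_hasDerivAt m hu.1).deriv]
      have h2 : u ^ 2 < m := (Real.lt_sqrt hu.1.le).1 hu.2
      have h3 : (0:ℝ) < u := hu.1
      have : u * u ≤ m := by nlinarith
      have h4 : u ≤ (m : ℝ) * u⁻¹ := by
        rw [le_mul_inv_iff₀ h3]; nlinarith
      nlinarith [h4]
  intro u hu v hv huv
  rw [SER9phi_eq m hu.1, SER9phi_eq m hv.1]
  exact Real.exp_le_exp.2 (h1 hu hv huv)

lemma SER9phi_anti (m : ℕ) : AntitoneOn (SER9phi m) (Ioi 0 ∩ Ici (Real.sqrt m)) := by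
  have h1 : AntitoneOn (SER9psi m) (Ioi 0 ∩ Ici (Real.sqrt m)) := by
    apply antitoneOn_of_deriv_nonpos ((convex_Ioi _).inter (convex_Ici _))
    · intro u hu
      exact (SER9psi_hasDerivAt m hu.1).continuousAt.continuousWithinAt
    · intro u hu
      have hu' := interior_subset hu
      exact (SER9psi_hasDerivAt m hu'.1).differentiableAt.differentiableWithinAt
    · intro u hu
      have hu' := interior_subset hu
      rw [(SER9psi_hasDerivAt m hu'.1).deriv]
      have h3 : (0:ℝ) < u := hu'.1
      have h2 : (m : ℝ) ≤ u ^ 2 := by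
        have h5 : Real.sqrt (m:ℝ) ≤ u := hu'.2
        nlinarith [h5, Real.sqrt_nonneg ((m:ℝ)), Real.sq_sqrt (show (0:ℝ) ≤ (m:ℝ) from Nat.cast_nonneg m)]
      have h4 : (m : ℝ) * u⁻¹ ≤ u := by
        rw [mul_inv_le_iff₀ h3]; nlinarith
      nlinarith [h4]
  intro u hu v hv huv
  rw [SER9phi_eq m hu.1, SER9phi_eq m hv.1]
  exact Real.exp_le_exp.2 (h1 hu hv huv)

lemma SER9comp_hasDerivAt (m : ℕ) (ρ A : ℝ) :
    HasDerivAt (fun A => SER9G m (A * ρ)) (SER9phi m (A * ρ) * ρ) A :=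
  (SER9G_hasDerivAt m (A * ρ)).comp (h := fun x => x * ρ) A (hasDerivAt_mul_const ρ)

lemma SER9concave_comp (m : ℕ) {dmin ρ : ℝ} (hd : 0 < dmin) (hρ : dmin ≤ ρ) :
    ConcaveOn ℝ (Ioi 0 ∩ Ici (Real.sqrt m / dmin)) (fun A => SER9G m (A * ρ)) := by
  have hρ0 : 0 < ρ := hd.trans_le hρ
  have key : ∀ B ∈ Ioi (0:ℝ) ∩ Ici (Real.sqrt m / dmin), B * ρ ∈ Ioi 0 ∩ Ici (Real.sqrt m) := by
    intro B hB
    refine ⟨mul_pos hB.1 hρ0, ?_⟩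
    have h1 : Real.sqrt m ≤ B * dmin := (div_le_iff₀ hd).1 hB.2
    have h2 : B * dmin ≤ B * ρ := mul_le_mul_of_nonneg_left hρ (le_of_lt hB.1)
    exact h1.trans h2
  refine AntitoneOn.concaveOn_of_deriv ((convex_Ioi _).inter (convex_Ici _))
    (fun A _ => (SER9comp_hasDerivAt m ρ A).continuousAt.continuousWithinAt)
    (fun A _ => (SER9comp_hasDerivAt m ρ A).differentiableAt.differentiableWithinAt) ?_
  intro A hA B hB hAB
  have hA' := interior_subset hA
  have hB' := interior_subset hB
  rw [(SER9comp_hasDerivAt m ρ A).deriv, (SER9comp_hasDerivAt m ρ B).deriv]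
  exact mul_le_mul_of_nonneg_right
    (SER9phi_anti m (key A hA') (key B hB') (mul_le_mul_of_nonneg_right hAB hρ0.le)) hρ0.le

lemma SER9convex_comp (m : ℕ) {dmax ρ : ℝ} (hρ0 : 0 < ρ) (hρ : ρ ≤ dmax) :
    ConvexOn ℝ (Ioc 0 (Real.sqrt m / dmax)) (fun A => SER9G m (A * ρ)) := by
  have hdmax : 0 < dmax := hρ0.trans_le hρ
  have key : ∀ B ∈ Ioc (0:ℝ) (Real.sqrt m / dmax), B * ρ ∈ Ioc 0 (Real.sqrt m) := by
    intro B hB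
    refine ⟨mul_pos hB.1 hρ0, ?_⟩
    have h1 : B * dmax ≤ Real.sqrt m := (le_div_iff₀ hdmax).1 hB.2
    have h2 : B * ρ ≤ B * dmax := mul_le_mul_of_nonneg_left hρ (le_of_lt hB.1)
    exact h2.trans h1
  refine MonotoneOn.convexOn_of_deriv (convex_Ioc _ _)
    (fun A _ => (SER9comp_hasDerivAt m ρ A).continuousAt.continuousWithinAt)
    (fun A _ => (SER9comp_hasDerivAt m ρ A).differentiableAt.differentiableWithinAt) ?_
  intro A hA B hB hAB
  have hA' := interior_subset hA
  have hB' := interior_subset hB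
  rw [(SER9comp_hasDerivAt m ρ A).deriv, (SER9comp_hasDerivAt m ρ B).deriv]
  exact mul_le_mul_of_nonneg_right
    (SER9phi_mono m (key A hA') (key B hB') (mul_le_mul_of_nonneg_right hAB hρ0.le)) hρ0.le


/-- In the AWGN channel, the SER of a decoder with center-convex
decision regions, as a function of the signal amplitude `A`, is convex on
`{A | 0 < A ∧ √(n-1)/d_min ≤ A}` and concave on `(0, √(n-1)/d_max]`. -/
theorem ser_convexity_in_amplitude_awgn
    (n M : ℕ) (hn : 1 ≤ n)
    (q : Fin M → ℝ) (hq : ∀ i, 0 ≤ q i) (hqsum : ∑ i, q i = 1)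
    (Ω : Fin M → Set (EuclideanSpace ℝ (Fin n)))
    (hΩmeas : ∀ i, MeasurableSet (Ω i))
    (hΩstar : ∀ i, StarConvex ℝ (0 : EuclideanSpace ℝ (Fin n)) (Ω i))
    (dmin dmax : ℝ) (hdmin : 0 < dmin) (hdd : dmin ≤ dmax)
    (hball : ∀ i, Metric.closedBall (0 : EuclideanSpace ℝ (Fin n)) dmin ⊆ Ω i ∧
      Ω i ⊆ Metric.closedBall (0 : EuclideanSpace ℝ (Fin n)) dmax)
    (Pe : ℝ → ℝ)
    (hPe : ∀ A, Pe A = 1 - ∑ i, q i * ∫ x in A • Ω i,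
      (2 * π) ^ (-(n : ℝ) / 2) * Real.exp (-‖x‖ ^ 2 / 2)) :
    ConvexOn ℝ {A : ℝ | 0 < A ∧ Real.sqrt ((n : ℝ) - 1) / dmin ≤ A} Pe ∧
      ConcaveOn ℝ (Ioc (0 : ℝ) (Real.sqrt ((n : ℝ) - 1) / dmax)) Pe := by
  set m := n - 1 with hm
  have hcast : ((m : ℕ) : ℝ) = (n : ℝ) - 1 := by
    have := Nat.cast_sub (R := ℝ) hn
    simpa [hm] using this
  set c : ℝ := (2 * π) ^ (-(n : ℝ) / 2) with hc
  have hc0 : (0:ℝ) ≤ c := Real.rpow_nonneg (by positivity) _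
  set F : Fin M → ℝ → ℝ := fun i A => ∫ x in A • Ω i,
    (2 * π) ^ (-(n : ℝ) / 2) * Real.exp (-‖x‖ ^ 2 / 2) with hF
  choose ρ hρb hrep using fun i => SER9polar n hn (Ω i) (hΩmeas i) (hΩstar i) hdmin
    (hball i).1 (hball i).2
  have hPe' : Pe = fun A => 1 - ∑ i, q i * F i A := funext hPe
  have hdmax : 0 < dmax := hdmin.trans_le hdd
  -- convexity part
  have hS1 : Convex ℝ {A : ℝ | 0 < A ∧ Real.sqrt ((n : ℝ) - 1) / dmin ≤ A} := by
    have : {A : ℝ | 0 < A ∧ Real.sqrt ((n : ℝ) - 1) / dmin ≤ A}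
        = Ioi 0 ∩ Ici (Real.sqrt ((n : ℝ) - 1) / dmin) := rfl
    rw [this]
    exact (convex_Ioi _).inter (convex_Ici _)
  have hS2 : Convex ℝ (Ioc (0:ℝ) (Real.sqrt ((n : ℝ) - 1) / dmax)) := convex_Ioc _ _
  have hFconc : ∀ i, ConcaveOn ℝ {A : ℝ | 0 < A ∧ Real.sqrt ((n : ℝ) - 1) / dmin ≤ A}
      (fun A => q i * F i A) := by
    intro i
    refine ⟨hS1, ?_⟩
    intro A hA B hB a b ha hb hab
    have hC : a • A + b • B ∈ {A : ℝ | 0 < A ∧ Real.sqrt ((n : ℝ) - 1) / dmin ≤ A} :=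
      hS1 hA hB ha hb hab
    have repA := hrep i A hA.1
    have repB := hrep i B hB.1
    have repC := hrep i (a • A + b • B) hC.1
    have hint : ∀ {D : ℝ} (hD : 0 < D), Integrable (fun θ => c * SER9G m (D * ρ i θ))
        ((volume : Measure (EuclideanSpace ℝ (Fin n))).toSphere) := fun hD => (hrep i _ hD).2
    have key : F i (a • A + b • B) ≥ a * F i A + b * F i B := by
      rw [hF]
      simp only
      rw [show (∫ x in (a • A + b • B) • Ω i, (2 * π) ^ (-(n : ℝ) / 2)
          * Real.exp (-‖x‖ ^ 2 / 2)) = _ from repC.1,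
        show (∫ x in A • Ω i, (2 * π) ^ (-(n : ℝ) / 2) * Real.exp (-‖x‖ ^ 2 / 2)) = _ from repA.1,
        show (∫ x in B • Ω i, (2 * π) ^ (-(n : ℝ) / 2) * Real.exp (-‖x‖ ^ 2 / 2)) = _ from repB.1]
      rw [← integral_const_mul a, ← integral_const_mul b, ← integral_add
        ((hint hA.1).const_mul a) ((hint hB.1).const_mul b)]
      refine integral_mono (((hint hA.1).const_mul a).add ((hint hB.1).const_mul b))
        (hint hC.1) fun θ => ?_
      have hmemA : A ∈ Ioi (0:ℝ) ∩ Ici (Real.sqrt m / dmin) := by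
        rw [hcast]; exact ⟨hA.1, hA.2⟩
      have hmemB : B ∈ Ioi (0:ℝ) ∩ Ici (Real.sqrt m / dmin) := by
        rw [hcast]; exact ⟨hB.1, hB.2⟩
      have h9 := (SER9concave_comp m hdmin (hρb i θ).1).2 hmemA hmemB ha hb hab
      simp only [smul_eq_mul] at h9 ⊢
      nlinarith [h9, hc0]
    have h10 := mul_le_mul_of_nonneg_left key (hq i)
    simp only [smul_eq_mul] at *
    nlinarith [h10]
  have hFconv : ∀ i, ConvexOn ℝ (Ioc (0:ℝ) (Real.sqrt ((n : ℝ) - 1) / dmax))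
      (fun A => q i * F i A) := by
    intro i
    refine ⟨hS2, ?_⟩
    intro A hA B hB a b ha hb hab
    have hC : a • A + b • B ∈ Ioc (0:ℝ) (Real.sqrt ((n : ℝ) - 1) / dmax) :=
      hS2 hA hB ha hb hab
    have repA := hrep i A hA.1
    have repB := hrep i B hB.1
    have repC := hrep i (a • A + b • B) hC.1
    have hint : ∀ {D : ℝ} (hD : 0 < D), Integrable (fun θ => c * SER9G m (D * ρ i θ))
        ((volume : Measure (EuclideanSpace ℝ (Fin n))).toSphere) := fun hD => (hrep i _ hD).2
    have key : F i (a • A + b • B) ≤ a * F i A + b * F i B := by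
      rw [hF]
      simp only
      rw [show (∫ x in (a • A + b • B) • Ω i, (2 * π) ^ (-(n : ℝ) / 2)
          * Real.exp (-‖x‖ ^ 2 / 2)) = _ from repC.1,
        show (∫ x in A • Ω i, (2 * π) ^ (-(n : ℝ) / 2) * Real.exp (-‖x‖ ^ 2 / 2)) = _ from repA.1,
        show (∫ x in B • Ω i, (2 * π) ^ (-(n : ℝ) / 2) * Real.exp (-‖x‖ ^ 2 / 2)) = _ from repB.1]
      rw [← integral_const_mul a, ← integral_const_mul b, ← integral_add
        ((hint hA.1).const_mul a) ((hint hB.1).const_mul b)]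
      refine integral_mono (hint hC.1)
        (((hint hA.1).const_mul a).add ((hint hB.1).const_mul b)) fun θ => ?_
      have hmemA : A ∈ Ioc (0:ℝ) (Real.sqrt m / dmax) := by
        rw [hcast]; exact hA
      have hmemB : B ∈ Ioc (0:ℝ) (Real.sqrt m / dmax) := by
        rw [hcast]; exact hB
      have h9 := (SER9convex_comp m (hdmin.trans_le (hρb i θ).1) (hρb i θ).2).2
        hmemA hmemB ha hb hab
      simp only [smul_eq_mul] at h9 ⊢
      nlinarith [h9, hc0]
    have h10 := mul_le_mul_of_nonneg_left key (hq i)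
    simp only [smul_eq_mul] at *
    nlinarith [h10]
  constructor
  · rw [hPe']
    have hsum := SER9sum_concave Finset.univ hS1 (fun i A => q i * F i A)
      (fun i _ => hFconc i)
    have := hsum.neg.add_const 1
    have e : ((-fun A => ∑ i, q i * F i A) + fun _ => (1:ℝ)) = fun A => 1 - ∑ i, q i * F i A := by
      funext A
      simp only [Pi.add_apply, Pi.neg_apply]
      ring
    rw [e] at this
    exact this
  · rw [hPe']
    have hsum := SER9sum_convex Finset.univ hS2 (fun i A => q i * F i A)
      (fun i _ => hFconv i)
    have := hsum.neg.add_const 1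
    have e : ((-fun A => ∑ i, q i * F i A) + fun _ => (1:ℝ)) = fun A => 1 - ∑ i, q i * F i A := by
      funext A
      simp only [Pi.add_apply, Pi.neg_apply]
      ring
    rw [e] at this
    exact this
end

section
/- Let n ≥ 1, let f : E → ℝ be a nonnegative, measurable, integrable function, and let 0 < A₁ ≤ A₂. Suppose Metric.closedBall 0 d_min ⊆ Ω_i ⊆ Metric.closedBall 0 d_max for every i, with 0 < d_min ≤ d_max, and suppose that for every unit vector u ∈ E the function r ↦ r^{n−1} · f(r • u) is antitone (non-increasing) on the interval [A₁·d_min, A₂·d_max]. Then the symbol error rate as a function of the signal amplitude, P_e(A) = 1 − Σ_{i=1}^{M} q_i ∫_{A • Ω_i} f(x) dx, is convex on the interval [A₁, A₂]. -/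
open MeasureTheory Real Set Pointwise


lemma aux_integral_volumeIoiPow (m : ℕ) (g : ℝ → ℝ) :
    ∫ r : Set.Ioi (0:ℝ), g r ∂(MeasureTheory.Measure.volumeIoiPow m)
      = ∫ r in Set.Ioi (0:ℝ), r ^ m * g r := by
  simp only [MeasureTheory.Measure.volumeIoiPow, ENNReal.ofReal]
  rw [integral_withDensity_eq_integral_smul
      ((measurable_subtype_coe.pow_const _).real_toNNReal),
    integral_subtype_comap measurableSet_Ioi fun a => Real.toNNReal (a ^ m) • g a]
  refine setIntegral_congr_fun measurableSet_Ioi fun x hx => ?_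
  rw [NNReal.smul_def, Real.coe_toNNReal _ (pow_nonneg hx.out.le _), smul_eq_mul]

lemma aux_core (h : ℝ → ℝ) (L U a c b ρ : ℝ)
    (h_nonneg : ∀ r : ℝ, 0 < r → 0 ≤ h r)
    (h_anti : AntitoneOn h (Icc L U))
    (hρ : 0 < ρ) (h0a : 0 < a) (hac : a ≤ c) (hcb : c ≤ b)
    (hLa : L ≤ a * ρ) (hbU : b * ρ ≤ U) :
    (b - c) * (∫ r in Ioc (0:ℝ) (a*ρ), h r) + (c - a) * (∫ r in Ioc (0:ℝ) (b*ρ), h r)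
      ≤ (b - a) * ∫ r in Ioc (0:ℝ) (c*ρ), h r := by
  have hacρ : a * ρ ≤ c * ρ := by nlinarith
  have hcbρ : c * ρ ≤ b * ρ := by nlinarith
  have h0aρ : 0 < a * ρ := by positivity
  have hmid : IntegrableOn h (Icc (a*ρ) (b*ρ)) :=
    AntitoneOn.integrableOn_isCompact isCompact_Icc (h_anti.mono (Icc_subset_Icc hLa hbU))
  by_cases hIa : IntegrableOn h (Ioc 0 (a*ρ))
  · have hIac : IntegrableOn h (Ioc (a*ρ) (c*ρ)) :=
      hmid.mono_set (Ioc_subset_Icc_self.trans (Icc_subset_Icc le_rfl hcbρ))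
    have hIcb : IntegrableOn h (Ioc (c*ρ) (b*ρ)) :=
      hmid.mono_set (Ioc_subset_Icc_self.trans (Icc_subset_Icc hacρ le_rfl))
    have hIc : IntegrableOn h (Ioc (0:ℝ) (c*ρ)) := by
      rw [← Ioc_union_Ioc_eq_Ioc h0aρ.le hacρ]; exact hIa.union hIac
    have hsplit1 : ∫ r in Ioc (0:ℝ) (c*ρ), h r
        = (∫ r in Ioc (0:ℝ) (a*ρ), h r) + ∫ r in Ioc (a*ρ) (c*ρ), h r := by
      rw [← Ioc_union_Ioc_eq_Ioc h0aρ.le hacρ,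
        setIntegral_union (Ioc_disjoint_Ioc_of_le le_rfl) measurableSet_Ioc hIa hIac]
    have hsplit2 : ∫ r in Ioc (0:ℝ) (b*ρ), h r
        = (∫ r in Ioc (0:ℝ) (c*ρ), h r) + ∫ r in Ioc (c*ρ) (b*ρ), h r := by
      rw [← Ioc_union_Ioc_eq_Ioc (h0aρ.trans_le hacρ).le hcbρ,
        setIntegral_union (Ioc_disjoint_Ioc_of_le le_rfl) measurableSet_Ioc hIc hIcb]
    have hmemc : c * ρ ∈ Icc L U := ⟨hLa.trans hacρ, hcbρ.trans hbU⟩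
    have low : (c*ρ - a*ρ) * h (c*ρ) ≤ ∫ r in Ioc (a*ρ) (c*ρ), h r := by
      calc (c*ρ - a*ρ) * h (c*ρ) = ∫ _r in Ioc (a*ρ) (c*ρ), h (c*ρ) := by
            rw [setIntegral_const, Real.volume_real_Ioc_of_le (by linarith), smul_eq_mul]
        _ ≤ ∫ r in Ioc (a*ρ) (c*ρ), h r := by
            refine setIntegral_mono_on (integrableOn_const measure_Ioc_lt_top.ne)
              hIac measurableSet_Ioc fun r hr => ?_
            exact h_anti ⟨hLa.trans hr.1.le, hr.2.trans (hcbρ.trans hbU)⟩ hmemc hr.2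
    have high : ∫ r in Ioc (c*ρ) (b*ρ), h r ≤ (b*ρ - c*ρ) * h (c*ρ) := by
      calc ∫ r in Ioc (c*ρ) (b*ρ), h r ≤ ∫ _r in Ioc (c*ρ) (b*ρ), h (c*ρ) := by
            refine setIntegral_mono_on hIcb (integrableOn_const measure_Ioc_lt_top.ne)
              measurableSet_Ioc fun r hr => ?_
            exact h_anti hmemc ⟨hmemc.1.trans hr.1.le, hr.2.trans hbU⟩ hr.1.le
        _ = (b*ρ - c*ρ) * h (c*ρ) := by
            rw [setIntegral_const, Real.volume_real_Ioc_of_le (by linarith), smul_eq_mul]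
    have hc0 : 0 ≤ h (c*ρ) := h_nonneg _ (h0aρ.trans_le hacρ)
    rw [hsplit1, hsplit2]
    nlinarith [mul_le_mul_of_nonneg_left low (by linarith : (0:ℝ) ≤ b - c),
      mul_le_mul_of_nonneg_left high (by linarith : (0:ℝ) ≤ c - a),
      hsplit1, hc0]
  · have hIc : ¬ IntegrableOn h (Ioc (0:ℝ) (c*ρ)) :=
      fun H => hIa (H.mono_set (Ioc_subset_Ioc le_rfl hacρ))
    have hIb : ¬ IntegrableOn h (Ioc (0:ℝ) (b*ρ)) :=
      fun H => hIa (H.mono_set (Ioc_subset_Ioc le_rfl (hacρ.trans hcbρ)))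
    rw [integral_undef hIa, integral_undef hIc, integral_undef hIb]
    simp

lemma aux_polar (n : ℕ) (hn : 1 ≤ n) (g : EuclideanSpace ℝ (Fin n) → ℝ)
    (hg_int : Integrable g) :
    (∫ x, g x) = (∫ u : Metric.sphere (0 : EuclideanSpace ℝ (Fin n)) 1,
        (∫ r in Ioi (0:ℝ), r ^ (n-1) * g (r • (u : EuclideanSpace ℝ (Fin n))))
        ∂(volume : Measure (EuclideanSpace ℝ (Fin n))).toSphere)
      ∧ Integrable (fun u : Metric.sphere (0 : EuclideanSpace ℝ (Fin n)) 1 =>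
        ∫ r in Ioi (0:ℝ), r ^ (n-1) * g (r • (u : EuclideanSpace ℝ (Fin n))))
        (volume : Measure (EuclideanSpace ℝ (Fin n))).toSphere := by
  haveI : Nonempty (Fin n) := ⟨⟨0, hn⟩⟩
  haveI : Nontrivial (EuclideanSpace ℝ (Fin n)) := by
    refine ⟨EuclideanSpace.single ⟨0, hn⟩ (1:ℝ), 0, fun h => ?_⟩
    simpa [EuclideanSpace.norm_single] using congrArg norm h
  have hdim : Module.finrank ℝ (EuclideanSpace ℝ (Fin n)) = n := finrank_euclideanSpace_fin
  have mp := (volume : Measure (EuclideanSpace ℝ (Fin n))).measurePreserving_homeomorphUnitSphereProd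
  rw [hdim] at mp
  set G : Metric.sphere (0:EuclideanSpace ℝ (Fin n)) 1 × Ioi (0:ℝ) → ℝ :=
    fun p => g ((p.2 : ℝ) • (p.1 : EuclideanSpace ℝ (Fin n))) with hG
  have hcomp : ∀ x : ({0}ᶜ : Set (EuclideanSpace ℝ (Fin n))),
      G (homeomorphUnitSphereProd (EuclideanSpace ℝ (Fin n)) x) = g x := by
    intro x
    have hx : (x : EuclideanSpace ℝ (Fin n)) ≠ 0 := x.2
    simp only [hG, homeomorphUnitSphereProd_apply_fst_coe, homeomorphUnitSphereProd_apply_snd_coe]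
    rw [smul_inv_smul₀ (norm_ne_zero_iff.2 hx)]
  have hcompf : (fun x : ({0}ᶜ : Set (EuclideanSpace ℝ (Fin n))) =>
      G (homeomorphUnitSphereProd (EuclideanSpace ℝ (Fin n)) x))
      = fun x : ({0}ᶜ : Set (EuclideanSpace ℝ (Fin n))) => g x := funext hcomp
  have hG_int : Integrable G ((volume : Measure (EuclideanSpace ℝ (Fin n))).toSphere.prod
      (Measure.volumeIoiPow (n-1))) := by
    rw [← mp.integrable_comp_emb (Homeomorph.measurableEmbedding _)]
    show Integrable (fun x : ({0}ᶜ : Set (EuclideanSpace ℝ (Fin n))) =>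
      G (homeomorphUnitSphereProd (EuclideanSpace ℝ (Fin n)) x)) _
    rw [hcompf]
    have h1 : Integrable g ((volume : Measure (EuclideanSpace ℝ (Fin n))).restrict
        ({0}ᶜ : Set (EuclideanSpace ℝ (Fin n)))) := by
      rw [MeasureTheory.restrict_compl_singleton]; exact hg_int
    rw [← map_comap_subtype_coe (measurableSet_singleton (0:EuclideanSpace ℝ (Fin n))).compl] at h1
    exact ((MeasurableEmbedding.subtype_coe
      (measurableSet_singleton (0:EuclideanSpace ℝ (Fin n))).compl).integrable_map_iff).1 h1
  have e2 : (∫ x, g x) = ∫ x : ({0}ᶜ : Set (EuclideanSpace ℝ (Fin n))), g x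
      ∂(volume.comap Subtype.val) := by
    rw [integral_subtype_comap (measurableSet_singleton (0:EuclideanSpace ℝ (Fin n))).compl g,
      MeasureTheory.restrict_compl_singleton]
  have e3 : (∫ x : ({0}ᶜ : Set (EuclideanSpace ℝ (Fin n))), g x ∂(volume.comap Subtype.val))
      = ∫ p, G p ∂((volume : Measure (EuclideanSpace ℝ (Fin n))).toSphere.prod
          (Measure.volumeIoiPow (n-1))) := by
    rw [← mp.integral_comp (Homeomorph.measurableEmbedding _) G]
    exact integral_congr_ae (Filter.EventuallyEq.of_eq hcompf.symm)
  have e4 := integral_prod G hG_int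
  have e5f : (fun u : Metric.sphere (0:EuclideanSpace ℝ (Fin n)) 1 =>
      ∫ r : Ioi (0:ℝ), G (u, r) ∂(Measure.volumeIoiPow (n-1)))
      = fun u : Metric.sphere (0:EuclideanSpace ℝ (Fin n)) 1 =>
        ∫ r in Ioi (0:ℝ), r ^ (n-1) * g (r • (u : EuclideanSpace ℝ (Fin n))) :=
    funext fun u => aux_integral_volumeIoiPow (n-1)
      (fun r => g (r • (u : EuclideanSpace ℝ (Fin n))))
  constructor
  · rw [e2, e3, e4, ← e5f]
  · have := hG_int.integral_prod_left
    rwa [e5f] at this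

lemma aux_key (n : ℕ) (hn : 1 ≤ n)
    (f : EuclideanSpace ℝ (Fin n) → ℝ)
    (hf_nonneg : ∀ x, 0 ≤ f x) (hf_meas : Measurable f) (hf_int : Integrable f)
    (A₁ A₂ : ℝ) (hA₁ : 0 < A₁) (hA₂ : 0 ≤ A₂)
    (Ω : Set (EuclideanSpace ℝ (Fin n)))
    (hΩmeas : MeasurableSet Ω)
    (hΩstar : StarConvex ℝ 0 Ω)
    (dmin dmax : ℝ) (hdmin : 0 < dmin)
    (hball : Metric.closedBall (0 : EuclideanSpace ℝ (Fin n)) dmin ⊆ Ω)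
    (hball' : Ω ⊆ Metric.closedBall (0 : EuclideanSpace ℝ (Fin n)) dmax)
    (hanti : ∀ u : EuclideanSpace ℝ (Fin n), ‖u‖ = 1 →
      AntitoneOn (fun r : ℝ => r ^ (n - 1) * f (r • u)) (Icc (A₁ * dmin) (A₂ * dmax)))
    (a c b : ℝ) (ha : A₁ ≤ a) (hac : a ≤ c) (hcb : c ≤ b) (hb : b ≤ A₂) :
    (b - c) * (∫ x in a • Ω, f x) + (c - a) * (∫ x in b • Ω, f x)
      ≤ (b - a) * ∫ x in c • Ω, f x := by
  have h0a : 0 < a := hA₁.trans_le ha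
  have h0c : 0 < c := h0a.trans_le hac
  have h0b : 0 < b := h0c.trans_le hcb
  -- measurability of scaled sets and representation
  have hAΩ : ∀ A : ℝ, 0 < A → MeasurableSet (A • Ω) := by
    intro A hA
    have : A • Ω = (fun x : EuclideanSpace ℝ (Fin n) => A⁻¹ • x) ⁻¹' Ω := by
      ext x; exact mem_smul_set_iff_inv_smul_mem₀ hA.ne' _ _
    rw [this]; exact hΩmeas.preimage (measurable_const_smul _)
  have repr : ∀ A : ℝ, 0 < A →
      ((∫ x in A • Ω, f x) = ∫ u : Metric.sphere (0 : EuclideanSpace ℝ (Fin n)) 1,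
        (∫ r in Ioi (0:ℝ), r ^ (n-1) *
          (A • Ω).indicator f (r • (u : EuclideanSpace ℝ (Fin n))))
        ∂(volume : Measure (EuclideanSpace ℝ (Fin n))).toSphere)
      ∧ Integrable (fun u : Metric.sphere (0 : EuclideanSpace ℝ (Fin n)) 1 =>
        ∫ r in Ioi (0:ℝ), r ^ (n-1) *
          (A • Ω).indicator f (r • (u : EuclideanSpace ℝ (Fin n))))
        (volume : Measure (EuclideanSpace ℝ (Fin n))).toSphere := by
    intro A hA
    have h1 := aux_polar n hn ((A • Ω).indicator f) (hf_int.indicator (hAΩ A hA))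
    exact ⟨(integral_indicator (hAΩ A hA)).symm.trans h1.1, h1.2⟩
  obtain ⟨ra, ia⟩ := repr a h0a
  obtain ⟨rc, ic⟩ := repr c h0c
  obtain ⟨rb, ib⟩ := repr b h0b
  rw [ra, rb, rc]
  -- pointwise inequality on the sphere
  have hpt : ∀ u : Metric.sphere (0 : EuclideanSpace ℝ (Fin n)) 1,
      (b - c) * (∫ r in Ioi (0:ℝ), r ^ (n-1) *
          (a • Ω).indicator f (r • (u : EuclideanSpace ℝ (Fin n))))
        + (c - a) * (∫ r in Ioi (0:ℝ), r ^ (n-1) *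
          (b • Ω).indicator f (r • (u : EuclideanSpace ℝ (Fin n))))
      ≤ (b - a) * ∫ r in Ioi (0:ℝ), r ^ (n-1) *
          (c • Ω).indicator f (r • (u : EuclideanSpace ℝ (Fin n))) := by
    intro u
    have hu : ‖(u : EuclideanSpace ℝ (Fin n))‖ = 1 := mem_sphere_zero_iff_norm.1 u.2
    set v : EuclideanSpace ℝ (Fin n) := (u : EuclideanSpace ℝ (Fin n)) with hv
    set h : ℝ → ℝ := fun r => r ^ (n-1) * f (r • v) with hh
    set S : Set ℝ := {r : ℝ | 0 < r ∧ r • v ∈ Ω} with hS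
    have hSmem : dmin ∈ S := by
      refine ⟨hdmin, hball ?_⟩
      rw [mem_closedBall_zero_iff, norm_smul, hu, mul_one, Real.norm_eq_abs, abs_of_pos hdmin]
    have hSsub : ∀ r ∈ S, r ≤ dmax := by
      intro r hr
      have := hball' hr.2
      rw [mem_closedBall_zero_iff, norm_smul, hu, mul_one, Real.norm_eq_abs] at this
      exact (le_abs_self r).trans this
    have hSbdd : BddAbove S := ⟨dmax, fun r hr => hSsub r hr⟩
    set ρ : ℝ := sSup S with hρdef
    have hρ1 : dmin ≤ ρ := le_csSup hSbdd hSmem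
    have hρ2 : ρ ≤ dmax := csSup_le ⟨dmin, hSmem⟩ hSsub
    have hρ0 : 0 < ρ := hdmin.trans_le hρ1
    have hdc : ∀ {s r : ℝ}, s ∈ S → 0 < r → r ≤ s → r ∈ S := by
      intro s r hs hr hrs
      have hs0 : 0 < s := hs.1
      refine ⟨hr, ?_⟩
      have h1 : (r / s) • (s • v) = r • v := by
        rw [smul_smul, div_mul_cancel₀ _ hs0.ne']
      rw [← h1]
      exact hΩstar.smul_mem hs.2 (by positivity) ((div_le_one hs0).2 hrs)
    -- set identification
    have hTmeas : ∀ A : ℝ, 0 < A → MeasurableSet {r : ℝ | r • v ∈ A • Ω} := by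
      intro A hA
      have : {r : ℝ | r • v ∈ A • Ω} = (fun r : ℝ => r • v) ⁻¹' (A • Ω) := rfl
      rw [this]
      have : A • Ω = (fun x : EuclideanSpace ℝ (Fin n) => A⁻¹ • x) ⁻¹' Ω := by
        ext x; exact mem_smul_set_iff_inv_smul_mem₀ hA.ne' _ _
      rw [this]
      exact (hΩmeas.preimage (measurable_const_smul _)).preimage
        ((continuous_id.smul continuous_const).measurable)
    have hrepr : ∀ A : ℝ, 0 < A →
        (∫ r in Ioi (0:ℝ), r ^ (n-1) * (A • Ω).indicator f (r • v))
          = ∫ r in Ioc (0:ℝ) (A * ρ), h r := by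
      intro A hA
      have e1 : (fun r : ℝ => r ^ (n-1) * (A • Ω).indicator f (r • v))
          = ({r : ℝ | r • v ∈ A • Ω}).indicator h := by
        funext r
        by_cases hr : r • v ∈ A • Ω
        · simp [Set.indicator_of_mem, hr, mem_setOf_eq, hh]
        · simp [Set.indicator_of_notMem, hr, mem_setOf_eq]
      rw [e1, setIntegral_indicator (hTmeas A hA)]
      refine setIntegral_congr_set ?_
      -- Ioi 0 ∩ T =ᵐ Ioc 0 (A ρ)
      have hsub1 : Ioi (0:ℝ) ∩ {r : ℝ | r • v ∈ A • Ω} ⊆ Ioc 0 (A * ρ) := by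
        rintro r ⟨hr0, hrmem⟩
        have hr0' : (0:ℝ) < r := hr0
        have h2 : (A⁻¹ * r) • v ∈ Ω := by
          have := (mem_smul_set_iff_inv_smul_mem₀ hA.ne' _ _).1 hrmem
          rwa [smul_smul] at this
        have h3 : A⁻¹ * r ∈ S := ⟨by positivity, h2⟩
        have h4 : A⁻¹ * r ≤ ρ := le_csSup hSbdd h3
        refine ⟨hr0, ?_⟩
        calc r = A * (A⁻¹ * r) := by field_simp
          _ ≤ A * ρ := by nlinarith
      have hsub2 : Ioo (0:ℝ) (A * ρ) ⊆ Ioi (0:ℝ) ∩ {r : ℝ | r • v ∈ A • Ω} := by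
        rintro r ⟨hr0, hrlt⟩
        have h2 : A⁻¹ * r < ρ := by
          rw [inv_mul_eq_div, div_lt_iff₀ hA]
          linarith [mul_comm A ρ]
        obtain ⟨s, hsS, hlt⟩ := exists_lt_of_lt_csSup ⟨dmin, hSmem⟩ h2
        have h3 : A⁻¹ * r ∈ S := hdc hsS (by positivity) hlt.le
        refine ⟨hr0, ?_⟩
        rw [mem_setOf_eq, mem_smul_set_iff_inv_smul_mem₀ hA.ne', smul_smul]
        exact h3.2
      rw [MeasureTheory.ae_eq_set]
      constructor
      · rw [diff_eq_empty.2 hsub1]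
        exact measure_empty
      · refine measure_mono_null (fun r hr => ?_) (measure_singleton (A * ρ))
        obtain ⟨⟨hr1, hr2⟩, hr3⟩ := hr
        rcases lt_or_eq_of_le hr2 with hlt | heq
        · exact absurd (hsub2 ⟨hr1, hlt⟩) hr3
        · exact heq
    rw [hrepr a h0a, hrepr b h0b, hrepr c h0c]
    refine aux_core h (A₁ * dmin) (A₂ * dmax) a c b ρ ?_ (hanti v hu) hρ0 h0a hac hcb ?_ ?_
    · intro r hr
      exact mul_nonneg (pow_nonneg hr.le _) (hf_nonneg _)
    · exact mul_le_mul ha hρ1 hdmin.le h0a.le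
    · exact mul_le_mul hb hρ2 hρ0.le hA₂
  -- combine over the sphere
  set Fa : Metric.sphere (0 : EuclideanSpace ℝ (Fin n)) 1 → ℝ := fun u =>
    ∫ r in Ioi (0:ℝ), r ^ (n-1) * (a • Ω).indicator f (r • (u : EuclideanSpace ℝ (Fin n))) with hFa
  set Fb : Metric.sphere (0 : EuclideanSpace ℝ (Fin n)) 1 → ℝ := fun u =>
    ∫ r in Ioi (0:ℝ), r ^ (n-1) * (b • Ω).indicator f (r • (u : EuclideanSpace ℝ (Fin n))) with hFb
  set Fc : Metric.sphere (0 : EuclideanSpace ℝ (Fin n)) 1 → ℝ := fun u =>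
    ∫ r in Ioi (0:ℝ), r ^ (n-1) * (c • Ω).indicator f (r • (u : EuclideanSpace ℝ (Fin n))) with hFc
  have hg : Integrable (fun u => (b - c) * Fa u + (c - a) * Fb u)
      (volume : Measure (EuclideanSpace ℝ (Fin n))).toSphere :=
    (ia.const_mul _).add (ib.const_mul _)
  have hcomb : (0:ℝ) ≤ ∫ u : Metric.sphere (0 : EuclideanSpace ℝ (Fin n)) 1,
      ((b - a) * Fc u - ((b - c) * Fa u + (c - a) * Fb u))
      ∂(volume : Measure (EuclideanSpace ℝ (Fin n))).toSphere := by
    refine integral_nonneg ?_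
    intro u
    simp only [Pi.zero_apply]
    have := hpt u
    linarith
  rw [integral_sub (ic.const_mul _) hg, integral_add (ia.const_mul _) (ib.const_mul _),
    integral_const_mul, integral_const_mul, integral_const_mul] at hcomb
  linarith

lemma aux_sum_concave {ι : Type*} (s : Set ℝ) (hs : Convex ℝ s) (t : Finset ι) (g : ι → ℝ → ℝ)
    (h : ∀ i ∈ t, ConcaveOn ℝ s (g i)) : ConcaveOn ℝ s (fun A => ∑ i ∈ t, g i A) := by
  classical
  induction t using Finset.induction_on with
  | empty => simpa using concaveOn_const (0:ℝ) hs
  | @insert a t ha ih =>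
    simp only [Finset.sum_insert ha]
    exact (h _ (Finset.mem_insert_self _ _)).add (ih fun i hi => h i (Finset.mem_insert_of_mem hi))

/-- For an arbitrary noise density `f` whose radial amplitude
density `r ↦ r^(n-1) f(r • u)` is non-increasing on `[A₁ d_min, A₂ d_max]` along
every direction, the SER of a decoder with center-convex decision regions is
convex in the signal amplitude on `[A₁, A₂]`. -/
theorem ser_convex_in_amplitude_general_noise
    (n M : ℕ) (hn : 1 ≤ n)
    (f : EuclideanSpace ℝ (Fin n) → ℝ)
    (hf_nonneg : ∀ x, 0 ≤ f x) (hf_meas : Measurable f)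
    (hf_int : Integrable f)
    (A₁ A₂ : ℝ) (hA₁ : 0 < A₁) (hA₁₂ : A₁ ≤ A₂)
    (q : Fin M → ℝ) (hq : ∀ i, 0 ≤ q i) (hqsum : ∑ i, q i = 1)
    (Ω : Fin M → Set (EuclideanSpace ℝ (Fin n)))
    (hΩmeas : ∀ i, MeasurableSet (Ω i))
    (hΩstar : ∀ i, StarConvex ℝ (0 : EuclideanSpace ℝ (Fin n)) (Ω i))
    (dmin dmax : ℝ) (hdmin : 0 < dmin) (hdd : dmin ≤ dmax)
    (hball : ∀ i, Metric.closedBall (0 : EuclideanSpace ℝ (Fin n)) dmin ⊆ Ω i ∧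
      Ω i ⊆ Metric.closedBall (0 : EuclideanSpace ℝ (Fin n)) dmax)
    (hanti : ∀ u : EuclideanSpace ℝ (Fin n), ‖u‖ = 1 →
      AntitoneOn (fun r : ℝ => r ^ (n - 1) * f (r • u))
        (Icc (A₁ * dmin) (A₂ * dmax)))
    (Pe : ℝ → ℝ)
    (hPe : ∀ A, Pe A = 1 - ∑ i, q i * ∫ x in A • Ω i, f x) :
    ConvexOn ℝ (Icc A₁ A₂) Pe := by
  have hA₂ : (0:ℝ) ≤ A₂ := (hA₁.trans_le hA₁₂).le
  -- concavity of each region's correct-decision probability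
  have hconc : ∀ i : Fin M, ConcaveOn ℝ (Icc A₁ A₂) (fun A => ∫ x in A • Ω i, f x) := by
    intro i
    have key : ∀ x y : ℝ, x ∈ Icc A₁ A₂ → y ∈ Icc A₁ A₂ → x ≤ y →
        ∀ p r : ℝ, 0 ≤ p → 0 ≤ r → p + r = 1 →
        p * (∫ v in x • Ω i, f v) + r * (∫ v in y • Ω i, f v)
          ≤ ∫ v in (p * x + r * y) • Ω i, f v := by
      intro x y hx hy hxy p r hp hr hpr
      rcases eq_or_lt_of_le hxy with rfl | hlt
      · have h1 : p * x + r * x = x := by rw [← add_mul, hpr, one_mul]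
        rw [h1, ← add_mul, hpr, one_mul]
      · set c := p * x + r * y with hc
        have hyc : y - c = p * (y - x) := by
          have hr' : r = 1 - p := by linarith
          rw [hc, hr']; ring
        have hcx : c - x = r * (y - x) := by
          have hp' : p = 1 - r := by linarith
          rw [hc, hp']; ring
        have hxc : x ≤ c := by
          have := mul_nonneg hr (by linarith : (0:ℝ) ≤ y - x); linarith
        have hcy : c ≤ y := by
          have := mul_nonneg hp (by linarith : (0:ℝ) ≤ y - x); linarith
        have := aux_key n hn f hf_nonneg hf_meas hf_int A₁ A₂ hA₁ hA₂ (Ω i)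
          (hΩmeas i) (hΩstar i) dmin dmax hdmin (hball i).1 (hball i).2 hanti
          x c y hx.1 hxc hcy hy.2
        rw [hyc, hcx] at this
        have hpos : 0 < y - x := by linarith
        have := this
        nlinarith [this, hpos]
    refine ⟨convex_Icc _ _, ?_⟩
    intro x hx y hy p r hp hr hpr
    simp only [smul_eq_mul]
    rcases le_total x y with h | h
    · exact key x y hx hy h p r hp hr hpr
    · have := key y x hy hx h r p hr hp (by linarith)
      have hcomm : r * y + p * x = p * x + r * y := by ring
      rw [hcomm] at this
      linarith
  -- sum with weights
  have hsum : ConcaveOn ℝ (Icc A₁ A₂) (fun A => ∑ i, q i * ∫ x in A • Ω i, f x) :=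
    aux_sum_concave (Icc A₁ A₂) (convex_Icc A₁ A₂) Finset.univ
      (fun i A => q i * ∫ x in A • Ω i, f x)
      (fun i _ => (hconc i).smul (hq i))
  have hPefun : Pe = fun A => 1 - ∑ i, q i * ∫ x in A • Ω i, f x := funext hPe
  have h2 : (fun A : ℝ => 1 - ∑ i, q i * ∫ x in A • Ω i, f x)
      = (fun _ : ℝ => (1:ℝ)) - (fun A => ∑ i, q i * ∫ x in A • Ω i, f x) := rfl
  rw [hPefun, h2]
  exact (convexOn_const (1:ℝ) (convex_Icc A₁ A₂)).sub hsum
end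

section
/- Let n ≥ 1, let 0 < σ₁ ≤ σ₂, and let μ be a Borel probability measure on ℝ supported in [σ₁, σ₂]. Let f be the SIRP noise density f(x) = ∫ (2πσ²)^{−n/2} exp(−‖x‖²/(2σ²)) dμ(σ). Suppose Metric.closedBall 0 d_min ⊆ Ω_i ⊆ Metric.closedBall 0 d_max for every i, with 0 < d_min ≤ d_max. Then the symbol error rate as a function of the signal amplitude, P_e(A) = 1 − Σ_{i=1}^{M} q_i ∫_{A • Ω_i} f(x) dx, is convex on {A : A > 0 and A ≥ σ₂·√(n−1)/d_min} and concave on (0, σ₁·√(n−1)/d_max]. -/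
open MeasureTheory Real Set Pointwise


lemma concaveOn_of_antitone_kernel {s : Set ℝ} (hs : Convex ℝ s)
    {κ Φ : ℝ → ℝ}
    (hκ : ∀ a ∈ s, ∀ b ∈ s, a ≤ b → IntervalIntegrable κ volume a b)
    (hmono : ∀ a ∈ s, ∀ b ∈ s, a ≤ b → κ b ≤ κ a)
    (hΦ : ∀ a ∈ s, ∀ b ∈ s, a ≤ b → Φ b - Φ a = ∫ t in a..b, κ t) :
    ConcaveOn ℝ s Φ := by
  have key : ∀ x ∈ s, ∀ y ∈ s, x ≤ y → ∀ lam mu : ℝ, 0 ≤ lam → 0 ≤ mu → lam + mu = 1 →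
      lam * Φ x + mu * Φ y ≤ Φ (lam * x + mu * y) := by
    intro x hx y hy hxy lam mu hlam hmu hs1
    set m := lam * x + mu * y with hm
    have hmx : m - x = mu * (y - x) := by rw [hm]; linear_combination x * hs1
    have hym : y - m = lam * (y - x) := by rw [hm]; linear_combination (-y) * hs1
    have hxm : x ≤ m := by nlinarith [mul_nonneg hmu (sub_nonneg.2 hxy)]
    have hmy : m ≤ y := by nlinarith [mul_nonneg hlam (sub_nonneg.2 hxy)]
    have hms : m ∈ s := hs hx hy hlam hmu hs1
    have e1 : Φ m - Φ x = ∫ t in x..m, κ t := hΦ x hx m hms hxm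
    have e2 : Φ y - Φ m = ∫ t in m..y, κ t := hΦ m hms y hy hmy
    have hsub1 : Icc x m ⊆ s := hs.ordConnected.out hx hms
    have hsub2 : Icc m y ⊆ s := hs.ordConnected.out hms hy
    have lower : (m - x) * κ m ≤ ∫ t in x..m, κ t := by
      have hc : ∫ t in x..m, κ m = (m - x) * κ m := by
        simp [intervalIntegral.integral_const, smul_eq_mul]
      rw [← hc]
      exact intervalIntegral.integral_mono_on hxm intervalIntegrable_const
        (hκ x hx m hms hxm) (fun t ht => hmono t (hsub1 ht) m hms ht.2)
    have upper : ∫ t in m..y, κ t ≤ (y - m) * κ m := by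
      have hc : ∫ t in m..y, κ m = (y - m) * κ m := by
        simp [intervalIntegral.integral_const, smul_eq_mul]
      rw [← hc]
      exact intervalIntegral.integral_mono_on hmy (hκ m hms y hy hmy)
        intervalIntegrable_const (fun t ht => hmono m hms t (hsub2 ht) ht.1)
    have hee : lam * (m - x) = mu * (y - m) := by
      rw [hm]; linear_combination (x * lam + y * mu) * hs1
    have h3 : lam * Φ m + mu * Φ m = Φ m := by linear_combination Φ m * hs1
    have i1 := mul_le_mul_of_nonneg_left lower hlam
    have i2 := mul_le_mul_of_nonneg_left upper hmu
    have i3 : lam * (Φ m - Φ x) = lam * ∫ t in x..m, κ t := by rw [e1]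
    have i4 : mu * (Φ y - Φ m) = mu * ∫ t in m..y, κ t := by rw [e2]
    have hee2 : lam * ((m - x) * κ m) = mu * ((y - m) * κ m) := by
      rw [← mul_assoc, ← mul_assoc, hee]
    linarith [i1, i2, i3, i4, hee2, h3]
  refine ⟨hs, fun x hx y hy lam mu hlam hmu hs1 => ?_⟩
  rcases le_total x y with h | h
  · simpa [smul_eq_mul] using key x hx y hy h lam mu hlam hmu hs1
  · have := key y hy x hx h mu lam hmu hlam (by linarith)
    simp only [smul_eq_mul]
    calc lam * Φ x + mu * Φ y = mu * Φ y + lam * Φ x := by ring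
    _ ≤ Φ (mu * y + lam * x) := this
    _ = Φ (lam * x + mu * y) := by rw [add_comm]

lemma convexOn_of_monotone_kernel {s : Set ℝ} (hs : Convex ℝ s)
    {κ Φ : ℝ → ℝ}
    (hκ : ∀ a ∈ s, ∀ b ∈ s, a ≤ b → IntervalIntegrable κ volume a b)
    (hmono : ∀ a ∈ s, ∀ b ∈ s, a ≤ b → κ a ≤ κ b)
    (hΦ : ∀ a ∈ s, ∀ b ∈ s, a ≤ b → Φ b - Φ a = ∫ t in a..b, κ t) :
    ConvexOn ℝ s Φ := by
  have h : ConcaveOn ℝ s (fun t => -Φ t) :=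
    concaveOn_of_antitone_kernel hs (κ := fun t => -κ t)
      (fun a ha b hb hab => (hκ a ha b hb hab).neg)
      (fun a ha b hb hab => neg_le_neg (hmono a ha b hb hab))
      (fun a ha b hb hab => by
        rw [intervalIntegral.integral_neg, ← hΦ a ha b hb hab]; ring)
  have h2 : ConvexOn ℝ s (-fun t => -Φ t) := h.neg
  have : (-fun t : ℝ => -Φ t) = Φ := by funext t; simp
  rwa [this] at h2


private lemma exp_form {n : ℕ} (hn : 1 ≤ n) {σ : ℝ} (u : ℝ) (hu : 0 < u) :
    u ^ (n - 1) * Real.exp (-u ^ 2 / (2 * σ ^ 2)) =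
      Real.exp (((n : ℝ) - 1) * Real.log u - u ^ 2 / (2 * σ ^ 2)) := by
  have hc : ((n - 1 : ℕ) : ℝ) = (n : ℝ) - 1 := by
    push_cast [Nat.cast_sub hn]; ring
  rw [← Real.rpow_natCast u (n - 1), hc, Real.rpow_def_of_pos hu, ← Real.exp_add]
  congr 1
  ring

lemma aux_pow_exp_mono {n : ℕ} (hn : 1 ≤ n) {σ s t : ℝ} (hσ : 0 < σ)
    (hs : 0 < s) (hst : s ≤ t) (ht : t ≤ σ * Real.sqrt ((n : ℝ) - 1)) :
    s ^ (n - 1) * Real.exp (-s ^ 2 / (2 * σ ^ 2)) ≤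
      t ^ (n - 1) * Real.exp (-t ^ 2 / (2 * σ ^ 2)) := by
  have ht0 : 0 < t := lt_of_lt_of_le hs hst
  have hc0 : (0 : ℝ) ≤ (n : ℝ) - 1 := by
    have : (1 : ℝ) ≤ (n : ℝ) := by exact_mod_cast hn
    linarith
  have h2σ : (0:ℝ) < 2 * σ ^ 2 := by positivity
  have ht2 : t ^ 2 ≤ σ ^ 2 * ((n : ℝ) - 1) := by
    have h1 : t ^ 2 ≤ (σ * Real.sqrt ((n : ℝ) - 1)) ^ 2 := by
      apply sq_le_sq' _ ht
      nlinarith [Real.sqrt_nonneg ((n:ℝ)-1), hσ.le]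
    calc t ^ 2 ≤ (σ * Real.sqrt ((n:ℝ)-1)) ^ 2 := h1
      _ = σ ^ 2 * ((n:ℝ)-1) := by rw [mul_pow, sq_sqrt hc0]
  have hA : (t - s) / t ≤ Real.log t - Real.log s := by
    have h := Real.log_le_sub_one_of_pos (div_pos hs ht0)
    rw [Real.log_div hs.ne' ht0.ne'] at h
    have : (t - s) / t = 1 - s / t := by field_simp
    linarith
  have hB : (t ^ 2 - s ^ 2) / (2 * σ ^ 2) ≤ ((n:ℝ) - 1) * ((t - s) / t) := by
    have e2 : ((n:ℝ)-1) * ((t-s)/t) = (((n:ℝ)-1) * (t-s)) / t := by ring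
    rw [e2, div_le_div_iff₀ h2σ ht0]
    have hTS : (t + s) * t ≤ 2 * σ ^ 2 * ((n:ℝ) - 1) := by
      nlinarith [mul_le_mul_of_nonneg_right hst ht0.le, ht2]
    have hdiff : 0 ≤ (t - s) * (2 * σ ^ 2 * ((n:ℝ)-1) - (t + s) * t) :=
      mul_nonneg (sub_nonneg.2 hst) (sub_nonneg.2 hTS)
    nlinarith [hdiff]
  have key : (t ^ 2 - s ^ 2) / (2 * σ ^ 2) ≤ ((n:ℝ) - 1) * (Real.log t - Real.log s) :=
    le_trans hB (mul_le_mul_of_nonneg_left hA hc0)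
  rw [exp_form hn s hs, exp_form hn t ht0]
  apply Real.exp_le_exp.2
  have hsplit : (t^2 - s^2)/(2*σ^2) = t^2/(2*σ^2) - s^2/(2*σ^2) := by ring
  linarith

lemma aux_pow_exp_anti {n : ℕ} {σ s t : ℝ} (hσ : 0 < σ)
    (hs : 0 < s) (hst : s ≤ t) (hge : σ * Real.sqrt ((n : ℝ) - 1) ≤ s) :
    t ^ (n - 1) * Real.exp (-t ^ 2 / (2 * σ ^ 2)) ≤
      s ^ (n - 1) * Real.exp (-s ^ 2 / (2 * σ ^ 2)) := by
  have ht0 : 0 < t := lt_of_lt_of_le hs hst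
  have h2σ : (0:ℝ) < 2 * σ ^ 2 := by positivity
  rcases Nat.lt_or_ge n 1 with h0 | hn
  · interval_cases n
    simp only [Nat.zero_sub, pow_zero, one_mul]
    apply Real.exp_le_exp.2
    have hss : s ^ 2 ≤ t ^ 2 := by nlinarith
    have : -t ^ 2 ≤ -s ^ 2 := by linarith
    gcongr
  · have hc0 : (0 : ℝ) ≤ (n : ℝ) - 1 := by
      have : (1 : ℝ) ≤ (n : ℝ) := by exact_mod_cast hn
      linarith
    have hs2 : σ ^ 2 * ((n : ℝ) - 1) ≤ s ^ 2 := by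
      have h1 : (σ * Real.sqrt ((n : ℝ) - 1)) ^ 2 ≤ s ^ 2 := by
        apply sq_le_sq' _ hge
        nlinarith [Real.sqrt_nonneg ((n:ℝ)-1), hσ.le, mul_nonneg hσ.le (Real.sqrt_nonneg ((n:ℝ)-1))]
      calc σ ^ 2 * ((n:ℝ)-1) = (σ * Real.sqrt ((n:ℝ)-1)) ^ 2 := by rw [mul_pow, sq_sqrt hc0]
        _ ≤ s ^ 2 := h1
    have hA : Real.log t - Real.log s ≤ (t - s) / s := by
      have h := Real.log_le_sub_one_of_pos (div_pos ht0 hs)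
      rw [Real.log_div ht0.ne' hs.ne'] at h
      have : (t - s) / s = t / s - 1 := by field_simp
      linarith
    have hB : ((n:ℝ) - 1) * ((t - s) / s) ≤ (t ^ 2 - s ^ 2) / (2 * σ ^ 2) := by
      have e2 : ((n:ℝ)-1) * ((t-s)/s) = (((n:ℝ)-1) * (t-s)) / s := by ring
      rw [e2, div_le_div_iff₀ hs h2σ]
      have hTS : 2 * σ ^ 2 * ((n:ℝ) - 1) ≤ (t + s) * s := by
        nlinarith [mul_le_mul_of_nonneg_left hst hs.le, hs2]
      have hdiff : 0 ≤ (t - s) * ((t + s) * s - 2 * σ ^ 2 * ((n:ℝ)-1)) :=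
        mul_nonneg (sub_nonneg.2 hst) (sub_nonneg.2 hTS)
      nlinarith [hdiff]
    have key : ((n:ℝ) - 1) * (Real.log t - Real.log s) ≤ (t ^ 2 - s ^ 2) / (2 * σ ^ 2) :=
      le_trans (mul_le_mul_of_nonneg_left hA hc0) hB
    rw [exp_form hn s hs, exp_form hn t ht0]
    apply Real.exp_le_exp.2
    have hsplit : (t^2 - s^2)/(2*σ^2) = t^2/(2*σ^2) - s^2/(2*σ^2) := by ring
    linarith


section
variable {n : ℕ} {σ₁ σ₂ : ℝ} {μ : Measure ℝ} [IsProbabilityMeasure μ]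

lemma J_meas (n : ℕ) (t : ℝ) :
    Measurable (fun σ : ℝ => (2 * π * σ ^ 2) ^ (-(n : ℝ) / 2) * Real.exp (-t ^ 2 / (2 * σ ^ 2))) := by
  fun_prop

lemma ae_Icc (hsupp : μ (Icc σ₁ σ₂)ᶜ = 0) : ∀ᵐ σ ∂μ, σ ∈ Icc σ₁ σ₂ := by
  rw [MeasureTheory.ae_iff]
  exact hsupp

lemma J_bound (hσ₁ : 0 < σ₁) {σ : ℝ} (hσ : σ ∈ Icc σ₁ σ₂) (t : ℝ) :
    ‖(2 * π * σ ^ 2) ^ (-(n : ℝ) / 2) * Real.exp (-t ^ 2 / (2 * σ ^ 2))‖ ≤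
      (2 * π * σ₁ ^ 2) ^ (-(n : ℝ) / 2) := by
  have hσ0 : 0 < σ := lt_of_lt_of_le hσ₁ hσ.1
  have hb1 : (0:ℝ) < 2 * π * σ₁ ^ 2 := by positivity
  have hb2 : 2 * π * σ₁ ^ 2 ≤ 2 * π * σ ^ 2 :=
    mul_le_mul_of_nonneg_left (pow_le_pow_left₀ hσ₁.le hσ.1 2) (by positivity)
  have hpow : (2 * π * σ ^ 2) ^ (-(n : ℝ) / 2) ≤ (2 * π * σ₁ ^ 2) ^ (-(n : ℝ) / 2) :=
    Real.rpow_le_rpow_of_nonpos hb1 hb2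
      (by have : (0:ℝ) ≤ (n:ℝ) := n.cast_nonneg; linarith)
  have hexp : Real.exp (-t ^ 2 / (2 * σ ^ 2)) ≤ 1 :=
    Real.exp_le_one_iff.2
      (div_nonpos_of_nonpos_of_nonneg (neg_nonpos.2 (sq_nonneg t)) (by positivity))
  have h0 : (0:ℝ) ≤ (2 * π * σ ^ 2) ^ (-(n : ℝ) / 2) := Real.rpow_nonneg (by positivity) _
  rw [norm_mul, Real.norm_eq_abs, Real.norm_eq_abs, abs_of_nonneg h0,
    abs_of_nonneg (Real.exp_pos _).le]
  calc (2 * π * σ ^ 2) ^ (-(n : ℝ) / 2) * Real.exp (-t ^ 2 / (2 * σ ^ 2))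
      ≤ (2 * π * σ ^ 2) ^ (-(n : ℝ) / 2) * 1 := by
        exact mul_le_mul_of_nonneg_left hexp h0
    _ = (2 * π * σ ^ 2) ^ (-(n : ℝ) / 2) := mul_one _
    _ ≤ _ := hpow

lemma J_integrable (hσ₁ : 0 < σ₁) (hsupp : μ (Icc σ₁ σ₂)ᶜ = 0) (t : ℝ) :
    Integrable (fun σ : ℝ =>
      (2 * π * σ ^ 2) ^ (-(n : ℝ) / 2) * Real.exp (-t ^ 2 / (2 * σ ^ 2))) μ := by
  refine Integrable.mono' (integrable_const ((2 * π * σ₁ ^ 2) ^ (-(n : ℝ) / 2)))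
    (J_meas n t).aestronglyMeasurable ?_
  filter_upwards [ae_Icc hsupp] with σ hσ
  exact J_bound hσ₁ hσ t

/-- Continuity of the SIRP radial profile. -/
lemma F_continuous (hσ₁ : 0 < σ₁) (hsupp : μ (Icc σ₁ σ₂)ᶜ = 0) :
    Continuous (fun t : ℝ => ∫ σ,
      (2 * π * σ ^ 2) ^ (-(n : ℝ) / 2) * Real.exp (-t ^ 2 / (2 * σ ^ 2)) ∂μ) := by
  refine continuous_of_dominated (fun t => (J_meas n t).aestronglyMeasurable)
    (fun t => ?_) (integrable_const ((2 * π * σ₁ ^ 2) ^ (-(n : ℝ) / 2))) ?_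
  · filter_upwards [ae_Icc hsupp] with σ hσ
    exact J_bound hσ₁ hσ t
  · refine Filter.Eventually.of_forall (fun σ => ?_)
    have : Continuous fun t : ℝ => -t ^ 2 / (2 * σ ^ 2) :=
      Continuous.div_const (continuous_pow 2).neg _
    exact continuous_const.mul this.rexp

/-- Monotonicity of `t ↦ t^(n-1) F t` below `σ₁ √(n-1)`. -/
lemma k_monotone (hn : 1 ≤ n) (hσ₁ : 0 < σ₁) (hsupp : μ (Icc σ₁ σ₂)ᶜ = 0)
    {s t : ℝ} (hs : 0 < s) (hst : s ≤ t) (ht : t ≤ σ₁ * Real.sqrt ((n : ℝ) - 1)) :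
    s ^ (n - 1) * ∫ σ, (2 * π * σ ^ 2) ^ (-(n : ℝ) / 2) * Real.exp (-s ^ 2 / (2 * σ ^ 2)) ∂μ ≤
    t ^ (n - 1) * ∫ σ, (2 * π * σ ^ 2) ^ (-(n : ℝ) / 2) * Real.exp (-t ^ 2 / (2 * σ ^ 2)) ∂μ := by
  rw [← integral_const_mul, ← integral_const_mul]
  refine integral_mono_ae (((J_integrable hσ₁ hsupp s).const_mul _))
    (((J_integrable hσ₁ hsupp t).const_mul _)) ?_
  filter_upwards [ae_Icc hsupp] with σ hσ
  have hσ0 : 0 < σ := lt_of_lt_of_le hσ₁ hσ.1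
  have hc : (0:ℝ) ≤ (2 * π * σ ^ 2) ^ (-(n : ℝ) / 2) := Real.rpow_nonneg (by positivity) _
  have ht' : t ≤ σ * Real.sqrt ((n : ℝ) - 1) := by
    calc t ≤ σ₁ * Real.sqrt ((n : ℝ) - 1) := ht
      _ ≤ σ * Real.sqrt ((n : ℝ) - 1) :=
        mul_le_mul_of_nonneg_right hσ.1 (Real.sqrt_nonneg _)
  have key := aux_pow_exp_mono hn hσ0 hs hst ht'
  calc s ^ (n-1) * ((2 * π * σ ^ 2) ^ (-(n : ℝ) / 2) * Real.exp (-s ^ 2 / (2 * σ ^ 2)))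
      = (2 * π * σ ^ 2) ^ (-(n : ℝ) / 2) * (s ^ (n-1) * Real.exp (-s ^ 2 / (2 * σ ^ 2))) := by ring
    _ ≤ (2 * π * σ ^ 2) ^ (-(n : ℝ) / 2) * (t ^ (n-1) * Real.exp (-t ^ 2 / (2 * σ ^ 2))) :=
        mul_le_mul_of_nonneg_left key hc
    _ = t ^ (n-1) * ((2 * π * σ ^ 2) ^ (-(n : ℝ) / 2) * Real.exp (-t ^ 2 / (2 * σ ^ 2))) := by ring

/-- Antitonicity of `t ↦ t^(n-1) F t` above `σ₂ √(n-1)`. -/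
lemma k_antitone (hσ₁ : 0 < σ₁) (hsupp : μ (Icc σ₁ σ₂)ᶜ = 0)
    {s t : ℝ} (hs : 0 < s) (hst : s ≤ t) (hge : σ₂ * Real.sqrt ((n : ℝ) - 1) ≤ s) :
    t ^ (n - 1) * ∫ σ, (2 * π * σ ^ 2) ^ (-(n : ℝ) / 2) * Real.exp (-t ^ 2 / (2 * σ ^ 2)) ∂μ ≤
    s ^ (n - 1) * ∫ σ, (2 * π * σ ^ 2) ^ (-(n : ℝ) / 2) * Real.exp (-s ^ 2 / (2 * σ ^ 2)) ∂μ := by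
  rw [← integral_const_mul, ← integral_const_mul]
  refine integral_mono_ae (((J_integrable hσ₁ hsupp t).const_mul _))
    (((J_integrable hσ₁ hsupp s).const_mul _)) ?_
  filter_upwards [ae_Icc hsupp] with σ hσ
  have hσ0 : 0 < σ := lt_of_lt_of_le hσ₁ hσ.1
  have hc : (0:ℝ) ≤ (2 * π * σ ^ 2) ^ (-(n : ℝ) / 2) := Real.rpow_nonneg (by positivity) _
  have hge' : σ * Real.sqrt ((n : ℝ) - 1) ≤ s := by
    calc σ * Real.sqrt ((n : ℝ) - 1) ≤ σ₂ * Real.sqrt ((n : ℝ) - 1) :=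
        mul_le_mul_of_nonneg_right hσ.2 (Real.sqrt_nonneg _)
      _ ≤ s := hge
  have key := aux_pow_exp_anti hσ0 hs hst hge'
  calc t ^ (n-1) * ((2 * π * σ ^ 2) ^ (-(n : ℝ) / 2) * Real.exp (-t ^ 2 / (2 * σ ^ 2)))
      = (2 * π * σ ^ 2) ^ (-(n : ℝ) / 2) * (t ^ (n-1) * Real.exp (-t ^ 2 / (2 * σ ^ 2))) := by ring
    _ ≤ (2 * π * σ ^ 2) ^ (-(n : ℝ) / 2) * (s ^ (n-1) * Real.exp (-s ^ 2 / (2 * σ ^ 2))) :=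
        mul_le_mul_of_nonneg_left key hc
    _ = s ^ (n-1) * ((2 * π * σ ^ 2) ^ (-(n : ℝ) / 2) * Real.exp (-s ^ 2 / (2 * σ ^ 2))) := by ring

end

lemma concaveOn_congr' {s : Set ℝ} {f g : ℝ → ℝ} (h : ∀ x ∈ s, f x = g x)
    (hg : ConcaveOn ℝ s g) : ConcaveOn ℝ s f :=
  ⟨hg.1, fun x hx y hy a b ha hb hab => by
    rw [h _ hx, h _ hy, h _ (hg.1 hx hy ha hb hab)]
    exact hg.2 hx hy ha hb hab⟩

lemma convexOn_congr' {s : Set ℝ} {f g : ℝ → ℝ} (h : ∀ x ∈ s, f x = g x)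
    (hg : ConvexOn ℝ s g) : ConvexOn ℝ s f :=
  ⟨hg.1, fun x hx y hy a b ha hb hab => by
    rw [h _ hx, h _ hy, h _ (hg.1 hx hy ha hb hab)]
    exact hg.2 hx hy ha hb hab⟩

lemma concaveOn_finset_sum {ι : Type*} {s : Set ℝ} (hs : Convex ℝ s) (t : Finset ι)
    {f : ι → ℝ → ℝ} (hf : ∀ i ∈ t, ConcaveOn ℝ s (f i)) :
    ConcaveOn ℝ s (fun x => ∑ i ∈ t, f i x) := by
  have h := Finset.sum_induction f (fun g => ConcaveOn ℝ s g)
    (fun a b ha hb => ha.add hb) (by exact concaveOn_const (0:ℝ) hs)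
    (fun i hi => hf i hi)
  rw [show (fun x => ∑ i ∈ t, f i x) = ∑ i ∈ t, f i from
    funext fun x => (Finset.sum_apply x t f).symm]
  exact h

lemma convexOn_finset_sum {ι : Type*} {s : Set ℝ} (hs : Convex ℝ s) (t : Finset ι)
    {f : ι → ℝ → ℝ} (hf : ∀ i ∈ t, ConvexOn ℝ s (f i)) :
    ConvexOn ℝ s (fun x => ∑ i ∈ t, f i x) := by
  have h := Finset.sum_induction f (fun g => ConvexOn ℝ s g)
    (fun a b ha hb => ha.add hb) (by exact convexOn_const (0:ℝ) hs)
    (fun i hi => hf i hi)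
  rw [show (fun x => ∑ i ∈ t, f i x) = ∑ i ∈ t, f i from
    funext fun x => (Finset.sum_apply x t f).symm]
  exact h


section phi
variable {S : Type*} [MeasurableSpace S]

lemma integral_phi_concave (τ : Measure S) [IsFiniteMeasure τ]
    {R : S → ℝ} (hRm : Measurable R)
    {dmin dmax : ℝ} (hdmin : 0 < dmin) (hdd : dmin ≤ dmax)
    (hR1 : ∀ θ, dmin ≤ R θ) (hR2 : ∀ θ, R θ ≤ dmax)
    {k : ℝ → ℝ} (hkc : Continuous k) (hk0 : ∀ t, 0 ≤ t → 0 ≤ k t)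
    {c : ℝ} (hc : 0 ≤ c)
    (hanti : ∀ s t : ℝ, 0 < s → s ≤ t → c ≤ s → k t ≤ k s) :
    ConcaveOn ℝ {A : ℝ | 0 < A ∧ c / dmin ≤ A}
      (fun A => ∫ θ, (∫ u in (0:ℝ)..(A * R θ), k u) ∂τ) := by
  set Φ : ℝ → ℝ := fun u => ∫ t in (0:ℝ)..u, k t with hΦdef
  have hΦc : Continuous Φ :=
    intervalIntegral.continuous_primitive (fun a b => hkc.intervalIntegrable a b) 0
  have hΦsub : ∀ u v : ℝ, Φ v - Φ u = ∫ t in u..v, k t := fun u v =>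
    intervalIntegral.integral_interval_sub_left (hkc.intervalIntegrable 0 v)
      (hkc.intervalIntegrable 0 u)
  have hΦ0 : ∀ u, 0 ≤ u → 0 ≤ Φ u := fun u hu =>
    intervalIntegral.integral_nonneg hu (fun t ht => hk0 t ht.1)
  have hΦmono : ∀ u v, 0 ≤ u → u ≤ v → Φ u ≤ Φ v := by
    intro u v hu huv
    have h := hΦsub u v
    have h2 : 0 ≤ ∫ t in u..v, k t :=
      intervalIntegral.integral_nonneg huv (fun t ht => hk0 t (le_trans hu ht.1))
    linarith
  have hconv : Convex ℝ {A : ℝ | 0 < A ∧ c / dmin ≤ A} :=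
    (convex_Ioi (0:ℝ)).inter (convex_Ici (c / dmin))
  -- integrability for each A > 0
  have hint : ∀ A : ℝ, 0 < A → Integrable (fun θ => Φ (A * R θ)) τ := by
    intro A hA
    refine Integrable.mono' (integrable_const (Φ (A * dmax)))
      ((hΦc.measurable.comp (measurable_const.mul hRm)).aestronglyMeasurable)
      (Filter.Eventually.of_forall fun θ => ?_)
    have h1 : 0 ≤ A * R θ := le_of_lt (mul_pos hA (lt_of_lt_of_le hdmin (hR1 θ)))
    rw [Real.norm_eq_abs, abs_of_nonneg (hΦ0 _ h1)]
    exact hΦmono _ _ h1 (mul_le_mul_of_nonneg_left (hR2 θ) hA.le)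
  -- per-direction concavity
  have percave : ∀ θ, ConcaveOn ℝ {A : ℝ | 0 < A ∧ c / dmin ≤ A}
      (fun A => Φ (A * R θ)) := by
    intro θ
    have hR0 : 0 < R θ := lt_of_lt_of_le hdmin (hR1 θ)
    refine concaveOn_of_antitone_kernel hconv
      (κ := fun t => R θ * k (t * R θ)) (fun a ha b hb hab =>
        (continuous_const.mul (hkc.comp (continuous_id.mul continuous_const))).intervalIntegrable a b)
      ?_ ?_
    · rintro a ⟨ha0, hac⟩ b hb hab
      refine mul_le_mul_of_nonneg_left ?_ hR0.le
      refine hanti (a * R θ) (b * R θ) (mul_pos ha0 hR0)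
        (mul_le_mul_of_nonneg_right hab hR0.le) ?_
      calc c = (c / dmin) * dmin := by field_simp
        _ ≤ a * R θ := mul_le_mul hac (hR1 θ) hdmin.le ha0.le
    · rintro a ⟨ha0, hac⟩ b hb hab
      have e1 : Φ (b * R θ) - Φ (a * R θ) = ∫ t in (a * R θ)..(b * R θ), k t := hΦsub _ _
      have e2 : ∫ t in a..b, R θ * k (t * R θ) = ∫ t in (a * R θ)..(b * R θ), k t := by
        rw [intervalIntegral.integral_const_mul, intervalIntegral.integral_comp_mul_right k hR0.ne']
        rw [smul_eq_mul, ← mul_assoc, mul_inv_cancel₀ hR0.ne', one_mul]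
      rw [e2, ← e1]
  refine ⟨hconv, fun x hx y hy a b ha hb hab => ?_⟩
  simp only [smul_eq_mul]
  have hm : a * x + b * y ∈ {A : ℝ | 0 < A ∧ c / dmin ≤ A} := by
    have := hconv hx hy ha hb hab
    simpa [smul_eq_mul] using this
  calc a * (∫ θ, Φ (x * R θ) ∂τ) + b * (∫ θ, Φ (y * R θ) ∂τ)
      = ∫ θ, (a * Φ (x * R θ) + b * Φ (y * R θ)) ∂τ := by
        rw [integral_add ((hint x hx.1).const_mul a) ((hint y hy.1).const_mul b),
          integral_const_mul, integral_const_mul]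
    _ ≤ ∫ θ, Φ ((a * x + b * y) * R θ) ∂τ := by
        refine integral_mono (((hint x hx.1).const_mul a).add ((hint y hy.1).const_mul b))
          (hint _ hm.1) (fun θ => ?_)
        have := (percave θ).2 hx hy ha hb hab
        simpa [smul_eq_mul] using this
    _ = _ := rfl

lemma integral_phi_convex (τ : Measure S) [IsFiniteMeasure τ]
    {R : S → ℝ} (hRm : Measurable R)
    {dmin dmax : ℝ} (hdmin : 0 < dmin) (hdd : dmin ≤ dmax)
    (hR1 : ∀ θ, dmin ≤ R θ) (hR2 : ∀ θ, R θ ≤ dmax)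
    {k : ℝ → ℝ} (hkc : Continuous k) (hk0 : ∀ t, 0 ≤ t → 0 ≤ k t)
    {c : ℝ} (hc : 0 ≤ c)
    (hmono : ∀ s t : ℝ, 0 < s → s ≤ t → t ≤ c → k s ≤ k t) :
    ConvexOn ℝ (Ioc (0:ℝ) (c / dmax))
      (fun A => ∫ θ, (∫ u in (0:ℝ)..(A * R θ), k u) ∂τ) := by
  have hdmax : 0 < dmax := lt_of_lt_of_le hdmin hdd
  set Φ : ℝ → ℝ := fun u => ∫ t in (0:ℝ)..u, k t with hΦdef
  have hΦc : Continuous Φ :=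
    intervalIntegral.continuous_primitive (fun a b => hkc.intervalIntegrable a b) 0
  have hΦsub : ∀ u v : ℝ, Φ v - Φ u = ∫ t in u..v, k t := fun u v =>
    intervalIntegral.integral_interval_sub_left (hkc.intervalIntegrable 0 v)
      (hkc.intervalIntegrable 0 u)
  have hΦ0 : ∀ u, 0 ≤ u → 0 ≤ Φ u := fun u hu =>
    intervalIntegral.integral_nonneg hu (fun t ht => hk0 t ht.1)
  have hΦmono : ∀ u v, 0 ≤ u → u ≤ v → Φ u ≤ Φ v := by
    intro u v hu huv
    have h := hΦsub u v
    have h2 : 0 ≤ ∫ t in u..v, k t :=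
      intervalIntegral.integral_nonneg huv (fun t ht => hk0 t (le_trans hu ht.1))
    linarith
  have hconv : Convex ℝ (Ioc (0:ℝ) (c / dmax)) := convex_Ioc _ _
  have hint : ∀ A : ℝ, 0 < A → Integrable (fun θ => Φ (A * R θ)) τ := by
    intro A hA
    refine Integrable.mono' (integrable_const (Φ (A * dmax)))
      ((hΦc.measurable.comp (measurable_const.mul hRm)).aestronglyMeasurable)
      (Filter.Eventually.of_forall fun θ => ?_)
    have h1 : 0 ≤ A * R θ := le_of_lt (mul_pos hA (lt_of_lt_of_le hdmin (hR1 θ)))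
    rw [Real.norm_eq_abs, abs_of_nonneg (hΦ0 _ h1)]
    exact hΦmono _ _ h1 (mul_le_mul_of_nonneg_left (hR2 θ) hA.le)
  have pervex : ∀ θ, ConvexOn ℝ (Ioc (0:ℝ) (c / dmax)) (fun A => Φ (A * R θ)) := by
    intro θ
    have hR0 : 0 < R θ := lt_of_lt_of_le hdmin (hR1 θ)
    refine convexOn_of_monotone_kernel hconv
      (κ := fun t => R θ * k (t * R θ)) (fun a ha b hb hab =>
        (continuous_const.mul (hkc.comp (continuous_id.mul continuous_const))).intervalIntegrable a b)
      ?_ ?_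
    · rintro a ⟨ha0, hac⟩ b ⟨hb0, hbc⟩ hab
      refine mul_le_mul_of_nonneg_left ?_ hR0.le
      refine hmono (a * R θ) (b * R θ) (mul_pos ha0 hR0)
        (mul_le_mul_of_nonneg_right hab hR0.le) ?_
      calc b * R θ ≤ (c / dmax) * dmax :=
            mul_le_mul hbc (hR2 θ) hR0.le (by positivity)
        _ = c := by field_simp
    · rintro a ⟨ha0, hac⟩ b hb hab
      have e1 : Φ (b * R θ) - Φ (a * R θ) = ∫ t in (a * R θ)..(b * R θ), k t := hΦsub _ _
      have e2 : ∫ t in a..b, R θ * k (t * R θ) = ∫ t in (a * R θ)..(b * R θ), k t := by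
        rw [intervalIntegral.integral_const_mul, intervalIntegral.integral_comp_mul_right k hR0.ne']
        rw [smul_eq_mul, ← mul_assoc, mul_inv_cancel₀ hR0.ne', one_mul]
      rw [e2, ← e1]
  refine ⟨hconv, fun x hx y hy a b ha hb hab => ?_⟩
  simp only [smul_eq_mul]
  have hm : a * x + b * y ∈ Ioc (0:ℝ) (c / dmax) := by
    have := hconv hx hy ha hb hab
    simpa [smul_eq_mul] using this
  calc (∫ θ, Φ ((a * x + b * y) * R θ) ∂τ)
      ≤ ∫ θ, (a * Φ (x * R θ) + b * Φ (y * R θ)) ∂τ := by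
        refine integral_mono (hint _ hm.1)
          (((hint x hx.1).const_mul a).add ((hint y hy.1).const_mul b)) (fun θ => ?_)
        have := (pervex θ).2 hx hy ha hb hab
        simpa [smul_eq_mul] using this
    _ = a * (∫ θ, Φ (x * R θ) ∂τ) + b * (∫ θ, Φ (y * R θ) ∂τ) := by
        rw [integral_add ((hint x hx.1).const_mul a) ((hint y hy.1).const_mul b),
          integral_const_mul, integral_const_mul]

end phi


noncomputable def radialFn {E : Type*} [NormedAddCommGroup E] [NormedSpace ℝ E]
    (Ω : Set E) (θ : E) : ℝ := sSup {t : ℝ | 0 < t ∧ t • θ ∈ Ω}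

section radial
variable {E : Type*} [NormedAddCommGroup E] [NormedSpace ℝ E] {Ω : Set E} {dmin dmax : ℝ} {θ : E}

lemma radial_mem_min (hdmin : 0 < dmin) (hb1 : Metric.closedBall (0 : E) dmin ⊆ Ω)
    (hθ : ‖θ‖ = 1) : dmin ∈ {t : ℝ | 0 < t ∧ t • θ ∈ Ω} := by
  refine ⟨hdmin, hb1 ?_⟩
  simp [mem_closedBall_zero_iff, norm_smul, hθ, abs_of_pos hdmin, le_refl]

lemma radial_subset_Ioc (hb2 : Ω ⊆ Metric.closedBall (0 : E) dmax) (hθ : ‖θ‖ = 1) :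
    {t : ℝ | 0 < t ∧ t • θ ∈ Ω} ⊆ Ioc 0 dmax := by
  rintro t ⟨ht0, htΩ⟩
  refine ⟨ht0, ?_⟩
  have := hb2 htΩ
  rw [mem_closedBall_zero_iff, norm_smul, hθ, mul_one, Real.norm_eq_abs,
    abs_of_pos ht0] at this
  exact this

lemma radial_bddAbove (hb2 : Ω ⊆ Metric.closedBall (0 : E) dmax) (hθ : ‖θ‖ = 1) :
    BddAbove {t : ℝ | 0 < t ∧ t • θ ∈ Ω} :=
  ⟨dmax, fun _ ht => (radial_subset_Ioc hb2 hθ ht).2⟩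

lemma radial_ge (hdmin : 0 < dmin) (hb1 : Metric.closedBall (0 : E) dmin ⊆ Ω)
    (hb2 : Ω ⊆ Metric.closedBall (0 : E) dmax) (hθ : ‖θ‖ = 1) : dmin ≤ radialFn Ω θ :=
  le_csSup (radial_bddAbove hb2 hθ) (radial_mem_min hdmin hb1 hθ)

lemma radial_le (hdmin : 0 < dmin) (hb1 : Metric.closedBall (0 : E) dmin ⊆ Ω)
    (hb2 : Ω ⊆ Metric.closedBall (0 : E) dmax) (hθ : ‖θ‖ = 1) : radialFn Ω θ ≤ dmax :=
  csSup_le ⟨dmin, radial_mem_min hdmin hb1 hθ⟩ (fun _ ht => (radial_subset_Ioc hb2 hθ ht).2)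

lemma radial_downward (hstar : StarConvex ℝ (0 : E) Ω) {s t : ℝ} (hs : 0 < s) (hst : s ≤ t)
    (ht : t ∈ {t : ℝ | 0 < t ∧ t • θ ∈ Ω}) : s ∈ {t : ℝ | 0 < t ∧ t • θ ∈ Ω} := by
  refine ⟨hs, ?_⟩
  have ht0 : (0:ℝ) < t := ht.1
  have hrw : s • θ = (s / t) • (t • θ) := by
    rw [smul_smul, div_mul_cancel₀ _ ht0.ne']
  rw [hrw]
  exact hstar.smul_mem ht.2 (by positivity) (by rw [div_le_one ht0]; exact hst)

lemma radial_Ioo_subset (hdmin : 0 < dmin) (hstar : StarConvex ℝ (0 : E) Ω)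
    (hb1 : Metric.closedBall (0 : E) dmin ⊆ Ω) (hθ : ‖θ‖ = 1) :
    Ioo 0 (radialFn Ω θ) ⊆ {t : ℝ | 0 < t ∧ t • θ ∈ Ω} := by
  rintro t ⟨ht0, htR⟩
  obtain ⟨u, hu, htu⟩ := exists_lt_of_lt_csSup ⟨dmin, radial_mem_min hdmin hb1 hθ⟩ htR
  exact radial_downward hstar ht0 htu.le hu

lemma radial_subset_Ioc' (hb2 : Ω ⊆ Metric.closedBall (0 : E) dmax) (hθ : ‖θ‖ = 1) :
    {t : ℝ | 0 < t ∧ t • θ ∈ Ω} ⊆ Ioc 0 (radialFn Ω θ) :=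
  fun _ ht => ⟨ht.1, le_csSup (radial_bddAbove hb2 hθ) ht⟩

end radial

section radialMeas
variable {n : ℕ} {Ω : Set (EuclideanSpace ℝ (Fin n))} {dmin dmax : ℝ}

lemma radial_measurable (hΩ : MeasurableSet Ω) (hdmin : 0 < dmin)
    (hstar : StarConvex ℝ (0 : EuclideanSpace ℝ (Fin n)) Ω)
    (hb1 : Metric.closedBall (0 : EuclideanSpace ℝ (Fin n)) dmin ⊆ Ω)
    (hb2 : Ω ⊆ Metric.closedBall (0 : EuclideanSpace ℝ (Fin n)) dmax) :
    Measurable fun θ : Metric.sphere (0 : EuclideanSpace ℝ (Fin n)) 1 =>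
      radialFn Ω (θ : EuclideanSpace ℝ (Fin n)) := by
  apply measurable_of_Ioi
  intro c
  have hset : (fun θ : Metric.sphere (0 : EuclideanSpace ℝ (Fin n)) 1 =>
      radialFn Ω (θ : EuclideanSpace ℝ (Fin n))) ⁻¹' Ioi c =
      ⋃ q : ℚ, {θ : Metric.sphere (0 : EuclideanSpace ℝ (Fin n)) 1 |
        c < (q:ℝ) ∧ 0 < (q:ℝ) ∧ (q:ℝ) • (θ : EuclideanSpace ℝ (Fin n)) ∈ Ω} := by
    ext θ
    have hθ : ‖(θ : EuclideanSpace ℝ (Fin n))‖ = 1 := mem_sphere_zero_iff_norm.1 θ.2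
    simp only [mem_preimage, mem_Ioi, mem_iUnion, mem_setOf_eq]
    constructor
    · intro hc
      obtain ⟨u, hu, hcu⟩ := exists_lt_of_lt_csSup ⟨dmin, radial_mem_min hdmin hb1 hθ⟩ hc
      have hu0 : 0 < u := hu.1
      obtain ⟨q, hq1, hq2⟩ := exists_rat_btwn (show max c 0 < u from max_lt hcu hu0)
      have hq0 : 0 < (q:ℝ) := lt_of_le_of_lt (le_max_right _ _) hq1
      refine ⟨q, lt_of_le_of_lt (le_max_left _ _) hq1, hq0,
        (radial_downward hstar hq0 hq2.le hu).2⟩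
    · rintro ⟨q, hcq, hq0, hqΩ⟩
      exact lt_of_lt_of_le hcq (le_csSup (radial_bddAbove hb2 hθ) ⟨hq0, hqΩ⟩)
  rw [hset]
  apply MeasurableSet.iUnion
  intro q
  by_cases hq : c < (q:ℝ) ∧ 0 < (q:ℝ)
  · have heq : {θ : Metric.sphere (0 : EuclideanSpace ℝ (Fin n)) 1 |
        c < (q:ℝ) ∧ 0 < (q:ℝ) ∧ (q:ℝ) • (θ : EuclideanSpace ℝ (Fin n)) ∈ Ω} =
        (fun θ : Metric.sphere (0 : EuclideanSpace ℝ (Fin n)) 1 =>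
          (q:ℝ) • (θ : EuclideanSpace ℝ (Fin n))) ⁻¹' Ω := by
      ext θ; simp [hq.1, hq.2]
    rw [heq]
    exact ((continuous_const : Continuous fun _ : Metric.sphere (0 : EuclideanSpace ℝ (Fin n)) 1 => (q:ℝ)).smul continuous_subtype_val).measurable hΩ
  · have heq : {θ : Metric.sphere (0 : EuclideanSpace ℝ (Fin n)) 1 |
        c < (q:ℝ) ∧ 0 < (q:ℝ) ∧ (q:ℝ) • (θ : EuclideanSpace ℝ (Fin n)) ∈ Ω} = ∅ := by
      ext θ; simp only [mem_setOf_eq, mem_empty_iff_false, iff_false]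
      intro h; exact hq ⟨h.1, h.2.1⟩
    rw [heq]; exact MeasurableSet.empty

end radialMeas


section polar
variable {n : ℕ}
local notation "E" => EuclideanSpace ℝ (Fin n)

lemma polar_repr (hn : 1 ≤ n)
    {Ω : Set (EuclideanSpace ℝ (Fin n))} (hΩ : MeasurableSet Ω)
    {dmin dmax : ℝ} (hdmin : 0 < dmin) (hdd : dmin ≤ dmax)
    (hstar : StarConvex ℝ (0 : E) Ω)
    (hb1 : Metric.closedBall (0 : E) dmin ⊆ Ω) (hb2 : Ω ⊆ Metric.closedBall (0 : E) dmax)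
    {F : ℝ → ℝ} (hFc : Continuous F) (hF0 : ∀ t, 0 ≤ F t)
    {C : ℝ} (hFb : ∀ t, F t ≤ C)
    {A : ℝ} (hA : 0 < A) :
    ∫ x in A • Ω, F ‖x‖ = ∫ θ : Metric.sphere (0 : E) 1,
      (∫ t in (0:ℝ)..(A * radialFn Ω (θ : E)), t ^ (n - 1) * F t)
        ∂((volume : Measure (EuclideanSpace ℝ (Fin n))).toSphere) := by
  have hnontriv : Nontrivial E := by
    have : 0 < Module.finrank ℝ E := by rw [finrank_euclideanSpace_fin]; omega
    exact Module.nontrivial_of_finrank_pos this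
  have hdmax : 0 < dmax := lt_of_lt_of_le hdmin hdd
  have hC0 : 0 ≤ C := le_trans (hF0 0) (hFb 0)
  set g : E → ℝ := Set.indicator (A • Ω) (fun x => F ‖x‖) with hg
  have hAΩm : MeasurableSet (A • Ω) := hΩ.const_smul₀ A
  have hgm : Measurable g := (hFc.measurable.comp measurable_norm).indicator hAΩm
  -- bound on the support of g
  have hsupp : ∀ x : E, A * dmax < ‖x‖ → g x = 0 := by
    intro x hx
    apply Set.indicator_of_notMem
    intro hmem
    obtain ⟨y, hy, rfl⟩ := hmem
    have : ‖A • y‖ ≤ A * dmax := by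
      rw [norm_smul, Real.norm_eq_abs, abs_of_pos hA]
      exact mul_le_mul_of_nonneg_left (mem_closedBall_zero_iff.1 (hb2 hy)) hA.le
    linarith
  have hgb : ∀ x : E, ‖g x‖ ≤ C := by
    intro x
    rw [hg, Real.norm_eq_abs]
    rcases Set.indicator_eq_zero_or_self (A • Ω) (fun x => F ‖x‖) x with h | h <;> rw [h]
    · simpa using hC0
    · rw [abs_of_nonneg (hF0 _)]; exact hFb _
  -- step 1 : to the whole-space integral
  have step1 : ∫ x in A • Ω, F ‖x‖ = ∫ x, g x := (integral_indicator hAΩm).symm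
  -- step 2 : to the punctured space
  have step2 : ∫ x, g x = ∫ x : ({(0:E)}ᶜ : Set E), g x ∂(volume.comap Subtype.val) := by
    rw [integral_subtype_comap (measurableSet_singleton _).compl fun x => g x,
      restrict_compl_singleton]
  -- step 3 : polar coordinates
  have hmp := (volume : Measure E).measurePreserving_homeomorphUnitSphereProd
  rw [finrank_euclideanSpace_fin] at hmp
  have step3 : ∫ x : ({(0:E)}ᶜ : Set E), g x ∂(volume.comap Subtype.val) =
      ∫ p : Metric.sphere (0:E) 1 × Ioi (0:ℝ), g ((p.2 : ℝ) • (p.1 : E))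
        ∂((volume : Measure E).toSphere.prod (Measure.volumeIoiPow (n - 1))) := by
    rw [← hmp.integral_comp (Homeomorph.measurableEmbedding _)
      (fun p : Metric.sphere (0:E) 1 × Ioi (0:ℝ) => g ((p.2 : ℝ) • (p.1 : E)))]
    refine integral_congr_ae (Filter.Eventually.of_forall fun x => ?_)
    exact congrArg g (by simp [smul_smul, mul_inv_cancel₀ (norm_ne_zero_iff.2 x.2)])
  -- integrability over the product
  have hφc : Continuous fun p : Metric.sphere (0:E) 1 × Ioi (0:ℝ) => (p.2 : ℝ) • (p.1 : E) :=
    (continuous_subtype_val.comp continuous_snd).smul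
      (continuous_subtype_val.comp continuous_fst)
  set bfun : Ioi (0:ℝ) → ℝ :=
    Set.indicator {t : Ioi (0:ℝ) | (t : ℝ) ≤ A * dmax} (fun _ => C) with hbfun
  have hTmeas : MeasurableSet {t : Ioi (0:ℝ) | (t : ℝ) ≤ A * dmax} :=
    measurable_subtype_coe measurableSet_Iic
  have hbmeas : Measurable bfun := (measurable_const.indicator hTmeas)
  have hbint : Integrable bfun (Measure.volumeIoiPow (n - 1)) := by
    rw [hbfun, integrable_indicator_iff hTmeas]
    refine integrableOn_const (ne_of_lt ?_)
    calc Measure.volumeIoiPow (n-1) {t : Ioi (0:ℝ) | (t : ℝ) ≤ A * dmax}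
        ≤ Measure.volumeIoiPow (n-1) (Iio ⟨A * dmax + 1,
            by simp only [mem_Ioi]; nlinarith⟩) := by
          apply measure_mono
          intro t ht
          simp only [mem_setOf_eq] at ht
          simp only [mem_Iio, ← Subtype.coe_lt_coe]
          exact lt_of_le_of_lt ht (lt_add_one _)
      _ < ⊤ := by rw [Measure.volumeIoiPow_apply_Iio]; exact ENNReal.ofReal_lt_top
  have hint : Integrable (fun p : Metric.sphere (0:E) 1 × Ioi (0:ℝ) => g ((p.2 : ℝ) • (p.1 : E)))
      ((volume : Measure E).toSphere.prod (Measure.volumeIoiPow (n - 1))) := by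
    have hbint2 : Integrable (fun p : Metric.sphere (0:E) 1 × Ioi (0:ℝ) => bfun p.2)
        ((volume : Measure E).toSphere.prod (Measure.volumeIoiPow (n - 1))) := by
      have hmsnd : Measurable (fun p : Metric.sphere (0:E) 1 × Ioi (0:ℝ) => bfun p.2) :=
        hbmeas.comp measurable_snd
      rw [integrable_prod_iff hmsnd.aestronglyMeasurable]
      have hconst : Integrable (fun _ : Metric.sphere (0:E) 1 =>
          ∫ y : Ioi (0:ℝ), ‖bfun y‖ ∂(Measure.volumeIoiPow (n-1))) volume.toSphere :=
        integrable_const _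
      exact ⟨Filter.Eventually.of_forall fun θ => hbint, by simpa using hconst⟩
    refine Integrable.mono' hbint2 ((hgm.comp hφc.measurable).aestronglyMeasurable)
      (Filter.Eventually.of_forall fun p => ?_)
    have hθ : ‖(p.1 : E)‖ = 1 := mem_sphere_zero_iff_norm.1 p.1.2
    have ht0 : (0:ℝ) < p.2 := p.2.2
    have hnorm : ‖(p.2 : ℝ) • (p.1 : E)‖ = (p.2 : ℝ) := by
      rw [norm_smul, hθ, mul_one, Real.norm_eq_abs, abs_of_pos ht0]
    by_cases hle : (p.2 : ℝ) ≤ A * dmax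
    · have h0 : bfun p.2 = C :=
        Set.indicator_of_mem (show p.2 ∈ {t : Ioi (0:ℝ) | (t : ℝ) ≤ A * dmax} from hle) _
      rw [h0]; exact hgb _
    · have h1 : bfun p.2 = 0 :=
        Set.indicator_of_notMem (show p.2 ∉ {t : Ioi (0:ℝ) | (t : ℝ) ≤ A * dmax} from hle) _
      have h2 : g ((p.2 : ℝ) • (p.1 : E)) = 0 := by
        apply hsupp; rw [hnorm]; exact lt_of_not_ge hle
      rw [h1, h2]; simp
  -- Fubini
  have step4 : ∫ p : Metric.sphere (0:E) 1 × Ioi (0:ℝ), g ((p.2 : ℝ) • (p.1 : E))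
        ∂((volume : Measure E).toSphere.prod (Measure.volumeIoiPow (n - 1))) =
      ∫ θ : Metric.sphere (0:E) 1, (∫ t : Ioi (0:ℝ), g ((t : ℝ) • (θ : E))
        ∂(Measure.volumeIoiPow (n - 1))) ∂((volume : Measure E).toSphere) :=
    integral_prod _ hint
  -- inner integral
  have inner : ∀ θ : Metric.sphere (0:E) 1,
      (∫ t : Ioi (0:ℝ), g ((t : ℝ) • (θ : E)) ∂(Measure.volumeIoiPow (n - 1))) =
      ∫ t in (0:ℝ)..(A * radialFn Ω (θ : E)), t ^ (n - 1) * F t := by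
    intro θ
    have hθ : ‖(θ : E)‖ = 1 := mem_sphere_zero_iff_norm.1 θ.2
    have hR1 : dmin ≤ radialFn Ω (θ : E) := radial_ge hdmin hb1 hb2 hθ
    have hR0 : 0 < radialFn Ω (θ : E) := lt_of_lt_of_le hdmin hR1
    have e1 : (∫ t : Ioi (0:ℝ), g ((t : ℝ) • (θ : E)) ∂(Measure.volumeIoiPow (n - 1))) =
        ∫ t in Ioi (0:ℝ), t ^ (n - 1) * g (t • (θ : E)) := by
      simp only [Measure.volumeIoiPow, ENNReal.ofReal]
      rw [integral_withDensity_eq_integral_smul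
        (f := fun r : Ioi (0:ℝ) => Real.toNNReal ((r : ℝ) ^ (n-1)))
        ((measurable_subtype_coe.pow_const _).real_toNNReal)
        (fun t : Ioi (0:ℝ) => g ((t : ℝ) • (θ : E))),
        integral_subtype_comap measurableSet_Ioi
          (fun a : ℝ => Real.toNNReal (a ^ (n-1)) • g (a • (θ : E)))]
      refine setIntegral_congr_fun measurableSet_Ioi (fun t ht => ?_)
      rw [NNReal.smul_def, Real.coe_toNNReal _ (pow_nonneg (le_of_lt ht) _), smul_eq_mul]
    set W : Set ℝ := {t : ℝ | 0 < t ∧ t • (θ : E) ∈ A • Ω} with hW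
    have e2 : ∫ t in Ioi (0:ℝ), t ^ (n - 1) * g (t • (θ : E)) =
        ∫ t in Ioi (0:ℝ), Set.indicator W (fun t => t ^ (n - 1) * F t) t := by
      refine setIntegral_congr_fun measurableSet_Ioi (fun t ht => ?_)
      have htn : ‖t • (θ : E)‖ = t := by
        rw [norm_smul, hθ, mul_one, Real.norm_eq_abs, abs_of_pos ht]
      by_cases hmem : t • (θ : E) ∈ A • Ω
      · rw [hg]
        rw [Set.indicator_of_mem hmem, Set.indicator_of_mem (show t ∈ W from ⟨ht, hmem⟩) _, htn]
      · rw [hg, Set.indicator_of_notMem hmem,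
          Set.indicator_of_notMem (fun h => hmem h.2) _, mul_zero]
    have hWm : MeasurableSet W := by
      apply measurableSet_Ioi.inter
      exact (continuous_id.smul continuous_const).measurable hAΩm
    have e3 : ∫ t in Ioi (0:ℝ), Set.indicator W (fun t => t ^ (n - 1) * F t) t =
        ∫ t in W, t ^ (n - 1) * F t := by
      rw [setIntegral_indicator hWm]
      congr 1
      rw [Set.inter_eq_right.2 (fun t ht => ht.1)]
    -- W is a.e. equal to Ioo 0 (A * R)
    have hsub1 : Ioo 0 (A * radialFn Ω (θ : E)) ⊆ W := by
      rintro t ⟨ht0, htR⟩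
      have h1 : A⁻¹ * t ∈ Ioo 0 (radialFn Ω (θ : E)) := by
        refine mem_Ioo.2 ⟨mul_pos (inv_pos.2 hA) ht0, ?_⟩
        · have : t / A < radialFn Ω (θ : E) := by
            rw [div_lt_iff₀ hA]; linarith [htR]
          calc A⁻¹ * t = t / A := by ring
            _ < _ := this
      have h2 := radial_Ioo_subset hdmin hstar hb1 hθ h1
      refine ⟨ht0, ?_⟩
      have : t • (θ : E) = A • ((A⁻¹ * t) • (θ : E)) := by
        rw [smul_smul, ← mul_assoc, mul_inv_cancel₀ hA.ne', one_mul]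
      rw [this]
      exact smul_mem_smul_set h2.2
    have hsub2 : W ⊆ Ioc 0 (A * radialFn Ω (θ : E)) := by
      rintro t ⟨ht0, htΩ⟩
      have h1 : (A⁻¹ * t) • (θ : E) ∈ Ω := by
        rw [← smul_smul]
        exact (mem_smul_set_iff_inv_smul_mem₀ hA.ne' _ _).1 htΩ
      have h2 := radial_subset_Ioc' hb2 hθ
        ⟨mul_pos (inv_pos.2 hA) ht0, h1⟩
      refine ⟨ht0, ?_⟩
      calc t = A * (A⁻¹ * t) := by field_simp
        _ ≤ A * radialFn Ω (θ : E) := mul_le_mul_of_nonneg_left h2.2 hA.le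
    have hae : W =ᵐ[volume] Ioo 0 (A * radialFn Ω (θ : E)) := by
      rw [MeasureTheory.ae_eq_set]
      constructor
      · refine measure_mono_null ?_ (measure_singleton (A * radialFn Ω (θ : E)))
        intro t ht
        rcases hsub2 ht.1 with ⟨h1, h2⟩
        rcases eq_or_lt_of_le h2 with h | h
        · exact h
        · exact absurd ⟨h1, h⟩ ht.2
      · exact measure_mono_null (fun t ht => absurd (hsub1 ht.1) ht.2) measure_empty
    have e4 : ∫ t in W, t ^ (n - 1) * F t =
        ∫ t in Ioo 0 (A * radialFn Ω (θ : E)), t ^ (n - 1) * F t :=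
      setIntegral_congr_set hae
    have e5 : ∫ t in (0:ℝ)..(A * radialFn Ω (θ : E)), t ^ (n - 1) * F t =
        ∫ t in Ioo 0 (A * radialFn Ω (θ : E)), t ^ (n - 1) * F t := by
      rw [intervalIntegral.integral_of_le (by positivity), integral_Ioc_eq_integral_Ioo]
    rw [e1, e2, e3, e4, e5]
  rw [step1, step2, step3, step4]
  exact integral_congr_ae (Filter.Eventually.of_forall fun θ => inner θ)

end polar

set_option maxHeartbeats 1000000

/-- Under SIRP noise whose mixing distribution is supported in
`[σ₁, σ₂]`, the SER of a decoder with center-convex decision regions, as a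
function of the signal amplitude `A`, is convex on
`{A | 0 < A ∧ σ₂√(n-1)/d_min ≤ A}` and concave on `(0, σ₁√(n-1)/d_max]`. -/
theorem ser_convexity_in_amplitude_sirp
    (n M : ℕ) (hn : 1 ≤ n)
    (σ₁ σ₂ : ℝ) (hσ₁ : 0 < σ₁) (hσ₁₂ : σ₁ ≤ σ₂)
    (μ : Measure ℝ) [IsProbabilityMeasure μ]
    (hsupp : μ (Icc σ₁ σ₂)ᶜ = 0)
    (f : EuclideanSpace ℝ (Fin n) → ℝ)
    (hf : ∀ x, f x = ∫ σ,
      (2 * π * σ ^ 2) ^ (-(n : ℝ) / 2) * Real.exp (-‖x‖ ^ 2 / (2 * σ ^ 2)) ∂μ)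
    (q : Fin M → ℝ) (hq : ∀ i, 0 ≤ q i) (hqsum : ∑ i, q i = 1)
    (Ω : Fin M → Set (EuclideanSpace ℝ (Fin n)))
    (hΩmeas : ∀ i, MeasurableSet (Ω i))
    (hΩstar : ∀ i, StarConvex ℝ (0 : EuclideanSpace ℝ (Fin n)) (Ω i))
    (dmin dmax : ℝ) (hdmin : 0 < dmin) (hdd : dmin ≤ dmax)
    (hball : ∀ i, Metric.closedBall (0 : EuclideanSpace ℝ (Fin n)) dmin ⊆ Ω i ∧
      Ω i ⊆ Metric.closedBall (0 : EuclideanSpace ℝ (Fin n)) dmax)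
    (Pe : ℝ → ℝ)
    (hPe : ∀ A, Pe A = 1 - ∑ i, q i * ∫ x in A • Ω i, f x) :
    ConvexOn ℝ {A : ℝ | 0 < A ∧ σ₂ * Real.sqrt ((n : ℝ) - 1) / dmin ≤ A} Pe ∧
      ConcaveOn ℝ (Ioc (0 : ℝ) (σ₁ * Real.sqrt ((n : ℝ) - 1) / dmax)) Pe := by
  classical
  set F : ℝ → ℝ := fun t => ∫ σ, (2 * π * σ ^ 2) ^ (-(n : ℝ) / 2) *
    Real.exp (-t ^ 2 / (2 * σ ^ 2)) ∂μ with hFdef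
  have hfF : f = fun x => F ‖x‖ := funext fun x => hf x
  set C : ℝ := (2 * π * σ₁ ^ 2) ^ (-(n : ℝ) / 2) with hCdef
  have hFc : Continuous F := F_continuous hσ₁ hsupp
  have hF0 : ∀ t, 0 ≤ F t := fun t =>
    integral_nonneg fun σ => mul_nonneg (Real.rpow_nonneg (by positivity) _) (Real.exp_pos _).le
  have hFb : ∀ t, F t ≤ C := by
    intro t
    have h1 : F t ≤ ∫ _, C ∂μ := by
      refine integral_mono_ae (J_integrable hσ₁ hsupp t) (integrable_const C) ?_
      filter_upwards [ae_Icc hsupp] with σ hσ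
      exact le_trans (le_abs_self _) (J_bound hσ₁ hσ t)
    have h2 : (∫ _, C ∂μ) = C := by
      rw [integral_const]; simp
    linarith
  set k : ℝ → ℝ := fun t => t ^ (n - 1) * F t with hkdef
  have hkc : Continuous k := (continuous_pow _).mul hFc
  have hk0 : ∀ t, 0 ≤ t → 0 ≤ k t := fun t ht => mul_nonneg (pow_nonneg ht _) (hF0 t)
  set τ := (volume : Measure (EuclideanSpace ℝ (Fin n))).toSphere with hτ
  have hGpolar : ∀ (i : Fin M) (A : ℝ), 0 < A →
      (∫ x in A • Ω i, f x) =
      ∫ θ : Metric.sphere (0 : EuclideanSpace ℝ (Fin n)) 1,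
        (∫ u in (0:ℝ)..(A * radialFn (Ω i) (θ : EuclideanSpace ℝ (Fin n))), k u) ∂τ := by
    intro i A hA
    rw [hfF]
    exact polar_repr hn (hΩmeas i) hdmin hdd (hΩstar i) (hball i).1 (hball i).2 hFc hF0 hFb hA
  -- concavity of the correct-decision probability on the high-SNR region
  have hkey₁ : ∀ i : Fin M,
      ConcaveOn ℝ {A : ℝ | 0 < A ∧ σ₂ * Real.sqrt ((n : ℝ) - 1) / dmin ≤ A}
        (fun A => ∫ x in A • Ω i, f x) := by
    intro i
    have hconc := integral_phi_concave τ
      (radial_measurable (hΩmeas i) hdmin (hΩstar i) (hball i).1 (hball i).2)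
      hdmin hdd
      (fun θ => radial_ge hdmin (hball i).1 (hball i).2 (mem_sphere_zero_iff_norm.1 θ.2))
      (fun θ => radial_le hdmin (hball i).1 (hball i).2 (mem_sphere_zero_iff_norm.1 θ.2))
      hkc hk0 (mul_nonneg (le_trans hσ₁.le hσ₁₂) (Real.sqrt_nonneg _))
      (fun s t hs hst hcs => k_antitone hσ₁ hsupp hs hst hcs)
    exact concaveOn_congr' (fun A hA => hGpolar i A hA.1) hconc
  -- convexity of the correct-decision probability on the low-SNR region
  have hkey₂ : ∀ i : Fin M,
      ConvexOn ℝ (Ioc (0 : ℝ) (σ₁ * Real.sqrt ((n : ℝ) - 1) / dmax))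
        (fun A => ∫ x in A • Ω i, f x) := by
    intro i
    have hvex := integral_phi_convex τ
      (radial_measurable (hΩmeas i) hdmin (hΩstar i) (hball i).1 (hball i).2)
      hdmin hdd
      (fun θ => radial_ge hdmin (hball i).1 (hball i).2 (mem_sphere_zero_iff_norm.1 θ.2))
      (fun θ => radial_le hdmin (hball i).1 (hball i).2 (mem_sphere_zero_iff_norm.1 θ.2))
      hkc hk0 (mul_nonneg hσ₁.le (Real.sqrt_nonneg _))
      (fun s t hs hst hts => k_monotone hn hσ₁ hsupp hs hst hts)
    exact convexOn_congr' (fun A hA => hGpolar i A hA.1) hvex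
  constructor
  · -- Pe is convex on the high-SNR region
    have hconv : Convex ℝ {A : ℝ | 0 < A ∧ σ₂ * Real.sqrt ((n : ℝ) - 1) / dmin ≤ A} :=
      (convex_Ioi (0:ℝ)).inter (convex_Ici _)
    have hsum : ConcaveOn ℝ {A : ℝ | 0 < A ∧ σ₂ * Real.sqrt ((n : ℝ) - 1) / dmin ≤ A}
        (fun A => ∑ i, q i * ∫ x in A • Ω i, f x) :=
      concaveOn_finset_sum hconv Finset.univ (fun i _ => by
        exact (hkey₁ i).smul (hq i))
    have h2 := (convexOn_const (1:ℝ) hconv).add hsum.neg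
    refine convexOn_congr' (fun A _ => ?_) h2
    rw [hPe A]
    simp only [Pi.add_apply, Pi.neg_apply]
    ring
  · -- Pe is concave on the low-SNR region
    have hconv : Convex ℝ (Ioc (0 : ℝ) (σ₁ * Real.sqrt ((n : ℝ) - 1) / dmax)) := convex_Ioc _ _
    have hsum : ConvexOn ℝ (Ioc (0 : ℝ) (σ₁ * Real.sqrt ((n : ℝ) - 1) / dmax))
        (fun A => ∑ i, q i * ∫ x in A • Ω i, f x) :=
      convexOn_finset_sum hconv Finset.univ (fun i _ => by
        exact (hkey₂ i).smul (hq i))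
    have h2 := (concaveOn_const (1:ℝ) hconv).add hsum.neg
    refine concaveOn_congr' (fun A _ => ?_) h2
    rw [hPe A]
    simp only [Pi.add_apply, Pi.neg_apply]
    ring
end

section
/- Let n ≥ 1 and d_min > 0. Let Ω_1, …, Ω_K ⊆ E be Lebesgue-measurable sets each of which is disjoint from the open ball of radius d_min centered at the origin (i.e. ‖x‖ ≥ d_min for every x ∈ Ω_k), and let c_1, …, c_K ≥ 0. Then the function B(γ) = Σ_{k=1}^{K} c_k ∫_{Ω_k} (γ/(2π))^{n/2} exp(−γ‖x‖²/2) dx is convex on the set {γ : γ > 0 and γ·d_min² ≥ n + √(2n)}. In particular, every pairwise error probability (K = 1, c = 1) and the BER (a nonnegative combination of pairwise error probabilities) of any decoder whose decision regions are at distance at least d_min from the transmitted point are convex in the SNR in this high-SNR regime. -/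
open MeasureTheory Real Set

/-- Core: convexity of `γ ↦ γ^(n/2) * exp(-γ t / 2)` on `Ici m`. -/
lemma core_convex (n : ℕ) (m t : ℝ) (hm : 0 < m)
    (ht : ∀ γ ∈ Ici m, (n : ℝ) + Real.sqrt (2 * n) ≤ γ * t) :
    ConvexOn ℝ (Ici m)
      (fun γ : ℝ => γ ^ ((n : ℝ) / 2) * Real.exp (-γ * t / 2)) := by
  set p : ℝ := (n : ℝ) / 2 with hp
  have hp0 : 0 ≤ p := by positivity
  -- first derivative
  set f' : ℝ → ℝ := fun γ =>
    p * γ ^ (p - 1) * Real.exp (-γ * t / 2) +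
      γ ^ p * (Real.exp (-γ * t / 2) * (-1 * t / 2)) with hf'def
  have hexp : ∀ γ : ℝ, HasDerivAt (fun x : ℝ => Real.exp (-x * t / 2))
      (Real.exp (-γ * t / 2) * (-1 * t / 2)) γ := fun γ =>
    (((hasDerivAt_id γ).neg.mul_const t).div_const 2).exp
  have hder : ∀ γ : ℝ, 0 < γ →
      HasDerivAt (fun x : ℝ => x ^ p * Real.exp (-x * t / 2)) (f' γ) γ := by
    intro γ hγ
    exact (Real.hasDerivAt_rpow_const (Or.inl hγ.ne')).mul (hexp γ)
  refine convexOn_of_hasDerivWithinAt2_nonneg (convex_Ici m) ?_ (f' := f')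
    (f'' := fun γ =>
      p * ((p - 1) * γ ^ (p - 1 - 1)) * Real.exp (-γ * t / 2) +
        p * γ ^ (p - 1) * (Real.exp (-γ * t / 2) * (-1 * t / 2)) +
        (p * γ ^ (p - 1) * (Real.exp (-γ * t / 2) * (-1 * t / 2)) +
          γ ^ p * (Real.exp (-γ * t / 2) * (-1 * t / 2) * (-1 * t / 2)))) ?_ ?_ ?_
  · -- continuity
    have h1 : Continuous fun γ : ℝ => γ ^ p :=
      continuous_iff_continuousAt.2 fun x =>
        Real.continuousAt_rpow_const x p (Or.inr hp0)
    have h2 : Continuous fun γ : ℝ => Real.exp (-γ * t / 2) := by fun_prop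
    exact (h1.mul h2).continuousOn
  · intro γ hγ
    have hγm : m < γ := by simpa [interior_Ici] using hγ
    exact ((hder γ (hm.trans hγm)).hasDerivWithinAt)
  · intro γ hγ
    have hγm : m < γ := by simpa [interior_Ici] using hγ
    have hγ0 : 0 < γ := hm.trans hγm
    have h1 : HasDerivAt (fun x : ℝ => p * x ^ (p - 1) * Real.exp (-x * t / 2))
        (p * ((p - 1) * γ ^ (p - 1 - 1)) * Real.exp (-γ * t / 2) +
          p * γ ^ (p - 1) * (Real.exp (-γ * t / 2) * (-1 * t / 2))) γ :=
      (((Real.hasDerivAt_rpow_const (p := p - 1) (Or.inl hγ0.ne')).const_mul p).mul (hexp γ))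
    have h2 : HasDerivAt (fun x : ℝ => x ^ p * (Real.exp (-x * t / 2) * (-1 * t / 2)))
        (p * γ ^ (p - 1) * (Real.exp (-γ * t / 2) * (-1 * t / 2)) +
          γ ^ p * (Real.exp (-γ * t / 2) * (-1 * t / 2) * (-1 * t / 2))) γ := by
      have := (Real.hasDerivAt_rpow_const (p := p) (Or.inl hγ0.ne')).mul
        ((hexp γ).mul_const (-1 * t / 2))
      exact this
    exact ((h1.add h2).hasDerivWithinAt)
  · intro γ hγ
    have hγm : m < γ := by simpa [interior_Ici] using hγ
    have hγ0 : 0 < γ := hm.trans hγm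
    have hE : 0 < Real.exp (-γ * t / 2) := Real.exp_pos _
    have hP : 0 < γ ^ (p - 1 - 1) := Real.rpow_pos_of_pos hγ0 _
    have e1 : γ ^ (p - 1) = γ ^ (p - 1 - 1) * γ := by
      rw [Real.rpow_sub hγ0 (p - 1) 1, Real.rpow_one]
      field_simp
    have e2 : γ ^ p = γ ^ (p - 1) * γ := by
      rw [Real.rpow_sub hγ0 p 1, Real.rpow_one]
      field_simp
    -- key quadratic inequality
    have hq : (n : ℝ) + Real.sqrt (2 * n) ≤ γ * t := ht γ (le_of_lt hγm)
    have hs0 : 0 ≤ Real.sqrt (2 * n) := Real.sqrt_nonneg _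
    have hs2 : Real.sqrt (2 * n) ^ 2 = 2 * n := Real.sq_sqrt (by positivity)
    have key : 0 ≤ p * (p - 1) - p * (γ * t) + (γ * t) ^ 2 / 4 := by
      have h1 : (0 : ℝ) ≤ γ * t - n - Real.sqrt (2 * n) := by linarith
      have h2 : (0 : ℝ) ≤ γ * t - n + Real.sqrt (2 * n) := by linarith
      nlinarith [mul_nonneg h1 h2]
    simp only [e2, e1]
    nlinarith [mul_nonneg (mul_nonneg hE.le hP.le) key]

lemma gauss_integrable (n : ℕ) (γ : ℝ) (hγ : 0 < γ) :
    Integrable (fun x : EuclideanSpace ℝ (Fin n) =>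
      Real.exp (-γ * ‖x‖ ^ 2 / 2)) := by
  have h := (GaussianFourier.integrable_cexp_neg_mul_sq_norm_add
    (V := EuclideanSpace ℝ (Fin n)) (b := ((γ : ℂ) / 2))
    (by simp; positivity) 0 0).norm
  refine h.congr (Filter.Eventually.of_forall fun x => ?_)
  simp only [Complex.norm_exp]
  congr 1
  simp [← Complex.ofReal_pow]
  ring

/-- In the AWGN channel, any nonnegative linear combination (e.g.
a PEP or the BER) of probabilities of regions at distance at least `d_min` from
the transmitted point is convex in the SNR on
`{γ | 0 < γ ∧ n + √(2n) ≤ γ d_min²}`. -/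
theorem ber_pep_convex_high_snr_awgn
    (n K : ℕ) (hn : 1 ≤ n)
    (dmin : ℝ) (hdmin : 0 < dmin)
    (Ω : Fin K → Set (EuclideanSpace ℝ (Fin n)))
    (hΩmeas : ∀ k, MeasurableSet (Ω k))
    (hΩfar : ∀ k, ∀ x ∈ Ω k, dmin ≤ ‖x‖)
    (c : Fin K → ℝ) (hc : ∀ k, 0 ≤ c k)
    (B : ℝ → ℝ)
    (hB : ∀ γ, B γ = ∑ k, c k * ∫ x in Ω k,
      (γ / (2 * π)) ^ ((n : ℝ) / 2) * Real.exp (-γ * ‖x‖ ^ 2 / 2)) :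
    ConvexOn ℝ {γ : ℝ | 0 < γ ∧ (n : ℝ) + Real.sqrt (2 * n) ≤ γ * dmin ^ 2}
      B := by
  have hn1 : (1 : ℝ) ≤ (n : ℝ) := by exact_mod_cast hn
  set C : ℝ := (n : ℝ) + Real.sqrt (2 * (n : ℝ)) with hC
  have hC0 : 0 < C := by
    have := Real.sqrt_nonneg (2 * (n : ℝ)); rw [hC]; linarith
  have hd2 : 0 < dmin ^ 2 := by positivity
  set m : ℝ := C / dmin ^ 2 with hmdef
  have hm : 0 < m := div_pos hC0 hd2
  have hset : {γ : ℝ | 0 < γ ∧ C ≤ γ * dmin ^ 2} = Ici m := by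
    ext γ
    simp only [mem_setOf_eq, mem_Ici, hmdef]
    constructor
    · rintro ⟨-, h⟩; exact (div_le_iff₀ hd2).2 h
    · intro h
      have h2 : C ≤ γ * dmin ^ 2 := (div_le_iff₀ hd2).1 h
      refine ⟨lt_of_lt_of_le ?_ h, h2⟩
      rw [← hmdef]; exact hm
  have hBf : B = fun γ => ∑ k, c k * ∫ x in Ω k,
      (γ / (2 * π)) ^ ((n : ℝ) / 2) * Real.exp (-γ * ‖x‖ ^ 2 / 2) := funext hB
  rw [hBf, hset]
  have hFnonneg : ∀ γ ∈ Ici m, ∀ x : EuclideanSpace ℝ (Fin n),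
      0 ≤ (γ / (2 * π)) ^ ((n : ℝ) / 2) * Real.exp (-γ * ‖x‖ ^ 2 / 2) := by
    intro γ hγ x
    have hγ0 : 0 < γ := lt_of_lt_of_le hm hγ
    have h1 : (0 : ℝ) ≤ γ / (2 * π) := by positivity
    exact mul_nonneg (Real.rpow_nonneg h1 _) (Real.exp_pos _).le
  have hFint : ∀ γ ∈ Ici m, ∀ k, IntegrableOn
      (fun x : EuclideanSpace ℝ (Fin n) =>
        (γ / (2 * π)) ^ ((n : ℝ) / 2) * Real.exp (-γ * ‖x‖ ^ 2 / 2))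
      (Ω k) volume := by
    intro γ hγ k
    exact (((gauss_integrable n γ (lt_of_lt_of_le hm hγ)).const_mul _).integrableOn)
  have hFconv : ∀ x : EuclideanSpace ℝ (Fin n), dmin ≤ ‖x‖ →
      ConvexOn ℝ (Ici m)
        (fun γ => (γ / (2 * π)) ^ ((n : ℝ) / 2) * Real.exp (-γ * ‖x‖ ^ 2 / 2)) := by
    intro x hx
    have ht : ∀ γ ∈ Ici m, (n : ℝ) + Real.sqrt (2 * n) ≤ γ * ‖x‖ ^ 2 := by
      intro γ hγ
      have hγ0 : 0 < γ := lt_of_lt_of_le hm hγ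
      have h1 : C ≤ γ * dmin ^ 2 := by
        rw [mem_Ici, hmdef] at hγ; exact (div_le_iff₀ hd2).1 hγ
      have h2 : dmin ^ 2 ≤ ‖x‖ ^ 2 := by nlinarith [norm_nonneg x]
      rw [← hC]
      nlinarith
    have hcore := core_convex n m (‖x‖ ^ 2) hm ht
    have hsmul := hcore.smul (c := (((2 : ℝ) * π) ^ ((n : ℝ) / 2))⁻¹)
      (by positivity)
    refine hsmul.congr fun γ hγ => ?_
    have hγ0 : 0 < γ := lt_of_lt_of_le hm hγ
    have h2π : (0 : ℝ) < 2 * π := by positivity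
    simp only [smul_eq_mul]
    rw [Real.div_rpow hγ0.le h2π.le]
    ring
  have hIconv : ∀ k, ConvexOn ℝ (Ici m)
      (fun γ => ∫ x in Ω k,
        (γ / (2 * π)) ^ ((n : ℝ) / 2) * Real.exp (-γ * ‖x‖ ^ 2 / 2)) := by
    intro k
    refine ⟨convex_Ici m, ?_⟩
    intro γ1 h1 γ2 h2 a b ha hb hab
    have hmem : a • γ1 + b • γ2 ∈ Ici m := (convex_Ici m) h1 h2 ha hb hab
    have hmem' : a * γ1 + b * γ2 ∈ Ici m := by simpa using hmem
    have hI1 := hFint γ1 h1 k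
    have hI2 := hFint γ2 h2 k
    simp only [smul_eq_mul]
    calc (∫ x in Ω k, ((a * γ1 + b * γ2) / (2 * π)) ^ ((n : ℝ) / 2) *
            Real.exp (-(a * γ1 + b * γ2) * ‖x‖ ^ 2 / 2))
        ≤ ∫ x in Ω k,
            (a * ((γ1 / (2 * π)) ^ ((n : ℝ) / 2) * Real.exp (-γ1 * ‖x‖ ^ 2 / 2)) +
             b * ((γ2 / (2 * π)) ^ ((n : ℝ) / 2) * Real.exp (-γ2 * ‖x‖ ^ 2 / 2))) := by
          refine integral_mono_of_nonneg
            (Filter.Eventually.of_forall fun x => hFnonneg _ hmem' x)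
            ((hI1.const_mul a).add (hI2.const_mul b)) ?_
          refine (ae_restrict_iff' (hΩmeas k)).2
            (Filter.Eventually.of_forall fun x hx => ?_)
          have := (hFconv x (hΩfar k x hx)).2 h1 h2 ha hb hab
          simpa using this
      _ = a * (∫ x in Ω k, (γ1 / (2 * π)) ^ ((n : ℝ) / 2) *
              Real.exp (-γ1 * ‖x‖ ^ 2 / 2)) +
          b * (∫ x in Ω k, (γ2 / (2 * π)) ^ ((n : ℝ) / 2) *
              Real.exp (-γ2 * ‖x‖ ^ 2 / 2)) := by
          rw [integral_add (hI1.const_mul a) (hI2.const_mul b)]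
          simp only [integral_const_mul]
  classical
  have hsum : ∀ s : Finset (Fin K), ConvexOn ℝ (Ici m)
      (fun γ => ∑ k ∈ s, c k * ∫ x in Ω k,
        (γ / (2 * π)) ^ ((n : ℝ) / 2) * Real.exp (-γ * ‖x‖ ^ 2 / 2)) := by
    intro s
    induction s using Finset.induction_on with
    | empty => simpa using convexOn_const (0 : ℝ) (convex_Ici m)
    | insert _ _ hk ih =>
        simp only [Finset.sum_insert hk]
        exact ((hIconv _).smul (hc _)).add ih
  exact hsum Finset.univ
end

section
/- Let n ≥ 1 and d > 0, and consider the symbol error rate for a spherical decision region of radius d as a function of the noise power v > 0 in the AWGN channel: P_e(v) = 1 − ∫_{Metric.closedBall 0 d} (2πv)^{−n/2} exp(−‖x‖²/(2v)) dx. Then P_e is strictly convex on (0, d²/(n+2)] and strictly concave on [d²/(n+2), ∞); in particular v = d²/(n+2) is the unique inflection point. -/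
open MeasureTheory Real Set

noncomputable def serPhi (n : ℕ) : ℝ → ℝ :=
  fun R => ∫ s in (0:ℝ)..R, s ^ (n - 1) * Real.exp (-s ^ 2 / 2)

lemma serPhi_hasDerivAt (n : ℕ) (R : ℝ) :
    HasDerivAt (serPhi n) (R ^ (n - 1) * Real.exp (-R ^ 2 / 2)) R := by
  have hc : Continuous fun s : ℝ => s ^ (n - 1) * Real.exp (-s ^ 2 / 2) := by fun_prop
  exact intervalIntegral.integral_hasDerivAt_right
    (hc.intervalIntegrable _ _) (hc.stronglyMeasurableAtFilter _ _) hc.continuousAt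

lemma ser_integral_eq (n : ℕ) (hn : 1 ≤ n) (d : ℝ) (hd : 0 < d) (v : ℝ) (hv : 0 < v) :
    (∫ x in Metric.closedBall (0 : EuclideanSpace ℝ (Fin n)) d,
        (2 * π * v) ^ (-(n : ℝ) / 2) * Real.exp (-‖x‖ ^ 2 / (2 * v)))
      = ((n : ℝ) * (volume (Metric.ball (0 : EuclideanSpace ℝ (Fin n)) 1)).toReal
          * (2 * π) ^ (-(n : ℝ) / 2)) * serPhi n (d / Real.sqrt v) := by
  haveI : Nonempty (Fin n) := Fin.pos_iff_nonempty.mp hn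
  haveI : Nontrivial (EuclideanSpace ℝ (Fin n)) := by infer_instance
  have hsv : (0:ℝ) < Real.sqrt v := Real.sqrt_pos.2 hv
  set c : ℝ := (2 * π * v) ^ (-(n : ℝ) / 2) with hc
  set f : ℝ → ℝ := fun r => Set.indicator (Iic d) (fun r => c * Real.exp (-r ^ 2 / (2 * v))) r with hf
  have h1 : (∫ x in Metric.closedBall (0 : EuclideanSpace ℝ (Fin n)) d,
      c * Real.exp (-‖x‖ ^ 2 / (2 * v))) = ∫ x : EuclideanSpace ℝ (Fin n), f ‖x‖ := by
    rw [← integral_indicator measurableSet_closedBall]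
    congr 1
    ext x
    classical
    simp [hf, Set.indicator_apply, Metric.mem_closedBall, dist_zero_right, Set.mem_Iic]
  rw [h1, integral_fun_norm_addHaar volume f, finrank_euclideanSpace_fin]
  -- inner integral
  have h2 : (∫ y in Ioi (0:ℝ), y ^ (n - 1) • f y)
      = ∫ y in (0:ℝ)..d, y ^ (n - 1) * (c * Real.exp (-y ^ 2 / (2 * v))) := by
    have : ∀ y : ℝ, y ^ (n - 1) • f y
        = Set.indicator (Iic d) (fun y => y ^ (n - 1) * (c * Real.exp (-y ^ 2 / (2 * v)))) y := by
      intro y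
      by_cases h : y ∈ Iic d <;>
        simp [hf, Set.indicator_of_mem, Set.indicator_of_notMem, h, smul_eq_mul]
    simp_rw [this]
    rw [setIntegral_indicator measurableSet_Iic, Set.Ioi_inter_Iic,
      ← intervalIntegral.integral_of_le hd.le]
  rw [h2]
  -- pull out constant
  have h3 : (∫ y in (0:ℝ)..d, y ^ (n - 1) * (c * Real.exp (-y ^ 2 / (2 * v))))
      = c * ∫ y in (0:ℝ)..d, y ^ (n - 1) * Real.exp (-y ^ 2 / (2 * v)) := by
    rw [← intervalIntegral.integral_const_mul]
    congr 1; ext y; ring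
  rw [h3]
  -- substitution y = sqrt v * s
  set G : ℝ → ℝ := fun s => (Real.sqrt v * s) ^ (n - 1) * Real.exp (-s ^ 2 / 2) with hG
  have h4 : (∫ y in (0:ℝ)..d, y ^ (n - 1) * Real.exp (-y ^ 2 / (2 * v)))
      = Real.sqrt v ^ n * serPhi n (d / Real.sqrt v) := by
    have key : ∀ y : ℝ, y ^ (n - 1) * Real.exp (-y ^ 2 / (2 * v)) = G (y / Real.sqrt v) := by
      intro y
      have h5 : Real.sqrt v * (y / Real.sqrt v) = y := by field_simp
      have h6 : (y / Real.sqrt v) ^ 2 = y ^ 2 / v := by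
        rw [div_pow, Real.sq_sqrt hv.le]
      rw [hG]
      simp only [h5, h6]
      congr 1
      rw [neg_div, neg_div, div_div, mul_comm v 2]
    simp_rw [key]
    rw [intervalIntegral.integral_comp_div G hsv.ne', zero_div]
    have hG' : G = fun s => Real.sqrt v ^ (n-1) * (s ^ (n-1) * Real.exp (-s ^ 2 / 2)) := by
      funext s; simp only [hG, mul_pow]; ring
    have h7 : (∫ s in (0:ℝ)..(d / Real.sqrt v), G s)
        = Real.sqrt v ^ (n-1) * serPhi n (d / Real.sqrt v) := by
      rw [hG', intervalIntegral.integral_const_mul, serPhi]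
    rw [h7, smul_eq_mul, ← mul_assoc, ← pow_succ', Nat.sub_add_cancel hn]
  rw [h4]
  -- constants
  have h8 : c * (Real.sqrt v ^ n * serPhi n (d / Real.sqrt v))
      = (2 * π) ^ (-(n : ℝ) / 2) * serPhi n (d / Real.sqrt v) := by
    have h9 : Real.sqrt v ^ n = v ^ ((n : ℝ) / 2) := by
      rw [← Real.rpow_natCast (Real.sqrt v) n, Real.sqrt_eq_rpow, ← Real.rpow_mul hv.le]
      congr 1; ring
    have h10 : c = (2 * π) ^ (-(n : ℝ) / 2) * v ^ (-(n : ℝ) / 2) := by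
      rw [hc, Real.mul_rpow (by positivity) hv.le]
    have hz : (-(n:ℝ)/2 + (n:ℝ)/2) = 0 := by ring
    rw [h10, h9, mul_assoc, ← mul_assoc (v ^ (-(n:ℝ)/2)), ← Real.rpow_add hv, hz,
      Real.rpow_zero, one_mul]
  rw [h8, nsmul_eq_mul, smul_eq_mul]
  rw [measureReal_def]
  ring

lemma serAux_hasDerivAt (n : ℕ) (hn : 1 ≤ n) (d : ℝ) (K : ℝ) (v : ℝ) (hv : 0 < v) :
    HasDerivAt (fun w => 1 - K * serPhi n (d / Real.sqrt w))
      ((K * d ^ n / 2) * (v ^ (-((n:ℝ) + 2) / 2) * Real.exp (-d ^ 2 / (2 * v)))) v := by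
  obtain ⟨k, rfl⟩ : ∃ k, n = k + 1 := ⟨n - 1, (Nat.succ_pred_eq_of_pos hn).symm⟩
  have hsv : 0 < Real.sqrt v := Real.sqrt_pos.2 hv
  have hΦ := serPhi_hasDerivAt (k + 1) (d / Real.sqrt v)
  have hs : HasDerivAt Real.sqrt (1 / (2 * Real.sqrt v)) v := Real.hasDerivAt_sqrt hv.ne'
  have hh : HasDerivAt (fun w => d / Real.sqrt w)
      ((0 * Real.sqrt v - d * (1 / (2 * Real.sqrt v))) / Real.sqrt v ^ 2) v :=
    (hasDerivAt_const v d).div hs hsv.ne'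
  have hcomp : HasDerivAt (fun w => serPhi (k + 1) (d / Real.sqrt w))
      (((d / Real.sqrt v) ^ (k + 1 - 1) * Real.exp (-(d / Real.sqrt v) ^ 2 / 2)) *
        ((0 * Real.sqrt v - d * (1 / (2 * Real.sqrt v))) / Real.sqrt v ^ 2)) v :=
    by have := hΦ.comp v hh; exact this
  have hfinal := (hasDerivAt_const v (1:ℝ)).sub (hcomp.const_mul K)
  refine hfinal.congr_deriv (Eq.symm ?_)
  have hE : Real.exp (-(d / Real.sqrt v) ^ 2 / 2) = Real.exp (-d ^ 2 / (2 * v)) := by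
    rw [div_pow, Real.sq_sqrt hv.le]
    congr 1
    rw [neg_div, neg_div, div_div, mul_comm v 2]
  have h1 : Real.sqrt v ^ (k + 3) = v ^ (((k:ℝ) + 1 + 2) / 2) := by
    rw [← Real.rpow_natCast (Real.sqrt v) (k + 3), Real.sqrt_eq_rpow, ← Real.rpow_mul hv.le]
    congr 1
    push_cast; ring
  have hrp : v ^ (-((k:ℝ) + 1 + 2) / 2) = (Real.sqrt v ^ (k + 3))⁻¹ := by
    rw [h1, ← Real.rpow_neg hv.le]
    congr 1; ring
  have hv2 : Real.sqrt v ^ 2 = v := Real.sq_sqrt hv.le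
  simp only [Nat.add_sub_cancel]
  push_cast
  rw [hE, hrp, div_pow]
  set s := Real.sqrt v with hsdef
  rw [← hv2]
  have hs0 : s ≠ 0 := hsv.ne'
  field_simp
  ring

lemma serG_hasDerivAt (n : ℕ) (d C : ℝ) (v : ℝ) (hv : 0 < v) :
    HasDerivAt (fun w => C * (w ^ (-((n:ℝ) + 2) / 2) * Real.exp (-d ^ 2 / (2 * w))))
      ((C / 2 * (Real.exp (-d ^ 2 / (2 * v)) * v ^ (-((n:ℝ) + 2) / 2 - 2)))
        * (d ^ 2 - ((n:ℝ) + 2) * v)) v := by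
  set q : ℝ := -((n:ℝ) + 2) / 2 with hq
  have h1 : HasDerivAt (fun w : ℝ => w ^ q) (q * v ^ (q - 1)) v :=
    Real.hasDerivAt_rpow_const (Or.inl hv.ne')
  have h2 : HasDerivAt (fun w : ℝ => -d ^ 2 / (2 * w)) (d ^ 2 / (2 * v ^ 2)) v := by
    have hi : HasDerivAt (fun w : ℝ => w⁻¹) (-(v ^ 2)⁻¹) v := hasDerivAt_inv hv.ne'
    have h3 := hi.const_mul (-d ^ 2 / 2)
    have hfe : (fun w : ℝ => -d ^ 2 / (2 * w)) = fun w => -d ^ 2 / 2 * w⁻¹ := by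
      funext w
      rw [div_eq_mul_inv, mul_inv, div_eq_mul_inv]
      ring
    rw [hfe]
    refine h3.congr_deriv (Eq.symm ?_)
    field_simp
  have h4 := (h1.mul h2.exp).const_mul C
  refine h4.congr_deriv (Eq.symm ?_)
  have e1 : v ^ (q - 1) = v ^ (q - 2) * v := by
    rw [show q - 1 = q - 2 + 1 by ring, Real.rpow_add hv, Real.rpow_one]
  have e2 : v ^ q = v ^ (q - 2) * v ^ 2 := by
    rw [show q = q - 2 + 2 by ring, Real.rpow_add hv, ← Real.rpow_natCast v 2]
    norm_num
  rw [e1, e2]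
  field_simp
  ring


/-- For a spherical decision region of radius `d` in the AWGN
channel, the SER as a function of the noise power `v` is strictly convex on
`(0, d²/(n+2)]`, strictly concave on `[d²/(n+2), ∞)`, and `v = d²/(n+2)` is the
unique inflection point (unique zero of the second derivative on `(0, ∞)`). -/
theorem ser_spherical_region_noise_power
    (n : ℕ) (hn : 1 ≤ n) (d : ℝ) (hd : 0 < d)
    (Pe : ℝ → ℝ)
    (hPe : ∀ v, Pe v =
      1 - ∫ x in Metric.closedBall (0 : EuclideanSpace ℝ (Fin n)) d,
        (2 * π * v) ^ (-(n : ℝ) / 2) * Real.exp (-‖x‖ ^ 2 / (2 * v))) :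
    StrictConvexOn ℝ (Ioc (0 : ℝ) (d ^ 2 / ((n : ℝ) + 2))) Pe ∧
      StrictConcaveOn ℝ (Ici (d ^ 2 / ((n : ℝ) + 2))) Pe ∧
      (∀ v : ℝ, 0 < v →
        (iteratedDeriv 2 Pe v = 0 ↔ v = d ^ 2 / ((n : ℝ) + 2))) := by
  haveI : Nonempty (Fin n) := Fin.pos_iff_nonempty.mp hn
  have hn2 : (0:ℝ) < ((n:ℝ) + 2) := by positivity
  have hm : 0 < d ^ 2 / ((n : ℝ) + 2) := by positivity
  set m : ℝ := d ^ 2 / ((n : ℝ) + 2) with hmdef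
  set K : ℝ := (n : ℝ) * (volume (Metric.ball (0 : EuclideanSpace ℝ (Fin n)) 1)).toReal
      * (2 * π) ^ (-(n : ℝ) / 2) with hKdef
  have hK : 0 < K := by
    have h1 : 0 < (volume (Metric.ball (0 : EuclideanSpace ℝ (Fin n)) 1)).toReal :=
      ENNReal.toReal_pos (Metric.measure_ball_pos volume _ one_pos).ne' measure_ball_lt_top.ne
    have h2 : (0:ℝ) < n := by exact_mod_cast hn
    have h3 : (0:ℝ) < (2 * π) ^ (-(n : ℝ) / 2) := Real.rpow_pos_of_pos (by positivity) _
    positivity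
  have hC : 0 < K * d ^ n / 2 := by positivity
  set C : ℝ := K * d ^ n / 2 with hCdef
  -- Pe agrees with the closed form on Ioi 0
  have hPeEq : Set.EqOn Pe (fun v => 1 - K * serPhi n (d / Real.sqrt v)) (Ioi 0) := by
    intro v hv
    simp only
    rw [hPe v, ser_integral_eq n hn d hd v hv, hKdef]
  -- first derivative
  have hderiv : ∀ v : ℝ, 0 < v →
      HasDerivAt Pe (C * (v ^ (-((n:ℝ) + 2) / 2) * Real.exp (-d ^ 2 / (2 * v)))) v := by
    intro v hv
    exact (serAux_hasDerivAt n hn d K v hv).congr_of_eventuallyEq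
      (Filter.eventuallyEq_of_mem (Ioi_mem_nhds hv) hPeEq)
  have hderivEq : Set.EqOn (deriv Pe)
      (fun v => C * (v ^ (-((n:ℝ) + 2) / 2) * Real.exp (-d ^ 2 / (2 * v)))) (Ioi 0) :=
    fun v hv => (hderiv v hv).deriv
  -- second derivative
  have hderiv2 : ∀ v : ℝ, 0 < v →
      deriv (deriv Pe) v
        = (C / 2 * (Real.exp (-d ^ 2 / (2 * v)) * v ^ (-((n:ℝ) + 2) / 2 - 2)))
            * (d ^ 2 - ((n:ℝ) + 2) * v) := by
    intro v hv
    rw [Filter.EventuallyEq.deriv_eq (Filter.eventuallyEq_of_mem (Ioi_mem_nhds hv) hderivEq)]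
    exact (serG_hasDerivAt n d C v hv).deriv
  have hiter : ∀ v : ℝ, deriv^[2] Pe v = deriv (deriv Pe) v := by
    intro v
    rw [Function.iterate_succ_apply', Function.iterate_one]
  have hcontPe : ∀ v : ℝ, 0 < v → ContinuousAt Pe v := fun v hv =>
    (hderiv v hv).continuousAt
  refine ⟨?_, ?_, ?_⟩
  · -- strict convexity on Ioc 0 m
    apply strictConvexOn_of_deriv2_pos (convex_Ioc 0 m)
      (fun v hv => (hcontPe v hv.1).continuousWithinAt)
    intro x hx
    rw [interior_Ioc] at hx
    rw [hiter, hderiv2 x hx.1]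
    have hpos : 0 < d ^ 2 - ((n:ℝ) + 2) * x := by
      have := (lt_div_iff₀ hn2).1 hx.2
      nlinarith
    have h1 : 0 < C / 2 * (Real.exp (-d ^ 2 / (2 * x)) * x ^ (-((n:ℝ) + 2) / 2 - 2)) :=
      mul_pos (by positivity) (mul_pos (Real.exp_pos _) (Real.rpow_pos_of_pos hx.1 _))
    exact mul_pos h1 hpos
  · -- strict concavity on Ici m
    apply strictConcaveOn_of_deriv2_neg (convex_Ici m)
      (fun v hv => (hcontPe v (lt_of_lt_of_le hm hv)).continuousWithinAt)
    intro x hx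
    rw [interior_Ici] at hx
    have hx0 : 0 < x := hm.trans hx
    rw [hiter, hderiv2 x hx0]
    have hneg : d ^ 2 - ((n:ℝ) + 2) * x < 0 := by
      have := (div_lt_iff₀ hn2).1 hx
      nlinarith
    have h1 : 0 < C / 2 * (Real.exp (-d ^ 2 / (2 * x)) * x ^ (-((n:ℝ) + 2) / 2 - 2)) :=
      mul_pos (by positivity) (mul_pos (Real.exp_pos _) (Real.rpow_pos_of_pos hx0 _))
    exact mul_neg_of_pos_of_neg h1 hneg
  · -- inflection point
    intro v hv
    have h2 : iteratedDeriv 2 Pe v = deriv (deriv Pe) v := by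
      rw [iteratedDeriv_succ, iteratedDeriv_one]
    rw [h2, hderiv2 v hv]
    have h1 : C / 2 * (Real.exp (-d ^ 2 / (2 * v)) * v ^ (-((n:ℝ) + 2) / 2 - 2)) ≠ 0 :=
      (mul_pos (by positivity) (mul_pos (Real.exp_pos _) (Real.rpow_pos_of_pos hv _))).ne'
    rw [mul_eq_zero]
    constructor
    · rintro (h | h)
      · exact absurd h h1
      · rw [hmdef]
        have : ((n:ℝ) + 2) * v = d ^ 2 := by linarith
        field_simp
        linarith
    · intro h
      right
      rw [h, hmdef]
      field_simp
      ring
end
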